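/- arXiv:1312.6005 — 7 statements merged into one kernel-verified Lean document; each statement's English description precedes it below -/
import Mathlib

section
/- Let K and L be convex bodies in ℝ^n (compact convex with nonempty interior). Then the function x ↦ vol(K ∩ (x − L))^{1/n} is concave on the Minkowski sum K + L, where x − L = {x − y : y ∈ L} and vol denotes Lebesgue measure. -/
open MeasureTheory Pointwise
open scoped ENNReal

/-- 1-D superadditivity of Lebesgue measure along Minkowski sums. -/
lemma oneDim_superadd {s t : Set ℝ} (hs : s.Nonempty) (ht : t.Nonempty)
    (hsm : MeasurableSet s) (htm : MeasurableSet t) {u : Set ℝ} (hu : MeasurableSet u)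
    (hsub : s + t ⊆ u) : volume s + volume t ≤ volume u := by
  obtain ⟨x₀, hx₀⟩ := hs
  obtain ⟨y₀, hy₀⟩ := ht
  -- compact case
  have compact_case : ∀ K K' : Set ℝ, K ⊆ s → K' ⊆ t → IsCompact K → IsCompact K' →
      K.Nonempty → K'.Nonempty → volume K + volume K' ≤ volume u := by
    intro K K' hKs hK't hKc hK'c hKne hK'ne
    set a := sSup K with ha
    set b := sInf K' with hb
    have haK : a ∈ K := hKc.sSup_mem hKne
    have hbK' : b ∈ K' := hK'c.sInf_mem hK'ne
    have hXsub : b +ᵥ K ⊆ u := by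
      rintro - ⟨x, hx, rfl⟩
      exact hsub ⟨x, hKs hx, b, hK't hbK', by simp [add_comm]⟩
    have hYsub : a +ᵥ K' ⊆ u := by
      rintro - ⟨y, hy, rfl⟩
      exact hsub ⟨a, hKs haK, y, hK't hy, rfl⟩
    have hXle : b +ᵥ K ⊆ Set.Iic (a + b) := by
      rintro - ⟨x, hx, rfl⟩
      simpa [add_comm] using add_le_add_right (le_csSup hKc.bddAbove hx) b
    have hYge : a +ᵥ K' ⊆ Set.Ici (a + b) := by
      rintro - ⟨y, hy, rfl⟩
      simpa using add_le_add_left (csInf_le hK'c.bddBelow hy) a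
    have hdisj : Disjoint ((b +ᵥ K) \ {a + b}) (a +ᵥ K') := by
      refine Set.disjoint_left.2 fun z hz hz' => ?_
      have h1 : z < a + b := lt_of_le_of_ne (hXle hz.1) (by simpa using hz.2)
      exact absurd (hYge hz') (not_le.2 h1)
    have hmX : MeasurableSet ((b +ᵥ K) \ {a + b}) :=
      ((hKc.measurableSet).const_vadd b).diff (measurableSet_singleton _)
    have hmY : MeasurableSet (a +ᵥ K') := (hK'c.measurableSet).const_vadd a
    calc volume K + volume K'
        = volume ((b +ᵥ K) \ {a + b}) + volume (a +ᵥ K') := by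
          rw [measure_diff_null (measure_singleton _), measure_vadd, measure_vadd]
      _ = volume (((b +ᵥ K) \ {a + b}) ∪ (a +ᵥ K')) := (measure_union hdisj hmY).symm
      _ ≤ volume u := measure_mono (Set.union_subset (Set.diff_subset.trans hXsub) hYsub)
  -- general case via inner regularity
  have single1 : ∀ K : Set ℝ, K ⊆ s → MeasurableSet K → volume K ≤ volume u := by
    intro K hK hKm
    have : y₀ +ᵥ K ⊆ u := by
      rintro - ⟨x, hx, rfl⟩
      exact hsub ⟨x, hK hx, y₀, hy₀, by simp [add_comm]⟩
    calc volume K = volume (y₀ +ᵥ K) := (measure_vadd _ _ _).symm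
      _ ≤ volume u := measure_mono this
  have single2 : ∀ K : Set ℝ, K ⊆ t → MeasurableSet K → volume K ≤ volume u := by
    intro K hK hKm
    have : x₀ +ᵥ K ⊆ u := by
      rintro - ⟨x, hx, rfl⟩
      exact hsub ⟨x₀, hx₀, x, hK hx, rfl⟩
    calc volume K = volume (x₀ +ᵥ K) := (measure_vadd _ _ _).symm
      _ ≤ volume u := measure_mono this
  rw [hsm.measure_eq_iSup_isCompact, htm.measure_eq_iSup_isCompact]
  refine ENNReal.biSup_add_biSup_le' (p := fun K => K ⊆ s) (q := fun K => K ⊆ t)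
    (f := fun K => ⨆ (_ : IsCompact K), volume K)
    (g := fun K => ⨆ (_ : IsCompact K), volume K)
    ⟨∅, Set.empty_subset _⟩ ⟨∅, Set.empty_subset _⟩ ?_
  intro K hK K' hK'
  by_cases hKc : IsCompact K
  · by_cases hK'c : IsCompact K'
    · simp only [iSup_pos hKc, iSup_pos hK'c]
      have h1 : volume K ≤ volume (K ∪ {x₀}) := measure_mono Set.subset_union_left
      have h2 : volume K' ≤ volume (K' ∪ {y₀}) := measure_mono Set.subset_union_left
      refine le_trans (add_le_add h1 h2) ?_
      exact compact_case _ _ (Set.union_subset hK (by simpa using hx₀))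
        (Set.union_subset hK' (by simpa using hy₀))
        (hKc.union isCompact_singleton) (hK'c.union isCompact_singleton)
        (by simp) (by simp)
    · simp only [iSup_pos hKc, iSup_neg hK'c, bot_eq_zero, add_zero]
      exact single1 K hK hKc.measurableSet
  · simp only [iSup_neg hKc]
    simp only [bot_eq_zero, zero_add]
    by_cases hK'c : IsCompact K'
    · simp only [iSup_pos hK'c]
      exact single2 K' hK' hK'c.measurableSet
    · simp only [iSup_neg hK'c]; simp

/-- Weighted AM-GM for two ENNReal numbers. -/
lemma egeom_mean {s t : ℝ} (hs : 0 < s) (ht : 0 < t) (hst : s + t = 1) (a b : ℝ≥0∞) :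
    a ^ s * b ^ t ≤ ENNReal.ofReal s * a + ENNReal.ofReal t * b := by
  rcases eq_or_ne a ∞ with rfl | ha
  · rcases eq_or_ne b 0 with rfl | hb
    · simp [ENNReal.zero_rpow_of_pos ht]
    · have h1 : ENNReal.ofReal s * ∞ = ∞ :=
        ENNReal.mul_top (by simpa using (ENNReal.ofReal_pos.2 hs).ne')
      simp [h1]
  rcases eq_or_ne b ∞ with rfl | hb
  · have h1 : ENNReal.ofReal t * ∞ = ∞ :=
      ENNReal.mul_top (by simpa using (ENNReal.ofReal_pos.2 ht).ne')
    simp [h1]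
  lift a to NNReal using ha
  lift b to NNReal using hb
  have key := NNReal.geom_mean_le_arith_mean2_weighted (w₁ := s.toNNReal) (w₂ := t.toNNReal)
    (p₁ := a) (p₂ := b) (by
      rw [← Real.toNNReal_add hs.le ht.le, hst, Real.toNNReal_one])
  have hcoe : ((s.toNNReal : ℝ)) = s := Real.coe_toNNReal _ hs.le
  have hcoe' : ((t.toNNReal : ℝ)) = t := Real.coe_toNNReal _ ht.le
  rw [hcoe, hcoe'] at key
  calc (a : ℝ≥0∞) ^ s * (b : ℝ≥0∞) ^ t
      = ((a ^ s * b ^ t : NNReal) : ℝ≥0∞) := by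
        rw [ENNReal.coe_mul, ← ENNReal.coe_rpow_of_nonneg _ hs.le,
          ← ENNReal.coe_rpow_of_nonneg _ ht.le]
    _ ≤ ((s.toNNReal * a + t.toNNReal * b : NNReal) : ℝ≥0∞) := ENNReal.coe_le_coe.2 key
    _ = ENNReal.ofReal s * a + ENNReal.ofReal t * b := by
        simp [ENNReal.coe_mul, ENNReal.ofReal]

lemma pos_meas_of_lt_essSup {f : ℝ → ℝ≥0∞} {c : ℝ≥0∞} (h : c < essSup f volume) :
    volume {x | c < f x} ≠ 0 := by
  intro h0
  have hae : ∀ᵐ x, f x ≤ c := by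
    rw [ae_iff]
    simpa [not_le] using h0
  exact absurd h (not_lt.2 (essSup_le_of_ae_le c hae))

/-- Layer cake for an ENNReal-valued function bounded by 1. -/
lemma lintegral_eq_layer {f : ℝ → ℝ≥0∞} (hf : Measurable f) (hf1 : ∀ x, f x ≤ 1) :
    ∫⁻ x, f x = ∫⁻ s in Set.Ioi (0:ℝ), volume {x | ENNReal.ofReal s < f x} := by
  have hne : ∀ x, f x ≠ ∞ := fun x => (lt_of_le_of_lt (hf1 x) (by simp)).ne
  calc ∫⁻ x, f x = ∫⁻ x, ENNReal.ofReal ((f x).toReal) := by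
        refine lintegral_congr fun x => (ENNReal.ofReal_toReal (hne x)).symm
    _ = ∫⁻ s in Set.Ioi 0, volume {x | s < (f x).toReal} :=
        lintegral_eq_lintegral_meas_lt volume (ae_of_all _ fun x => ENNReal.toReal_nonneg)
          hf.ennreal_toReal.aemeasurable
    _ = ∫⁻ s in Set.Ioi 0, volume {x | ENNReal.ofReal s < f x} := by
        refine setLIntegral_congr_fun measurableSet_Ioi (fun s hs => ?_)
        congr 1
        ext x
        simp only [Set.mem_setOf_eq]
        rw [ENNReal.ofReal_lt_iff_lt_toReal (le_of_lt hs) (hne x)]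

lemma real_volume_smul {r : ℝ} (s : Set ℝ) (hr : 0 ≤ r) :
    volume (r • s) = ENNReal.ofReal r * volume s := by
  have := Measure.addHaar_smul (volume : Measure ℝ) r s
  simpa [abs_of_nonneg hr] using this

/-- Normalized one-dimensional Prékopa–Leindler inequality. -/
lemma oneDim_PL_norm {t : ℝ} (ht0 : 0 < t) (ht1 : t < 1)
    {f g h : ℝ → ℝ≥0∞} (hf : Measurable f) (hg : Measurable g) (hh : Measurable h)
    (hf1 : ∀ x, f x ≤ 1) (hg1 : ∀ x, g x ≤ 1)
    (hfne : ∀ c : ℝ≥0∞, c < 1 → {x | c < f x}.Nonempty)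
    (hgne : ∀ c : ℝ≥0∞, c < 1 → {y | c < g y}.Nonempty)
    (hyp : ∀ x y, f x ^ (1 - t) * g y ^ t ≤ h ((1 - t) * x + t * y)) :
    ENNReal.ofReal (1 - t) * (∫⁻ x, f x) + ENNReal.ofReal t * (∫⁻ y, g y) ≤ ∫⁻ z, h z := by
  have ht0' : (0:ℝ) < 1 - t := by linarith
  set h' : ℝ → ℝ≥0∞ := fun z => min (h z) 1 with hh'def
  have hh' : Measurable h' := hh.min measurable_const
  have hh'1 : ∀ z, h' z ≤ 1 := fun z => min_le_right _ _
  have key : ∀ s ∈ Set.Ioi (0:ℝ),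
      ENNReal.ofReal (1 - t) * volume {x | ENNReal.ofReal s < f x}
        + ENNReal.ofReal t * volume {y | ENNReal.ofReal s < g y}
        ≤ volume {z | ENNReal.ofReal s < h' z} := by
    intro s hs
    by_cases hs1 : s < 1
    · set c := ENNReal.ofReal s with hc
      have hc0 : 0 < c := ENNReal.ofReal_pos.2 hs
      have hc1 : c < 1 := ENNReal.ofReal_lt_one.2 hs1
      have hcne : c ≠ ∞ := ENNReal.ofReal_ne_top
      set A := {x | c < f x} with hA
      set B := {y | c < g y} with hB
      have hAm : MeasurableSet A := measurableSet_lt measurable_const hf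
      have hBm : MeasurableSet B := measurableSet_lt measurable_const hg
      have hsub : (1 - t) • A + t • B ⊆ {z | c < h' z} := by
        rintro - ⟨-, ⟨x, hx, rfl⟩, -, ⟨y, hy, rfl⟩, rfl⟩
        have hfx : c ^ (1 - t) < f x ^ (1 - t) := ENNReal.rpow_lt_rpow hx ht0'
        have hgy : c ^ t ≤ g y ^ t := ENNReal.rpow_le_rpow (le_of_lt hy) ht0.le
        have h1 : c ^ (1 - t) * c ^ t < f x ^ (1 - t) * g y ^ t := by
          calc c ^ (1 - t) * c ^ t < f x ^ (1 - t) * c ^ t := by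
                have hct0 : c ^ t ≠ 0 := (ENNReal.rpow_pos hc0 hcne).ne'
                have hctt : c ^ t ≠ ∞ := ENNReal.rpow_ne_top_of_nonneg ht0.le hcne
                exact ENNReal.mul_lt_mul_left hct0 hctt hfx
            _ ≤ f x ^ (1 - t) * g y ^ t := mul_le_mul_right hgy _
        have h2 : c ^ (1 - t) * c ^ t = c := by
          rw [← ENNReal.rpow_add _ _ hc0.ne' hcne]
          norm_num
        have h3 : c < h ((1 - t) * x + t * y) :=
          lt_of_lt_of_le (h2 ▸ h1) (hyp x y)
        show c < h' ((1 - t) • x + t • y)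
        exact lt_min (by simpa [smul_eq_mul] using h3) hc1
      have hAs : MeasurableSet ((1 - t) • A) := hAm.const_smul₀ (1 - t)
      have hBs : MeasurableSet (t • B) := hBm.const_smul₀ t
      have hAne : ((1 - t) • A).Nonempty := (hfne c hc1).smul_set
      have hBne : (t • B).Nonempty := (hgne c hc1).smul_set
      have hCm : MeasurableSet {z | c < h' z} := measurableSet_lt measurable_const hh'
      have := oneDim_superadd hAne hBne hAs hBs hCm hsub
      rwa [real_volume_smul A (by linarith), real_volume_smul B ht0.le] at this
    · push_neg at hs1
      have hfe : {x | ENNReal.ofReal s < f x} = ∅ := by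
        ext x
        simp only [Set.mem_setOf_eq, Set.mem_empty_iff_false, iff_false, not_lt]
        exact le_trans (hf1 x) (by simpa using ENNReal.one_le_ofReal.2 hs1)
      have hge : {y | ENNReal.ofReal s < g y} = ∅ := by
        ext y
        simp only [Set.mem_setOf_eq, Set.mem_empty_iff_false, iff_false, not_lt]
        exact le_trans (hg1 y) (by simpa using ENNReal.one_le_ofReal.2 hs1)
      simp [hfe, hge]
  have hφf : Measurable fun s : ℝ => volume {x | ENNReal.ofReal s < f x} :=
    Antitone.measurable fun a b hab => measure_mono fun x hx =>
      lt_of_le_of_lt (ENNReal.ofReal_le_ofReal hab) hx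
  have hφg : Measurable fun s : ℝ => volume {y | ENNReal.ofReal s < g y} :=
    Antitone.measurable fun a b hab => measure_mono fun y hy =>
      lt_of_le_of_lt (ENNReal.ofReal_le_ofReal hab) hy
  calc ENNReal.ofReal (1 - t) * (∫⁻ x, f x) + ENNReal.ofReal t * (∫⁻ y, g y)
      = ∫⁻ s in Set.Ioi (0:ℝ),
          (ENNReal.ofReal (1 - t) * volume {x | ENNReal.ofReal s < f x}
            + ENNReal.ofReal t * volume {y | ENNReal.ofReal s < g y}) := by
        rw [lintegral_add_left (hφf.const_mul _),
          lintegral_const_mul' _ _ ENNReal.ofReal_ne_top,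
          lintegral_const_mul' _ _ ENNReal.ofReal_ne_top,
          ← lintegral_eq_layer hf hf1, ← lintegral_eq_layer hg hg1]

    _ ≤ ∫⁻ s in Set.Ioi (0:ℝ), volume {z | ENNReal.ofReal s < h' z} :=
        setLIntegral_mono (Antitone.measurable fun a b hab => measure_mono fun z hz =>
          lt_of_le_of_lt (ENNReal.ofReal_le_ofReal hab) hz) key
    _ = ∫⁻ z, h' z := (lintegral_eq_layer hh' hh'1).symm
    _ ≤ ∫⁻ z, h z := lintegral_mono fun z => min_le_left _ _

lemma oneDim_PL_top {t : ℝ} (ht0 : 0 < t) (ht1 : t < 1)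
    {f g h : ℝ → ℝ≥0∞} (hh : Measurable h)
    (hMf : essSup f volume = ∞) (hMg : essSup g volume ≠ 0)
    (hyp : ∀ x y, f x ^ (1 - t) * g y ^ t ≤ h ((1 - t) * x + t * y)) :
    (∫⁻ z, h z) = ∞ := by
  have ht0' : (0:ℝ) < 1 - t := by linarith
  obtain ⟨c₀, hc₀0, hc₀M⟩ := exists_between hMg.bot_lt
  have hc₀top : c₀ ≠ ∞ := hc₀M.ne_top
  set δ := volume {y | c₀ < g y} with hδdef
  have hδ : δ ≠ 0 := pos_meas_of_lt_essSup hc₀M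
  set δ' := min δ 1 with hδ'def
  have hδ'0 : δ' ≠ 0 := by
    simp only [hδ'def, ne_eq, min_eq_iff]
    intro hc
    rcases hc with ⟨h1, -⟩ | ⟨h1, -⟩
    · exact hδ h1
    · exact one_ne_zero h1
  have hδ'top : δ' ≠ ∞ := (lt_of_le_of_lt (min_le_right _ _) (by simp)).ne
  have hδ'le : δ' ≤ δ := min_le_left _ _
  have main : ∀ M : ℝ≥0∞, M ≠ ∞ → M ≤ ∫⁻ z, h z := by
    intro M hM
    set B := c₀ ^ t * (ENNReal.ofReal t * δ') with hB
    have hB0 : B ≠ 0 := by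
      refine mul_ne_zero (ENNReal.rpow_pos hc₀0 hc₀top).ne' (mul_ne_zero ?_ hδ'0)
      exact (ENNReal.ofReal_pos.2 ht0).ne'
    have hBtop : B ≠ ∞ :=
      ENNReal.mul_ne_top (ENNReal.rpow_ne_top_of_nonneg ht0.le hc₀top)
        (ENNReal.mul_ne_top ENNReal.ofReal_ne_top hδ'top)
    have hMB : M / B ≠ ∞ := by
      rw [div_eq_mul_inv]
      exact ENNReal.mul_ne_top hM (ENNReal.inv_ne_top.2 hB0)
    set N := (M / B) ^ (1 / (1 - t)) with hN
    have hNtop : N ≠ ∞ := ENNReal.rpow_ne_top_of_nonneg (by positivity) hMB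
    have hxne : {x | N < f x}.Nonempty := by
      have h0 : volume {x | N < f x} ≠ 0 :=
        pos_meas_of_lt_essSup (by rw [hMf]; exact hNtop.lt_top)
      rcases Set.eq_empty_or_nonempty {x | N < f x} with hE | hne
      · exact absurd (by simp [hE]) h0
      · exact hne
    obtain ⟨x, hx⟩ := hxne
    have claim : ((fun y => (1 - t) * x + t * y) '' {y | c₀ < g y})
        ⊆ {z | N ^ (1 - t) * c₀ ^ t ≤ h z} := by
      rintro - ⟨y, hy, rfl⟩
      have h1 : N ^ (1 - t) * c₀ ^ t ≤ f x ^ (1 - t) * g y ^ t :=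
        mul_le_mul' (ENNReal.rpow_le_rpow (le_of_lt hx) ht0'.le)
          (ENNReal.rpow_le_rpow (le_of_lt hy) ht0.le)
      exact le_trans h1 (hyp x y)
    have himg : volume ((fun y => (1 - t) * x + t * y) '' {y | c₀ < g y})
        = ENNReal.ofReal t * δ := by
      have heq : (fun y => (1 - t) * x + t * y) '' {y | c₀ < g y}
          = ((1 - t) * x) +ᵥ (t • {y | c₀ < g y}) := by
        ext z
        constructor
        · rintro ⟨y, hy, rfl⟩
          exact ⟨t * y, ⟨y, hy, rfl⟩, rfl⟩
        · rintro ⟨-, ⟨y, hy, rfl⟩, rfl⟩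
          exact ⟨y, hy, rfl⟩
      rw [heq, measure_vadd, real_volume_smul _ ht0.le]
    have hNpow : N ^ (1 - t) = M / B := by
      rw [hN, ← ENNReal.rpow_mul, one_div_mul_cancel ht0'.ne', ENNReal.rpow_one]
    calc M = M / B * B := (ENNReal.div_mul_cancel hB0 hBtop).symm
      _ = N ^ (1 - t) * c₀ ^ t * (ENNReal.ofReal t * δ') := by rw [hNpow, hB]; ring
      _ ≤ N ^ (1 - t) * c₀ ^ t * volume {z | N ^ (1 - t) * c₀ ^ t ≤ h z} := by
          refine mul_le_mul_right ?_ _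
          refine le_trans (mul_le_mul_right hδ'le _) ?_
          rw [← himg]
          exact measure_mono claim
      _ ≤ ∫⁻ z, h z := mul_meas_ge_le_lintegral hh _
  by_contra hne
  exact absurd (main _ (by simp [hne])) (not_le.2 (ENNReal.lt_add_right hne one_ne_zero))

/-- One-dimensional Prékopa–Leindler inequality. -/
lemma oneDim_PL {t : ℝ} (ht0 : 0 < t) (ht1 : t < 1)
    {f g h : ℝ → ℝ≥0∞} (hf : Measurable f) (hg : Measurable g) (hh : Measurable h)
    (hyp : ∀ x y, f x ^ (1 - t) * g y ^ t ≤ h ((1 - t) * x + t * y)) :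
    (∫⁻ x, f x) ^ (1 - t) * (∫⁻ y, g y) ^ t ≤ ∫⁻ z, h z := by
  have ht0' : (0:ℝ) < 1 - t := by linarith
  rcases eq_or_ne (∫⁻ x, f x) 0 with h0 | hf0
  · rw [h0, ENNReal.zero_rpow_of_pos ht0', zero_mul]
    exact zero_le
  rcases eq_or_ne (∫⁻ y, g y) 0 with h0 | hg0
  · rw [h0, ENNReal.zero_rpow_of_pos ht0, mul_zero]
    exact zero_le
  set Mf := essSup f volume with hMfdef
  set Mg := essSup g volume with hMgdef
  have hMf0 : Mf ≠ 0 := by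
    intro h0
    exact hf0 (lintegral_eq_zero_iff hf |>.2 (ENNReal.essSup_eq_zero_iff.1 h0))
  have hMg0 : Mg ≠ 0 := by
    intro h0
    exact hg0 (lintegral_eq_zero_iff hg |>.2 (ENNReal.essSup_eq_zero_iff.1 h0))
  rcases eq_or_ne Mf ∞ with hMftop | hMftop
  · rw [oneDim_PL_top ht0 ht1 hh hMftop hMg0 hyp]
    exact le_top
  rcases eq_or_ne Mg ∞ with hMgtop | hMgtop
  · have hyp' : ∀ y x, g y ^ (1 - (1 - t)) * f x ^ (1 - t) ≤ h ((1 - (1 - t)) * y + (1 - t) * x) := by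
      intro y x
      have := hyp x y
      rw [mul_comm] at this
      simpa [add_comm, sub_sub_cancel] using this
    rw [oneDim_PL_top ht0' (by linarith) hh hMgtop hMf0 hyp']
    exact le_top
  -- both essential sups are finite and positive; normalize
  set f₁ : ℝ → ℝ≥0∞ := fun x => min (f x / Mf) 1 with hf₁def
  set g₁ : ℝ → ℝ≥0∞ := fun y => min (g y / Mg) 1 with hg₁def
  set c : ℝ≥0∞ := Mf ^ (1 - t) * Mg ^ t with hcdef
  have hc0 : c ≠ 0 :=
    mul_ne_zero (ENNReal.rpow_pos hMf0.bot_lt hMftop).ne' (ENNReal.rpow_pos hMg0.bot_lt hMgtop).ne'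
  have hctop : c ≠ ∞ :=
    ENNReal.mul_ne_top (ENNReal.rpow_ne_top_of_nonneg ht0'.le hMftop)
      (ENNReal.rpow_ne_top_of_nonneg ht0.le hMgtop)
  set h₁ : ℝ → ℝ≥0∞ := fun z => h z / c with hh₁def
  have hf₁ : Measurable f₁ := (hf.div_const _).min measurable_const
  have hg₁ : Measurable g₁ := (hg.div_const _).min measurable_const
  have hh₁ : Measurable h₁ := hh.div_const _
  have hf₁1 : ∀ x, f₁ x ≤ 1 := fun x => min_le_right _ _
  have hg₁1 : ∀ y, g₁ y ≤ 1 := fun y => min_le_right _ _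
  have hnef : ∀ cc : ℝ≥0∞, cc < 1 → {x | cc < f₁ x}.Nonempty := by
    intro cc hcc
    have hlt : cc * Mf < Mf := by
      calc cc * Mf < 1 * Mf := ENNReal.mul_lt_mul_left hMf0 hMftop hcc
        _ = Mf := one_mul _
    have h0 : volume {x | cc * Mf < f x} ≠ 0 := pos_meas_of_lt_essSup hlt
    rcases Set.eq_empty_or_nonempty {x | cc * Mf < f x} with hE | ⟨x, hx⟩
    · exact absurd (by simp [hE]) h0
    · refine ⟨x, ?_⟩
      have : cc < f x / Mf := ENNReal.lt_div_iff_mul_lt (Or.inl hMf0) (Or.inl hMftop) |>.2 hx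
      exact lt_min this hcc
  have hneg : ∀ cc : ℝ≥0∞, cc < 1 → {y | cc < g₁ y}.Nonempty := by
    intro cc hcc
    have hlt : cc * Mg < Mg := by
      calc cc * Mg < 1 * Mg := ENNReal.mul_lt_mul_left hMg0 hMgtop hcc
        _ = Mg := one_mul _
    have h0 : volume {y | cc * Mg < g y} ≠ 0 := pos_meas_of_lt_essSup hlt
    rcases Set.eq_empty_or_nonempty {y | cc * Mg < g y} with hE | ⟨y, hy⟩
    · exact absurd (by simp [hE]) h0
    · refine ⟨y, ?_⟩
      have : cc < g y / Mg := ENNReal.lt_div_iff_mul_lt (Or.inl hMg0) (Or.inl hMgtop) |>.2 hy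
      exact lt_min this hcc
  have hyp₁ : ∀ x y, f₁ x ^ (1 - t) * g₁ y ^ t ≤ h₁ ((1 - t) * x + t * y) := by
    intro x y
    have h1 : f₁ x ^ (1 - t) * g₁ y ^ t ≤ (f x / Mf) ^ (1 - t) * (g y / Mg) ^ t :=
      mul_le_mul' (ENNReal.rpow_le_rpow (min_le_left _ _) ht0'.le)
        (ENNReal.rpow_le_rpow (min_le_left _ _) ht0.le)
    have h2 : (f x / Mf) ^ (1 - t) * (g y / Mg) ^ t = f x ^ (1 - t) * g y ^ t / c := by
      rw [ENNReal.div_rpow_of_nonneg _ _ ht0'.le, ENNReal.div_rpow_of_nonneg _ _ ht0.le,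
        hcdef, div_eq_mul_inv, div_eq_mul_inv, div_eq_mul_inv,
        ENNReal.mul_inv (Or.inl (ENNReal.rpow_pos hMf0.bot_lt hMftop).ne')
          (Or.inl (ENNReal.rpow_ne_top_of_nonneg ht0'.le hMftop))]
      ring
    have h3 : f x ^ (1 - t) * g y ^ t / c ≤ h ((1 - t) * x + t * y) / c :=
      ENNReal.div_le_div_right (hyp x y) c
    exact le_trans h1 (h2 ▸ h3)
  have key := oneDim_PL_norm ht0 ht1 hf₁ hg₁ hh₁ hf₁1 hg₁1 hnef hneg hyp₁
  -- rewrite the integrals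
  have hif : (∫⁻ x, f₁ x) = Mf⁻¹ * ∫⁻ x, f x := by
    have hae : f₁ =ᵐ[volume] fun x => Mf⁻¹ * f x := by
      filter_upwards [ae_le_essSup (f := f) (μ := volume)] with x hx
      have h1 : f x / Mf ≤ 1 := ENNReal.div_le_of_le_mul (by simpa using hx)
      rw [div_eq_mul_inv] at h1
      simp [hf₁def, div_eq_mul_inv, min_eq_left h1, mul_comm]
    rw [lintegral_congr_ae hae, lintegral_const_mul' _ _ (ENNReal.inv_ne_top.2 hMf0)]
  have hig : (∫⁻ y, g₁ y) = Mg⁻¹ * ∫⁻ y, g y := by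
    have hae : g₁ =ᵐ[volume] fun y => Mg⁻¹ * g y := by
      filter_upwards [ae_le_essSup (f := g) (μ := volume)] with y hy
      have h1 : g y / Mg ≤ 1 := ENNReal.div_le_of_le_mul (by simpa using hy)
      rw [div_eq_mul_inv] at h1
      simp [hg₁def, div_eq_mul_inv, min_eq_left h1, mul_comm]
    rw [lintegral_congr_ae hae, lintegral_const_mul' _ _ (ENNReal.inv_ne_top.2 hMg0)]
  have hih : (∫⁻ z, h₁ z) = c⁻¹ * ∫⁻ z, h z := by
    simp only [hh₁def, div_eq_mul_inv]
    rw [← lintegral_const_mul' _ _ (ENNReal.inv_ne_top.2 hc0)]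
    congr 1
    funext z
    ring
  rw [hif, hig, hih] at key
  -- AM-GM
  have amgm : (Mf⁻¹ * ∫⁻ x, f x) ^ (1 - t) * (Mg⁻¹ * ∫⁻ y, g y) ^ t
      ≤ c⁻¹ * ∫⁻ z, h z := by
    refine le_trans (egeom_mean ht0' ht0 (by ring) _ _) key
  calc (∫⁻ x, f x) ^ (1 - t) * (∫⁻ y, g y) ^ t
      = (Mf * (Mf⁻¹ * ∫⁻ x, f x)) ^ (1 - t) * (Mg * (Mg⁻¹ * ∫⁻ y, g y)) ^ t := by
        rw [← mul_assoc, ENNReal.mul_inv_cancel hMf0 hMftop, one_mul,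
          ← mul_assoc, ENNReal.mul_inv_cancel hMg0 hMgtop, one_mul]
    _ = c * ((Mf⁻¹ * ∫⁻ x, f x) ^ (1 - t) * (Mg⁻¹ * ∫⁻ y, g y) ^ t) := by
        rw [ENNReal.mul_rpow_of_nonneg _ _ ht0'.le, ENNReal.mul_rpow_of_nonneg _ _ ht0.le, hcdef]
        ring
    _ ≤ c * (c⁻¹ * ∫⁻ z, h z) := mul_le_mul_right amgm _
    _ = ∫⁻ z, h z := by
        rw [← mul_assoc, ENNReal.mul_inv_cancel hc0 hctop, one_mul]

lemma insertNth_smul {n : ℕ} (i : Fin (n + 1)) (c : ℝ) (x : ℝ) (p : Fin n → ℝ) :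
    Fin.insertNth (α := fun _ => ℝ) i (c * x) (c • p)
      = c • Fin.insertNth (α := fun _ => ℝ) i x p := by
  funext j
  refine i.succAboveCases ?_ ?_ j
  · simp
  · intro k
    simp [Fin.insertNth_apply_succAbove]

/-- Induction step for Prékopa–Leindler: from `E` to `ℝ × E`. -/
lemma step_PL {E : Type*} [MeasurableSpace E] {μ : Measure E} [SigmaFinite μ]
    [AddCommMonoid E] [Module ℝ E]
    (ind : ∀ {t : ℝ}, 0 < t → t < 1 → ∀ {f g h : E → ℝ≥0∞}, Measurable f → Measurable g →
      Measurable h → (∀ x y, f x ^ (1 - t) * g y ^ t ≤ h ((1 - t) • x + t • y)) →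
      (∫⁻ x, f x ∂μ) ^ (1 - t) * (∫⁻ y, g y ∂μ) ^ t ≤ ∫⁻ z, h z ∂μ)
    {t : ℝ} (ht0 : 0 < t) (ht1 : t < 1) {f g h : ℝ × E → ℝ≥0∞}
    (hf : Measurable f) (hg : Measurable g) (hh : Measurable h)
    (hyp : ∀ x y, f x ^ (1 - t) * g y ^ t ≤ h ((1 - t) • x + t • y)) :
    (∫⁻ x, f x ∂(volume.prod μ)) ^ (1 - t) * (∫⁻ y, g y ∂(volume.prod μ)) ^ t
      ≤ ∫⁻ z, h z ∂(volume.prod μ) := by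
  set F : ℝ → ℝ≥0∞ := fun x₁ => ∫⁻ x₂, f (x₁, x₂) ∂μ with hF
  set G : ℝ → ℝ≥0∞ := fun y₁ => ∫⁻ y₂, g (y₁, y₂) ∂μ with hG
  set H : ℝ → ℝ≥0∞ := fun z₁ => ∫⁻ z₂, h (z₁, z₂) ∂μ with hH
  have hFm : Measurable F := Measurable.lintegral_prod_right (f := fun a b => f (a, b)) hf
  have hGm : Measurable G := Measurable.lintegral_prod_right (f := fun a b => g (a, b)) hg
  have hHm : Measurable H := Measurable.lintegral_prod_right (f := fun a b => h (a, b)) hh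
  have hyp1 : ∀ x₁ y₁, F x₁ ^ (1 - t) * G y₁ ^ t ≤ H ((1 - t) * x₁ + t * y₁) := by
    intro x₁ y₁
    refine ind ht0 ht1 (hf.comp measurable_prodMk_left)
      (hg.comp measurable_prodMk_left)
      (hh.comp measurable_prodMk_left) ?_
    intro x₂ y₂
    have := hyp (x₁, x₂) (y₁, y₂)
    simpa [Prod.smul_mk, Prod.mk_add_mk, smul_eq_mul] using this
  have key := oneDim_PL ht0 ht1 hFm hGm hHm hyp1
  rw [lintegral_prod f hf.aemeasurable, lintegral_prod g hg.aemeasurable,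
    lintegral_prod h hh.aemeasurable]
  exact key

/-- Prékopa–Leindler inequality on `Fin n → ℝ`. -/
lemma pi_PL : ∀ (n : ℕ) {t : ℝ}, 0 < t → t < 1 → ∀ {f g h : (Fin n → ℝ) → ℝ≥0∞},
    Measurable f → Measurable g → Measurable h →
    (∀ x y, f x ^ (1 - t) * g y ^ t ≤ h ((1 - t) • x + t • y)) →
    (∫⁻ x, f x) ^ (1 - t) * (∫⁻ y, g y) ^ t ≤ ∫⁻ z, h z := by
  intro n
  induction n with
  | zero =>
    intro t ht0 ht1 f g h hf hg hh hyp
    have huniv : volume (Set.univ : Set (Fin 0 → ℝ)) = 1 := by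
      rw [volume_pi, Measure.pi_univ]
      simp
    have hd : ∀ (f : (Fin 0 → ℝ) → ℝ≥0∞), (∫⁻ x, f x) = f default := by
      intro f
      rw [lintegral_unique, huniv, mul_one]
      exact congrArg f (Subsingleton.elim _ _)
    rw [hd f, hd g, hd h]
    have := hyp default default
    have heq : (1 - t) • (default : Fin 0 → ℝ) + t • default = default := Subsingleton.elim _ _
    rwa [heq] at this
  | succ n ih =>
    intro t ht0 ht1 f g h hf hg hh hyp
    set e := MeasurableEquiv.piFinSuccAbove (fun _ : Fin (n + 1) => ℝ) 0 with he
    have mp : MeasurePreserving e volume (volume.prod volume) := by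
      have := measurePreserving_piFinSuccAbove (fun _ : Fin (n + 1) => (volume : Measure ℝ)) 0
      rw [volume_pi, volume_pi]
      exact this
    have hlin : ∀ (a b : ℝ) (p q : ℝ × (Fin n → ℝ)),
        e.symm (a • p + b • q) = a • e.symm p + b • e.symm q := by
      intro a b p q
      obtain ⟨p₁, p₂⟩ := p
      obtain ⟨q₁, q₂⟩ := q
      simp only [he, MeasurableEquiv.piFinSuccAbove_symm_apply, Prod.smul_mk, Prod.mk_add_mk,
        smul_eq_mul]
      show Fin.insertNth (α := fun _ => ℝ) 0 (a * p₁ + b * q₁) (a • p₂ + b • q₂)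
        = a • Fin.insertNth (α := fun _ => ℝ) 0 p₁ p₂ + b • Fin.insertNth (α := fun _ => ℝ) 0 q₁ q₂
      rw [← insertNth_smul, ← insertNth_smul, ← Fin.insertNth_add]
    have key := step_PL (μ := (volume : Measure (Fin n → ℝ))) (fun h1 h2 _ _ _ hf' hg' hh' hyp' =>
        ih h1 h2 hf' hg' hh' hyp') ht0 ht1
      (f := f ∘ e.symm) (g := g ∘ e.symm) (h := h ∘ e.symm)
      (hf.comp e.symm.measurable) (hg.comp e.symm.measurable) (hh.comp e.symm.measurable) ?_
    · have hif : ∀ (f : (Fin (n+1) → ℝ) → ℝ≥0∞), Measurable f →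
          (∫⁻ p, (f ∘ e.symm) p ∂(volume.prod volume)) = ∫⁻ x, f x := by
        intro f hfm
        exact (mp.symm e).lintegral_comp hfm
      rwa [hif f hf, hif g hg, hif h hh] at key
    · intro p q
      have := hyp (e.symm p) (e.symm q)
      simpa [Function.comp, hlin] using this

/-- Multiplicative Brunn–Minkowski inequality on `Fin n → ℝ`. -/
lemma pi_BM {n : ℕ} {t : ℝ} (ht0 : 0 < t) (ht1 : t < 1) {A B C : Set (Fin n → ℝ)}
    (hA : MeasurableSet A) (hB : MeasurableSet B) (hC : MeasurableSet C)
    (hsub : (1 - t) • A + t • B ⊆ C) :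
    volume A ^ (1 - t) * volume B ^ t ≤ volume C := by
  have ht0' : (0:ℝ) < 1 - t := by linarith
  have key := pi_PL n ht0 ht1 (f := A.indicator 1) (g := B.indicator 1) (h := C.indicator 1)
    ((measurable_indicator_const_iff 1).2 hA)
    ((measurable_indicator_const_iff 1).2 hB)
    ((measurable_indicator_const_iff 1).2 hC) ?_
  · rwa [lintegral_indicator_one hA, lintegral_indicator_one hB, lintegral_indicator_one hC] at key
  · intro x y
    by_cases hx : x ∈ A
    · by_cases hy : y ∈ B
      · have hmem : (1 - t) • x + t • y ∈ C :=
          hsub ⟨(1 - t) • x, ⟨x, hx, rfl⟩, t • y, ⟨y, hy, rfl⟩, rfl⟩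
        simp [Set.indicator_of_mem, hx, hy, hmem]
      · simp [Set.indicator_of_notMem, hy, ENNReal.zero_rpow_of_pos ht0]
    · simp [Set.indicator_of_notMem, hx, ENNReal.zero_rpow_of_pos ht0']

/-- Multiplicative Brunn–Minkowski inequality on Euclidean space. -/
lemma euclid_BM {n : ℕ} {t : ℝ} (ht0 : 0 < t) (ht1 : t < 1)
    {A B C : Set (EuclideanSpace ℝ (Fin n))}
    (hA : MeasurableSet A) (hB : MeasurableSet B) (hC : MeasurableSet C)
    (hsub : (1 - t) • A + t • B ⊆ C) :
    volume A ^ (1 - t) * volume B ^ t ≤ volume C := by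
  set e := (MeasurableEquiv.toLp 2 (Fin n → ℝ)).symm with he
  have mp : MeasurePreserving (⇑e) volume volume :=
    EuclideanSpace.volume_preserving_symm_measurableEquiv_toLp (Fin n)
  have mps : MeasurePreserving (⇑e.symm) volume volume := mp.symm e
  have hvol : ∀ (S : Set (EuclideanSpace ℝ (Fin n))), MeasurableSet S →
      volume (⇑e.symm ⁻¹' S) = volume S := by
    intro S hS
    exact mps.measure_preimage hS.nullMeasurableSet
  have hlin : ∀ (c d : ℝ) (u v : EuclideanSpace ℝ (Fin n)),
      e (c • u + d • v) = c • e u + d • e v := fun _ _ _ _ => rfl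
  have hsub' : (1 - t) • (⇑e.symm ⁻¹' A) + t • (⇑e.symm ⁻¹' B) ⊆ ⇑e.symm ⁻¹' C := by
    rintro - ⟨-, ⟨p, hp, rfl⟩, -, ⟨q, hq, rfl⟩, rfl⟩
    show e.symm ((1 - t) • p + t • q) ∈ C
    have h1 : (1 - t) • p + t • q = e ((1 - t) • e.symm p + t • e.symm q) := by
      rw [hlin]
      simp
    rw [h1, MeasurableEquiv.symm_apply_apply]
    exact hsub ⟨_, ⟨e.symm p, hp, rfl⟩, _, ⟨e.symm q, hq, rfl⟩, rfl⟩
  have key := pi_BM ht0 ht1 (hA.preimage e.symm.measurable) (hB.preimage e.symm.measurable)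
    (hC.preimage e.symm.measurable) hsub'
  rwa [hvol A hA, hvol B hB, hvol C hC] at key

lemma euclid_vol_smul {n : ℕ} {c : ℝ} (hc : 0 ≤ c) (S : Set (EuclideanSpace ℝ (Fin n))) :
    volume (c • S) = ENNReal.ofReal (c ^ n) * volume S := by
  have := Measure.addHaar_smul_of_nonneg (volume : Measure (EuclideanSpace ℝ (Fin n))) hc S
  rwa [finrank_euclideanSpace_fin] at this

/-- Additive form of Brunn–Minkowski in Euclidean space. -/
lemma euclid_BM_add {n : ℕ} (hn : 0 < n) {a b : ℝ} (ha : 0 < a) (hb : 0 < b) (hab : a + b = 1)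
    {A B C : Set (EuclideanSpace ℝ (Fin n))}
    (hAm : MeasurableSet A) (hBm : MeasurableSet B) (hCm : MeasurableSet C)
    (hAne : A.Nonempty) (hBne : B.Nonempty)
    (hAfin : volume A ≠ ∞) (hBfin : volume B ≠ ∞) (hCfin : volume C ≠ ∞)
    (hsub : a • A + b • B ⊆ C) :
    a * (volume A).toReal ^ ((n:ℝ)⁻¹) + b * (volume B).toReal ^ ((n:ℝ)⁻¹)
      ≤ (volume C).toReal ^ ((n:ℝ)⁻¹) := by
  have hnR : (0:ℝ) < n := by exact_mod_cast hn
  have hninv : (0:ℝ) < (n:ℝ)⁻¹ := by positivity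
  have hpow : ∀ c : ℝ, 0 ≤ c → (c ^ n) ^ ((n:ℝ)⁻¹) = c := by
    intro c hc
    rw [← Real.rpow_natCast c n, ← Real.rpow_mul hc, mul_inv_cancel₀ hnR.ne', Real.rpow_one]
  -- a lower bound of the form ofReal (c^n) * volume S ≤ volume C gives an rpow bound
  have lower : ∀ (c : ℝ) (S : Set (EuclideanSpace ℝ (Fin n))), 0 ≤ c → volume S ≠ ∞ →
      ENNReal.ofReal (c ^ n) * volume S ≤ volume C →
      c * (volume S).toReal ^ ((n:ℝ)⁻¹) ≤ (volume C).toReal ^ ((n:ℝ)⁻¹) := by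
    intro c S hc hSfin hle
    have h1 : (c ^ n) * (volume S).toReal ≤ (volume C).toReal := by
      have := ENNReal.toReal_mono hCfin hle
      rwa [ENNReal.toReal_mul, ENNReal.toReal_ofReal (by positivity)] at this
    have h2 : ((c ^ n) * (volume S).toReal) ^ ((n:ℝ)⁻¹) ≤ (volume C).toReal ^ ((n:ℝ)⁻¹) :=
      Real.rpow_le_rpow (by positivity) h1 hninv.le
    calc c * (volume S).toReal ^ ((n:ℝ)⁻¹)
        = ((c ^ n) * (volume S).toReal) ^ ((n:ℝ)⁻¹) := by
          rw [Real.mul_rpow (by positivity) ENNReal.toReal_nonneg, hpow c hc]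
      _ ≤ _ := h2
  rcases eq_or_ne (volume A) 0 with hA0 | hA0
  · obtain ⟨u₀, hu₀⟩ := hAne
    have hsub2 : (a • u₀) +ᵥ (b • B) ⊆ C := by
      rintro - ⟨-, ⟨v, hv, rfl⟩, rfl⟩
      exact hsub ⟨a • u₀, ⟨u₀, hu₀, rfl⟩, b • v, ⟨v, hv, rfl⟩, rfl⟩
    have hle : ENNReal.ofReal (b ^ n) * volume B ≤ volume C := by
      calc ENNReal.ofReal (b ^ n) * volume B = volume (b • B) := (euclid_vol_smul hb.le B).symm
        _ = volume ((a • u₀) +ᵥ (b • B)) := (measure_vadd _ _ _).symm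
        _ ≤ volume C := measure_mono hsub2
    have := lower b B hb.le hBfin hle
    rw [hA0]
    simpa [Real.zero_rpow hninv.ne'] using this
  rcases eq_or_ne (volume B) 0 with hB0 | hB0
  · obtain ⟨v₀, hv₀⟩ := hBne
    have hsub2 : (b • v₀) +ᵥ (a • A) ⊆ C := by
      rintro - ⟨-, ⟨u, hu, rfl⟩, rfl⟩
      show b • v₀ + a • u ∈ C
      rw [add_comm]
      exact hsub ⟨a • u, ⟨u, hu, rfl⟩, b • v₀, ⟨v₀, hv₀, rfl⟩, rfl⟩
    have hle : ENNReal.ofReal (a ^ n) * volume A ≤ volume C := by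
      calc ENNReal.ofReal (a ^ n) * volume A = volume (a • A) := (euclid_vol_smul ha.le A).symm
        _ = volume ((b • v₀) +ᵥ (a • A)) := (measure_vadd _ _ _).symm
        _ ≤ volume C := measure_mono hsub2
    have := lower a A ha.le hAfin hle
    rw [hB0]
    simpa [Real.zero_rpow hninv.ne'] using this
  -- main case
  have hαr : 0 < (volume A).toReal := ENNReal.toReal_pos hA0 hAfin
  have hβr : 0 < (volume B).toReal := ENNReal.toReal_pos hB0 hBfin
  set ra := (volume A).toReal ^ ((n:ℝ)⁻¹) with hra
  set rb := (volume B).toReal ^ ((n:ℝ)⁻¹) with hrb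
  have hra0 : 0 < ra := Real.rpow_pos_of_pos hαr _
  have hrb0 : 0 < rb := Real.rpow_pos_of_pos hβr _
  set S := a * ra + b * rb with hS
  have hS0 : 0 < S := by positivity
  set θ := a * ra / S with hθ
  have hθ0 : 0 < θ := by positivity
  have hθ1 : θ < 1 := by
    rw [hθ, div_lt_one hS0, hS]
    nlinarith
  have hθ' : 1 - (1 - θ) = θ := by ring
  have hran : ra ^ n = (volume A).toReal := by
    rw [← Real.rpow_natCast ra n, hra, ← Real.rpow_mul ENNReal.toReal_nonneg,
      inv_mul_cancel₀ hnR.ne', Real.rpow_one]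
  have hrbn : rb ^ n = (volume B).toReal := by
    rw [← Real.rpow_natCast rb n, hrb, ← Real.rpow_mul ENNReal.toReal_nonneg,
      inv_mul_cancel₀ hnR.ne', Real.rpow_one]
  have hvolA'' : volume (ra⁻¹ • A) = 1 := by
    rw [euclid_vol_smul (by positivity) A, inv_pow, hran,
      ENNReal.ofReal_inv_of_pos hαr, ENNReal.ofReal_toReal hAfin,
      ENNReal.inv_mul_cancel hA0 hAfin]
  have hvolB'' : volume (rb⁻¹ • B) = 1 := by
    rw [euclid_vol_smul (by positivity) B, inv_pow, hrbn,
      ENNReal.ofReal_inv_of_pos hβr, ENNReal.ofReal_toReal hBfin,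
      ENNReal.inv_mul_cancel hB0 hBfin]
  have hsub'' : (1 - (1 - θ)) • (ra⁻¹ • A) + (1 - θ) • (rb⁻¹ • B) ⊆ S⁻¹ • C := by
    rw [hθ']
    rintro - ⟨-, ⟨-, ⟨u, hu, rfl⟩, rfl⟩, -, ⟨-, ⟨v, hv, rfl⟩, rfl⟩, rfl⟩
    refine ⟨a • u + b • v, hsub ⟨a • u, ⟨u, hu, rfl⟩, b • v, ⟨v, hv, rfl⟩, rfl⟩, ?_⟩
    have e1 : θ * ra⁻¹ = S⁻¹ * a := by
      rw [hθ]
      field_simp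
    have e2 : (1 - θ) * rb⁻¹ = S⁻¹ * b := by
      have h1 : 1 - θ = b * rb / S := by
        rw [hθ, hS]
        field_simp
        ring
      rw [h1]
      field_simp
    show S⁻¹ • (a • u + b • v) = θ • ra⁻¹ • u + (1 - θ) • rb⁻¹ • v
    rw [smul_add, smul_smul, smul_smul, smul_smul, smul_smul, e1, e2]
  have key := euclid_BM (t := 1 - θ) (by linarith) (by linarith)
    (hAm.const_smul₀ ra⁻¹) (hBm.const_smul₀ rb⁻¹) (hCm.const_smul₀ S⁻¹) hsub''
  rw [hθ', hvolA'', hvolB'', ENNReal.one_rpow, ENNReal.one_rpow, one_mul,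
    euclid_vol_smul (by positivity) C] at key
  -- key : 1 ≤ ofReal (S⁻¹ ^ n) * volume C
  have h1 : (1:ℝ) ≤ (S⁻¹) ^ n * (volume C).toReal := by
    have h2 := ENNReal.toReal_mono ?_ key
    · rwa [ENNReal.toReal_one, ENNReal.toReal_mul, ENNReal.toReal_ofReal (by positivity)] at h2
    · exact ENNReal.mul_ne_top ENNReal.ofReal_ne_top hCfin
  have h3 : S ^ n ≤ (volume C).toReal := by
    have hSn : (0:ℝ) < S ^ n := by positivity
    have hid : S ^ n * (S⁻¹ ^ n * (volume C).toReal) = (volume C).toReal := by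
      rw [← mul_assoc, ← mul_pow, mul_inv_cancel₀ hS0.ne', one_pow, one_mul]
    calc S ^ n = S ^ n * 1 := (mul_one _).symm
      _ ≤ S ^ n * (S⁻¹ ^ n * (volume C).toReal) := by
          exact mul_le_mul_of_nonneg_left h1 hSn.le
      _ = (volume C).toReal := hid
  calc S ≤ (S ^ n) ^ ((n:ℝ)⁻¹) := by rw [hpow S hS0.le]
    _ ≤ (volume C).toReal ^ ((n:ℝ)⁻¹) := Real.rpow_le_rpow (by positivity) h3 hninv.le

theorem concavity_of_volume_of_intersections {n : ℕ} (hn : 0 < n)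
    (K L : Set (EuclideanSpace ℝ (Fin n)))
    (hK : Convex ℝ K) (hKc : IsCompact K) (hKi : (interior K).Nonempty)
    (hL : Convex ℝ L) (hLc : IsCompact L) (hLi : (interior L).Nonempty) :
    ConcaveOn ℝ (K + L)
      (fun x => (volume (K ∩ ((fun y => x - y) '' L))).toReal ^ ((n : ℝ)⁻¹)) := by
  refine ⟨hK.add hL, ?_⟩
  intro x hx y hy a b ha hb hab
  rcases eq_or_lt_of_le ha with rfl | ha0
  · have hb1 : b = 1 := by linarith
    subst hb1
    simp
  rcases eq_or_lt_of_le hb with rfl | hb0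
  · have ha1 : a = 1 := by linarith
    subst ha1
    simp
  simp only [smul_eq_mul]
  -- the three slices
  have hmeas : ∀ w : EuclideanSpace ℝ (Fin n),
      MeasurableSet (K ∩ ((fun u => w - u) '' L)) := by
    intro w
    exact hKc.measurableSet.inter
      ((hLc.image (continuous_const.sub continuous_id)).measurableSet)
  have hfin : ∀ w : EuclideanSpace ℝ (Fin n),
      volume (K ∩ ((fun u => w - u) '' L)) ≠ ∞ := by
    intro w
    exact ((measure_mono Set.inter_subset_left).trans_lt hKc.measure_lt_top).ne
  have hnonempty : ∀ w : EuclideanSpace ℝ (Fin n), w ∈ K + L →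
      (K ∩ ((fun u => w - u) '' L)).Nonempty := by
    rintro w ⟨k, hk, l, hl, rfl⟩
    exact ⟨k, hk, ⟨l, hl, add_sub_cancel_right k l⟩⟩
  have hsub : a • (K ∩ ((fun u => x - u) '' L)) + b • (K ∩ ((fun u => y - u) '' L))
      ⊆ K ∩ ((fun u => (a • x + b • y) - u) '' L) := by
    rintro - ⟨-, ⟨-, ⟨huK, ⟨lu, hlu, rfl⟩⟩, rfl⟩, -, ⟨-, ⟨hvK, ⟨lv, hlv, rfl⟩⟩, rfl⟩, rfl⟩
    refine ⟨hK huK hvK ha0.le hb0.le hab, ⟨a • lu + b • lv, hL hlu hlv ha0.le hb0.le hab, ?_⟩⟩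
    show a • x + b • y - (a • lu + b • lv) = a • (x - lu) + b • (y - lv)
    simp only [smul_sub]
    abel
  exact euclid_BM_add hn ha0 hb0 hab (hmeas x) (hmeas y) (hmeas _)
    (hnonempty x hx) (hnonempty y hy) (hfin x) (hfin y) (hfin _) hsub
end

section
/- Let K and L be convex bodies in ℝ^n, let M(K,L) = max_{z ∈ ℝ^n} vol(K ∩ (z − L)), and for θ ∈ [0,1] define the θ-convolution body K +_θ L = {x ∈ K + L : vol(K ∩ (x − L)) ≥ θ·M(K,L)}. Then K +_θ L is convex for every θ ∈ [0,1]. -/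
open MeasureTheory Pointwise ENNReal Set
open scoped NNReal

lemma amgm2 {a b : ℝ} (ha : 0 ≤ a) (hb : 0 ≤ b) (hab : a + b = 1) {x y : ℝ≥0∞}
    (hx : x ≠ ⊤) (hy : y ≠ ⊤) :
    x ^ a * y ^ b ≤ ENNReal.ofReal a * x + ENNReal.ofReal b * y := by
  lift x to ℝ≥0 using hx
  lift y to ℝ≥0 using hy
  have h := NNReal.geom_mean_le_arith_mean2_weighted ⟨a, ha⟩ ⟨b, hb⟩ x y
    (NNReal.eq (by simp only [NNReal.coe_add, NNReal.coe_mk, NNReal.coe_one]; exact hab))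
  rw [ENNReal.ofReal, ENNReal.ofReal, Real.toNNReal_of_nonneg ha, Real.toNNReal_of_nonneg hb,
    ← ENNReal.coe_rpow_of_nonneg _ ha, ← ENNReal.coe_rpow_of_nonneg _ hb, ← ENNReal.coe_mul,
    ← ENNReal.coe_mul, ← ENNReal.coe_mul, ← ENNReal.coe_add, ENNReal.coe_le_coe]
  exact h

lemma one_dim_compact {a b : ℝ} (ha : 0 < a) (hb : 0 < b) {S T U : Set ℝ}
    (hS : IsCompact S) (hT : IsCompact T) (hSne : S.Nonempty) (hTne : T.Nonempty)
    (hU : a • S + b • T ⊆ U) :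
    ENNReal.ofReal a * volume S + ENNReal.ofReal b * volume T ≤ volume U := by
  set c₁ := sSup S with hc1
  set c₂ := sInf T with hc2
  have hc₁S : c₁ ∈ S := hS.sSup_mem hSne
  have hc₂T : c₂ ∈ T := hT.sInf_mem hTne
  set c : ℝ := a * c₁ + b * c₂ with hc
  set X : Set ℝ := (b * c₂) +ᵥ a • S with hX
  set Y : Set ℝ := (a * c₁) +ᵥ b • T with hY
  have hXU : X ⊆ U := by
    rintro _ ⟨u, ⟨s, hs, rfl⟩, rfl⟩
    have : a • s + b • c₂ ∈ a • S + b • T :=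
      Set.add_mem_add (Set.smul_mem_smul_set hs) (Set.smul_mem_smul_set hc₂T)
    simpa [smul_eq_mul, add_comm] using hU this
  have hYU : Y ⊆ U := by
    rintro _ ⟨u, ⟨t, ht, rfl⟩, rfl⟩
    have : a • c₁ + b • t ∈ a • S + b • T :=
      Set.add_mem_add (Set.smul_mem_smul_set hc₁S) (Set.smul_mem_smul_set ht)
    simpa [smul_eq_mul] using hU this
  have hXc : X ⊆ Iic c := by
    rintro _ ⟨u, ⟨s, hs, rfl⟩, rfl⟩
    have hsle : s ≤ c₁ := le_csSup hS.bddAbove hs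
    simp only [vadd_eq_add, smul_eq_mul, mem_Iic, hc]
    nlinarith
  have hYc : Y ⊆ Ici c := by
    rintro _ ⟨u, ⟨t, ht, rfl⟩, rfl⟩
    have htle : c₂ ≤ t := csInf_le hT.bddBelow ht
    simp only [vadd_eq_add, smul_eq_mul, mem_Ici, hc]
    nlinarith
  have hYm : MeasurableSet Y := by
    have : IsCompact Y := by
      have h1 : IsCompact (b • T) := hT.smul b
      simpa [hY] using h1.vadd (a * c₁)
    exact this.measurableSet
  have hdisj : Disjoint (X \ {c}) Y := by
    refine Set.disjoint_left.2 fun x hx hxY => ?_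
    have h1 : x ≤ c := hXc hx.1
    have h2 : c ≤ x := hYc hxY
    exact hx.2 (le_antisymm h1 h2)
  have hvolX : volume X = ENNReal.ofReal a * volume S := by
    rw [hX, measure_vadd, Measure.addHaar_smul]
    simp [abs_of_pos ha]
  have hvolY : volume Y = ENNReal.ofReal b * volume T := by
    rw [hY, measure_vadd, Measure.addHaar_smul]
    simp [abs_of_pos hb]
  calc ENNReal.ofReal a * volume S + ENNReal.ofReal b * volume T
      = volume (X \ {c}) + volume Y := by
        rw [measure_diff_null (by simp), hvolX, hvolY]
    _ = volume ((X \ {c}) ∪ Y) := (measure_union hdisj hYm).symm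
    _ ≤ volume U := measure_mono (Set.union_subset (fun x hx => hXU hx.1) hYU)

lemma one_dim_meas {a b : ℝ} (ha : 0 < a) (hb : 0 < b) (hab : a + b = 1) {S T U : Set ℝ}
    (hS : MeasurableSet S) (hT : MeasurableSet T) (hSne : S.Nonempty) (hTne : T.Nonempty)
    (hSf : volume S ≠ ⊤) (hTf : volume T ≠ ⊤)
    (hU : a • S + b • T ⊆ U) :
    ENNReal.ofReal a * volume S + ENNReal.ofReal b * volume T ≤ volume U := by
  rcases eq_or_ne (volume U) ⊤ with hUtop | hUtop
  · simp [hUtop]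
  refine ENNReal.le_of_forall_pos_le_add fun ε hε _ => ?_
  have hε2 : ((ε : ℝ≥0∞) / 2) ≠ 0 := by
    simp [ENNReal.div_eq_zero_iff, hε.ne']
  obtain ⟨K₁, hK₁S, hK₁c, hK₁v⟩ := hS.exists_isCompact_lt_add hSf hε2
  obtain ⟨K₂, hK₂T, hK₂c, hK₂v⟩ := hT.exists_isCompact_lt_add hTf hε2
  obtain ⟨s₀, hs₀⟩ := hSne
  obtain ⟨t₀, ht₀⟩ := hTne
  set K₁' : Set ℝ := K₁ ∪ {s₀} with hK₁'
  set K₂' : Set ℝ := K₂ ∪ {t₀} with hK₂'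
  have hK₁'c : IsCompact K₁' := hK₁c.union isCompact_singleton
  have hK₂'c : IsCompact K₂' := hK₂c.union isCompact_singleton
  have hK₁'S : K₁' ⊆ S := Set.union_subset hK₁S (by simpa using hs₀)
  have hK₂'T : K₂' ⊆ T := Set.union_subset hK₂T (by simpa using ht₀)
  have key := one_dim_compact ha hb hK₁'c hK₂'c (Set.Nonempty.inr (Set.singleton_nonempty _))
    (Set.Nonempty.inr (Set.singleton_nonempty _))
    (Set.Subset.trans (Set.add_subset_add (Set.smul_set_mono hK₁'S)
      (Set.smul_set_mono hK₂'T)) hU)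
  have h₁ : volume S ≤ volume K₁' + (ε : ℝ≥0∞) / 2 :=
    le_trans hK₁v.le (add_le_add_left (measure_mono Set.subset_union_left) _)
  have h₂ : volume T ≤ volume K₂' + (ε : ℝ≥0∞) / 2 :=
    le_trans hK₂v.le (add_le_add_left (measure_mono Set.subset_union_left) _)
  have hab1 : ENNReal.ofReal a + ENNReal.ofReal b = 1 := by
    rw [← ENNReal.ofReal_add ha.le hb.le, hab, ENNReal.ofReal_one]
  calc ENNReal.ofReal a * volume S + ENNReal.ofReal b * volume T
      ≤ ENNReal.ofReal a * (volume K₁' + (ε : ℝ≥0∞) / 2)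
        + ENNReal.ofReal b * (volume K₂' + (ε : ℝ≥0∞) / 2) := by gcongr
    _ = (ENNReal.ofReal a * volume K₁' + ENNReal.ofReal b * volume K₂')
        + (ENNReal.ofReal a + ENNReal.ofReal b) * ((ε : ℝ≥0∞) / 2) := by ring
    _ ≤ volume U + 1 * ((ε : ℝ≥0∞) / 2) := by rw [hab1]; gcongr
    _ ≤ volume U + (ε : ℝ≥0∞) := by
        rw [one_mul]
        exact add_le_add_right ENNReal.half_le_self _

lemma layercake_le_one {φ : ℝ → ℝ≥0∞} (hφ : Measurable φ) (hφ1 : ∀ t, φ t ≤ 1) :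
    ∫⁻ t, φ t = ∫⁻ u in Set.Ioi (0:ℝ), volume {t | ENNReal.ofReal u < φ t} := by
  have hne : ∀ t, φ t ≠ ⊤ := fun t => (lt_of_le_of_lt (hφ1 t) ENNReal.one_lt_top).ne
  have h1 : ∀ t, ENNReal.ofReal ((φ t).toReal) = φ t := fun t => ENNReal.ofReal_toReal (hne t)
  have lc := lintegral_eq_lintegral_meas_lt (volume : Measure ℝ)
    (Filter.Eventually.of_forall fun t => ENNReal.toReal_nonneg)
    (hφ.ennreal_toReal.aemeasurable)
  calc ∫⁻ t, φ t = ∫⁻ t, ENNReal.ofReal ((φ t).toReal) := by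
        exact (lintegral_congr h1).symm
    _ = ∫⁻ u in Set.Ioi (0:ℝ), volume {t | u < (φ t).toReal} := lc
    _ = ∫⁻ u in Set.Ioi (0:ℝ), volume {t | ENNReal.ofReal u < φ t} := by
        refine setLIntegral_congr_fun measurableSet_Ioi
          (fun u hu => ?_)
        congr 1
        ext t
        simp only [Set.mem_setOf_eq]
        rw [ENNReal.ofReal_lt_iff_lt_toReal hu.le (hne t)]

lemma dim1_PL {a b : ℝ} (ha : 0 < a) (hb : 0 < b) (hab : a + b = 1)
    {f g h : ℝ → ℝ≥0∞} (hf : Measurable f) (hg : Measurable g) (hh : Measurable h)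
    (hfi : (∫⁻ r, f r) ≠ ⊤) (hgi : (∫⁻ s, g s) ≠ ⊤)
    (hfs : (⨆ r, f r) ≠ ⊤) (hgs : (⨆ s, g s) ≠ ⊤)
    (hyp : ∀ r s, f r ^ a * g s ^ b ≤ h (a * r + b * s)) :
    (∫⁻ r, f r) ^ a * (∫⁻ s, g s) ^ b ≤ ∫⁻ t, h t := by
  rcases eq_or_ne (⨆ r, f r) 0 with hMf0 | hMf0
  · have hf0 : ∀ r, f r = 0 := fun r => le_antisymm (hMf0 ▸ le_iSup f r) zero_le
    have : (∫⁻ r, f r) = 0 := by simp [hf0]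
    rw [this, ENNReal.zero_rpow_of_pos ha, zero_mul]
    exact zero_le
  rcases eq_or_ne (⨆ s, g s) 0 with hMg0 | hMg0
  · have hg0 : ∀ s, g s = 0 := fun s => le_antisymm (hMg0 ▸ le_iSup g s) zero_le
    have : (∫⁻ s, g s) = 0 := by simp [hg0]
    rw [this, ENNReal.zero_rpow_of_pos hb, mul_zero]
    exact zero_le
  set Mf := ⨆ r, f r with hMf
  set Mg := ⨆ s, g s with hMg
  set D := Mf ^ a * Mg ^ b with hD
  have hDa0 : Mf ^ a ≠ 0 := (ENNReal.rpow_pos (pos_iff_ne_zero.2 hMf0) hfs).ne'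
  have hDb0 : Mg ^ b ≠ 0 := (ENNReal.rpow_pos (pos_iff_ne_zero.2 hMg0) hgs).ne'
  have hDat : Mf ^ a ≠ ⊤ := ENNReal.rpow_ne_top_of_nonneg ha.le hfs
  have hDbt : Mg ^ b ≠ ⊤ := ENNReal.rpow_ne_top_of_nonneg hb.le hgs
  have hD0 : D ≠ 0 := mul_ne_zero hDa0 hDb0
  have hDt : D ≠ ⊤ := ENNReal.mul_ne_top hDat hDbt
  set F := fun r => f r / Mf with hF
  set G := fun s => g s / Mg with hG
  set H := fun t => h t / D with hH
  have hFm : Measurable F := hf.div measurable_const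
  have hGm : Measurable G := hg.div measurable_const
  have hHm : Measurable H := hh.div measurable_const
  have hF1 : ∀ r, F r ≤ 1 := fun r => by
    rw [hF]
    exact le_trans (ENNReal.div_le_div_right (le_iSup f r) Mf)
      (le_of_eq (ENNReal.div_self hMf0 hfs))
  have hG1 : ∀ s, G s ≤ 1 := fun s => by
    rw [hG]
    exact le_trans (ENNReal.div_le_div_right (le_iSup g s) Mg)
      (le_of_eq (ENNReal.div_self hMg0 hgs))
  have hintF : (∫⁻ r, F r) = Mf⁻¹ * ∫⁻ r, f r := by
    simp_rw [hF, ENNReal.div_eq_inv_mul]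
    exact lintegral_const_mul _ hf
  have hintG : (∫⁻ s, G s) = Mg⁻¹ * ∫⁻ s, g s := by
    simp_rw [hG, ENNReal.div_eq_inv_mul]
    exact lintegral_const_mul _ hg
  have hintH : (∫⁻ t, H t) = D⁻¹ * ∫⁻ t, h t := by
    simp_rw [hH, ENNReal.div_eq_inv_mul]
    exact lintegral_const_mul _ hh
  have hintFt : (∫⁻ r, F r) ≠ ⊤ := by
    rw [hintF]
    exact ENNReal.mul_ne_top (ENNReal.inv_ne_top.2 hMf0) hfi
  have hintGt : (∫⁻ s, G s) ≠ ⊤ := by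
    rw [hintG]
    exact ENNReal.mul_ne_top (ENNReal.inv_ne_top.2 hMg0) hgi
  -- the key superlevel-set inequality
  have key : ∀ u : ℝ, 0 < u → u < 1 →
      ENNReal.ofReal a * volume {r | ENNReal.ofReal u < F r}
        + ENNReal.ofReal b * volume {s | ENNReal.ofReal u < G s}
      ≤ volume {t | ENNReal.ofReal u < H t} := by
    intro u hu0 hu1
    have hu0' : ENNReal.ofReal u ≠ 0 := by simp [hu0]
    have hSne : {r | ENNReal.ofReal u < F r}.Nonempty := by
      have hsupF : (⨆ r, F r) = 1 := by
        rw [hF, ← ENNReal.iSup_div, ← hMf, ENNReal.div_self hMf0 hfs]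
      have : ENNReal.ofReal u < ⨆ r, F r := hsupF ▸ ENNReal.ofReal_lt_one.2 hu1
      obtain ⟨r, hr⟩ := lt_iSup_iff.1 this
      exact ⟨r, hr⟩
    have hTne : {s | ENNReal.ofReal u < G s}.Nonempty := by
      have hsupG : (⨆ s, G s) = 1 := by
        rw [hG, ← ENNReal.iSup_div, ← hMg, ENNReal.div_self hMg0 hgs]
      have : ENNReal.ofReal u < ⨆ s, G s := hsupG ▸ ENNReal.ofReal_lt_one.2 hu1
      obtain ⟨s, hs⟩ := lt_iSup_iff.1 this
      exact ⟨s, hs⟩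
    have hSm : MeasurableSet {r | ENNReal.ofReal u < F r} := hFm measurableSet_Ioi
    have hTm : MeasurableSet {s | ENNReal.ofReal u < G s} := hGm measurableSet_Ioi
    have hSf : volume {r | ENNReal.ofReal u < F r} ≠ ⊤ := by
      have hsub : {r | ENNReal.ofReal u < F r} ⊆ {r | ENNReal.ofReal u ≤ F r} :=
        fun r hr => Set.mem_setOf_eq ▸ le_of_lt hr
      have h1 : volume {r | ENNReal.ofReal u < F r} ≤ (∫⁻ r, F r) / ENNReal.ofReal u :=
        le_trans (measure_mono hsub)
          (meas_ge_le_lintegral_div hFm.aemeasurable hu0' ENNReal.ofReal_ne_top)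
      exact (lt_of_le_of_lt h1 (ENNReal.div_lt_top hintFt hu0')).ne
    have hTf : volume {s | ENNReal.ofReal u < G s} ≠ ⊤ := by
      have hsub : {s | ENNReal.ofReal u < G s} ⊆ {s | ENNReal.ofReal u ≤ G s} :=
        fun s hs => Set.mem_setOf_eq ▸ le_of_lt hs
      have h1 : volume {s | ENNReal.ofReal u < G s} ≤ (∫⁻ s, G s) / ENNReal.ofReal u :=
        le_trans (measure_mono hsub)
          (meas_ge_le_lintegral_div hGm.aemeasurable hu0' ENNReal.ofReal_ne_top)
      exact (lt_of_le_of_lt h1 (ENNReal.div_lt_top hintGt hu0')).ne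
    refine one_dim_meas ha hb hab hSm hTm hSne hTne hSf hTf ?_
    rintro x ⟨-, ⟨r, hr, rfl⟩, -, ⟨s, hs, rfl⟩, rfl⟩
    show ENNReal.ofReal u < H (a • r + b • s)
    have hFG : F r ^ a * G s ^ b ≤ H (a * r + b * s) := by
      have e1 : F r ^ a * G s ^ b = (f r ^ a * g s ^ b) / D := by
        rw [hF, hG, hD, ENNReal.div_rpow_of_nonneg _ _ ha.le,
          ENNReal.div_rpow_of_nonneg _ _ hb.le]
        rw [ENNReal.div_eq_inv_mul, ENNReal.div_eq_inv_mul, ENNReal.div_eq_inv_mul,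
          ENNReal.mul_inv (Or.inl hDa0) (Or.inl hDat)]
        ring
      rw [e1, hH]
      exact ENNReal.div_le_div_right (hyp r s) D
    have hlt : ENNReal.ofReal u < F r ^ a * G s ^ b := by
      have h0 : ENNReal.ofReal u = ENNReal.ofReal u ^ a * ENNReal.ofReal u ^ b := by
        rw [← ENNReal.rpow_add a b hu0' ENNReal.ofReal_ne_top, hab, ENNReal.rpow_one]
      rw [h0]
      have hub0 : (ENNReal.ofReal u) ^ b ≠ 0 :=
        (ENNReal.rpow_pos (pos_iff_ne_zero.2 hu0') ENNReal.ofReal_ne_top).ne'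
      have hubt : (ENNReal.ofReal u) ^ b ≠ ⊤ :=
        ENNReal.rpow_ne_top_of_nonneg hb.le ENNReal.ofReal_ne_top
      calc ENNReal.ofReal u ^ a * ENNReal.ofReal u ^ b
          < F r ^ a * ENNReal.ofReal u ^ b := by
            refine ENNReal.mul_lt_mul_left hub0 hubt ?_
            exact ENNReal.rpow_lt_rpow hr ha
        _ ≤ F r ^ a * G s ^ b :=
            mul_le_mul_right (ENNReal.rpow_le_rpow hs.le hb.le) _
    have : a • r + b • s = a * r + b * s := by simp [smul_eq_mul]
    rw [this]
    exact lt_of_lt_of_le hlt hFG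
  -- split Ioi 0 into Ioo 0 1 and Ici 1
  have hunion : Set.Ioo (0:ℝ) 1 ∪ Set.Ici (1:ℝ) = Set.Ioi 0 :=
    Set.Ioo_union_Ici_eq_Ioi one_pos
  have hdisj : Disjoint (Set.Ioo (0:ℝ) 1) (Set.Ici (1:ℝ)) :=
    Set.disjoint_left.2 fun u hu hu' => hu.2.not_ge hu'
  have hsplit : ∀ ψ : ℝ → ℝ≥0∞,
      (∫⁻ u in Set.Ioi (0:ℝ), ψ u) =
        (∫⁻ u in Set.Ioo (0:ℝ) 1, ψ u) + ∫⁻ u in Set.Ici (1:ℝ), ψ u := by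
    intro ψ
    rw [← hunion, lintegral_union measurableSet_Ici hdisj]
  -- identify the normalized integrals with integrals over Ioo 0 1
  have hzero : ∀ (φ : ℝ → ℝ≥0∞), (∀ t, φ t ≤ 1) →
      (∫⁻ u in Set.Ici (1:ℝ), volume {r | ENNReal.ofReal u < φ r}) = 0 := by
    intro φ hφ1
    rw [setLIntegral_congr_fun measurableSet_Ici
      (fun u (hu : 1 ≤ u) => ?_), lintegral_zero]
    have : {r | ENNReal.ofReal u < φ r} = ∅ := by
      ext r
      simp only [Set.mem_setOf_eq, Set.mem_empty_iff_false, iff_false, not_lt]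
      exact le_trans (hφ1 r) (ENNReal.one_le_ofReal.2 hu)
    rw [this, measure_empty]
  have hFlc : (∫⁻ r, F r) = ∫⁻ u in Set.Ioo (0:ℝ) 1, volume {r | ENNReal.ofReal u < F r} := by
    rw [layercake_le_one hFm hF1, hsplit, hzero F hF1, add_zero]
  have hGlc : (∫⁻ s, G s) = ∫⁻ u in Set.Ioo (0:ℝ) 1, volume {s | ENNReal.ofReal u < G s} := by
    rw [layercake_le_one hGm hG1, hsplit, hzero G hG1, add_zero]
  have hHlc : (∫⁻ u in Set.Ioo (0:ℝ) 1, volume {t | ENNReal.ofReal u < H t}) ≤ ∫⁻ t, H t := by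
    set H' := fun t => min (H t) 1 with hH'
    have hH'm : Measurable H' := hHm.min measurable_const
    have hH'1 : ∀ t, H' t ≤ 1 := fun t => min_le_right _ _
    have h1 : (∫⁻ t, H' t) ≤ ∫⁻ t, H t := lintegral_mono fun t => min_le_left _ _
    refine le_trans ?_ h1
    rw [layercake_le_one hH'm hH'1, hsplit]
    refine le_trans (le_of_eq ?_) le_self_add
    refine setLIntegral_congr_fun measurableSet_Ioo
      (fun u hu => ?_)
    congr 1
    ext t
    simp only [Set.mem_setOf_eq, hH', lt_min_iff]
    exact (and_iff_left (ENNReal.ofReal_lt_one.2 hu.2)).symm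
  -- measurability of superlevel volumes in u
  have hmono : ∀ (φ : ℝ → ℝ≥0∞), Antitone fun u => volume {r | ENNReal.ofReal u < φ r} := by
    intro φ u v huv
    exact measure_mono fun r hr => lt_of_le_of_lt (ENNReal.ofReal_le_ofReal huv) hr
  -- combine
  have main : ENNReal.ofReal a * (∫⁻ r, F r) + ENNReal.ofReal b * (∫⁻ s, G s) ≤ ∫⁻ t, H t := by
    rw [hFlc, hGlc, ← lintegral_const_mul' _ _ ENNReal.ofReal_ne_top,
      ← lintegral_const_mul' _ _ ENNReal.ofReal_ne_top, ← lintegral_add_left']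
    · refine le_trans ?_ hHlc
      refine setLIntegral_mono' measurableSet_Ioo fun u hu => key u hu.1 hu.2
    · exact (((hmono F).measurable).const_mul _).aemeasurable
  have amgm : (∫⁻ r, F r) ^ a * (∫⁻ s, G s) ^ b
      ≤ ENNReal.ofReal a * (∫⁻ r, F r) + ENNReal.ofReal b * (∫⁻ s, G s) :=
    amgm2 ha.le hb.le hab hintFt hintGt
  have norm : (∫⁻ r, F r) ^ a * (∫⁻ s, G s) ^ b
      = ((∫⁻ r, f r) ^ a * (∫⁻ s, g s) ^ b) / D := by
    rw [hintF, hintG, ENNReal.mul_rpow_of_nonneg _ _ ha.le, ENNReal.mul_rpow_of_nonneg _ _ hb.le,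
      ENNReal.inv_rpow, ENNReal.inv_rpow, ENNReal.div_eq_inv_mul, hD,
      ENNReal.mul_inv (Or.inl hDa0) (Or.inl hDat)]
    ring
  have final : ((∫⁻ r, f r) ^ a * (∫⁻ s, g s) ^ b) / D ≤ (∫⁻ t, h t) / D := by
    rw [← ENNReal.div_eq_inv_mul] at hintH
    rw [← norm, ← hintH]
    exact le_trans amgm main
  calc (∫⁻ r, f r) ^ a * (∫⁻ s, g s) ^ b
      = ((∫⁻ r, f r) ^ a * (∫⁻ s, g s) ^ b) / D * D := (ENNReal.div_mul_cancel hD0 hDt).symm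
    _ ≤ (∫⁻ t, h t) / D * D := mul_le_mul_left final _
    _ = ∫⁻ t, h t := ENNReal.div_mul_cancel hD0 hDt

lemma slice_compact {α β : Type*} [TopologicalSpace α] [T1Space α] [TopologicalSpace β]
    {A : Set (α × β)} (hA : IsCompact A) (r : α) : IsCompact (Prod.mk r ⁻¹' A) := by
  have h : Prod.mk r ⁻¹' A = Prod.snd '' (A ∩ Prod.fst ⁻¹' {r}) := by
    ext z
    constructor
    · intro hz
      exact ⟨(r, z), ⟨hz, rfl⟩, rfl⟩
    · rintro ⟨⟨p₁, p₂⟩, ⟨hp, hp1⟩, rfl⟩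
      have : p₁ = r := hp1
      rwa [← this]
  rw [h]
  exact ((hA.inter_right ((isClosed_singleton).preimage continuous_fst)).image continuous_snd)

lemma PL_prod {k : ℕ} {a b : ℝ} (ha : 0 < a) (hb : 0 < b) (hab : a + b = 1)
    (ih : ∀ {A B C : Set (Fin k → ℝ)}, IsCompact A → IsCompact B → MeasurableSet C →
      a • A + b • B ⊆ C → volume A ^ a * volume B ^ b ≤ volume C)
    {A B C : Set (ℝ × (Fin k → ℝ))} (hA : IsCompact A) (hB : IsCompact B)
    (hC : MeasurableSet C) (hsub : a • A + b • B ⊆ C) :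
    volume A ^ a * volume B ^ b ≤ volume C := by
  have hAm : MeasurableSet A := hA.measurableSet
  have hBm : MeasurableSet B := hB.measurableSet
  set f := fun r : ℝ => volume (Prod.mk r ⁻¹' A) with hf
  set g := fun s : ℝ => volume (Prod.mk s ⁻¹' B) with hg
  set h := fun t : ℝ => volume (Prod.mk t ⁻¹' C) with hh
  have hfm : Measurable f := measurable_measure_prodMk_left hAm
  have hgm : Measurable g := measurable_measure_prodMk_left hBm
  have hhm : Measurable h := measurable_measure_prodMk_left hC
  have hvolA : volume A = ∫⁻ r, f r := by
    rw [Measure.volume_eq_prod, Measure.prod_apply hAm]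
  have hvolB : volume B = ∫⁻ s, g s := by
    rw [Measure.volume_eq_prod, Measure.prod_apply hBm]
  have hvolC : volume C = ∫⁻ t, h t := by
    rw [Measure.volume_eq_prod, Measure.prod_apply hC]
  have hfb : ∀ r, f r ≤ volume (Prod.snd '' A) :=
    fun r => measure_mono (fun z hz => ⟨(r, z), hz, rfl⟩)
  have hgb : ∀ s, g s ≤ volume (Prod.snd '' B) :=
    fun s => measure_mono (fun z hz => ⟨(s, z), hz, rfl⟩)
  have hfs : (⨆ r, f r) ≠ ⊤ :=
    (lt_of_le_of_lt (iSup_le hfb) (hA.image continuous_snd).measure_lt_top).ne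
  have hgs : (⨆ s, g s) ≠ ⊤ :=
    (lt_of_le_of_lt (iSup_le hgb) (hB.image continuous_snd).measure_lt_top).ne
  have hyp : ∀ r s, f r ^ a * g s ^ b ≤ h (a * r + b * s) := by
    intro r s
    refine ih (slice_compact hA r) (slice_compact hB s)
      (hC.preimage measurable_prodMk_left) ?_
    rintro _ ⟨_, ⟨u, hu, rfl⟩, _, ⟨v, hv, rfl⟩, rfl⟩
    show (a * r + b * s, a • u + b • v) ∈ C
    have heq : ((a * r + b * s, a • u + b • v) : ℝ × (Fin k → ℝ))
        = a • ((r, u) : ℝ × (Fin k → ℝ)) + b • ((s, v) : ℝ × (Fin k → ℝ)) := by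
      simp [Prod.ext_iff, smul_eq_mul]
    rw [heq]
    exact hsub (Set.add_mem_add (Set.smul_mem_smul_set hu) (Set.smul_mem_smul_set hv))
  rw [hvolA, hvolB, hvolC]
  exact dim1_PL ha hb hab hfm hgm hhm (hvolA ▸ hA.measure_lt_top.ne)
    (hvolB ▸ hB.measure_lt_top.ne) hfs hgs hyp

lemma PL_pi (k : ℕ) : ∀ {a b : ℝ}, 0 < a → 0 < b → a + b = 1 →
    ∀ {A B C : Set (Fin k → ℝ)}, IsCompact A → IsCompact B → MeasurableSet C →
    a • A + b • B ⊆ C → volume A ^ a * volume B ^ b ≤ volume C := by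
  induction k with
  | zero =>
    intro a b ha hb hab A B C hA hB hC hsub
    rcases A.eq_empty_or_nonempty with rfl | hAne
    · simp [ENNReal.zero_rpow_of_pos ha]
    rcases B.eq_empty_or_nonempty with rfl | hBne
    · simp [ENNReal.zero_rpow_of_pos hb]
    obtain ⟨x₀, hx₀⟩ := hAne
    obtain ⟨y₀, hy₀⟩ := hBne
    have hsing : ∀ x y : Fin 0 → ℝ, x = y := fun x y => funext fun i => i.elim0
    have hAu : A = Set.univ := Set.eq_univ_of_forall fun y => (hsing y x₀) ▸ hx₀
    have hBu : B = Set.univ := Set.eq_univ_of_forall fun y => (hsing y y₀) ▸ hy₀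
    have hCu : C = Set.univ := by
      have : a • x₀ + b • y₀ ∈ C :=
        hsub (Set.add_mem_add (Set.smul_mem_smul_set hx₀) (Set.smul_mem_smul_set hy₀))
      exact Set.eq_univ_of_forall fun y => (hsing y _) ▸ this
    have huniv : volume (Set.univ : Set (Fin 0 → ℝ)) = 1 := by
      rw [volume_pi, Measure.pi_univ]
      simp
    rw [hAu, hBu, hCu, huniv, ENNReal.one_rpow, ENNReal.one_rpow, one_mul]
  | succ k ih =>
    intro a b ha hb hab A B C hA hB hC hsub
    set F : (Fin (k+1) → ℝ) → ℝ × (Fin k → ℝ) :=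
      fun x => (x 0, fun j => x ((0 : Fin (k+1)).succAbove j)) with hF
    set e := MeasurableEquiv.piFinSuccAbove (fun _ : Fin (k+1) => ℝ) 0 with he
    have hFe : ∀ x, F x = e x := fun x => rfl
    have hmp : MeasurePreserving e volume volume :=
      volume_preserving_piFinSuccAbove (fun _ : Fin (k+1) => ℝ) 0
    have hFcont : Continuous F :=
      (continuous_apply 0).prodMk (continuous_pi fun j => continuous_apply _)
    have himg : ∀ S : Set (Fin (k+1) → ℝ), F '' S = e.symm ⁻¹' S := by
      intro S
      rw [Set.image_congr' hFe]
      exact e.image_eq_preimage_symm S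
    have hvol : ∀ S : Set (Fin (k+1) → ℝ), volume (F '' S) = volume S := by
      intro S
      rw [himg]
      exact (hmp.symm e).measure_preimage_equiv S
    have hlin : ∀ (c : ℝ) (x : Fin (k+1) → ℝ), F (c • x) = c • F x := fun c x => rfl
    have hadd : ∀ (x y : Fin (k+1) → ℝ), F (x + y) = F x + F y := fun x y => rfl
    have hsub' : a • (F '' A) + b • (F '' B) ⊆ F '' C := by
      rintro _ ⟨_, ⟨_, ⟨u, hu, rfl⟩, rfl⟩, _, ⟨_, ⟨v, hv, rfl⟩, rfl⟩, rfl⟩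
      refine ⟨a • u + b • v,
        hsub (Set.add_mem_add (Set.smul_mem_smul_set hu) (Set.smul_mem_smul_set hv)), ?_⟩
      rw [hadd, hlin, hlin]
    have key := PL_prod ha hb hab (fun {A B C} hA hB hC h => ih ha hb hab hA hB hC h)
      (hA.image hFcont) (hB.image hFcont)
      ((himg C) ▸ (hC.preimage e.symm.measurable)) hsub'
    rwa [hvol A, hvol B, hvol C] at key

lemma PL_euclid {n : ℕ} {a b : ℝ} (ha : 0 < a) (hb : 0 < b) (hab : a + b = 1)
    {A B C : Set (EuclideanSpace ℝ (Fin n))} (hA : IsCompact A) (hB : IsCompact B)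
    (hC : MeasurableSet C) (hsub : a • A + b • B ⊆ C) :
    volume A ^ a * volume B ^ b ≤ volume C := by
  set F : EuclideanSpace ℝ (Fin n) → (Fin n → ℝ) := fun x i => x i with hF
  set e := (MeasurableEquiv.toLp 2 (Fin n → ℝ)).symm with he
  have hFe : ∀ x, F x = e x := fun x => rfl
  have hmp : MeasurePreserving e volume volume :=
    EuclideanSpace.volume_preserving_symm_measurableEquiv_toLp (Fin n)
  have hFcont : Continuous F := (EuclideanSpace.equiv (Fin n) ℝ).continuous
  have himg : ∀ S : Set (EuclideanSpace ℝ (Fin n)), F '' S = e.symm ⁻¹' S := by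
    intro S
    rw [Set.image_congr' hFe]
    exact e.image_eq_preimage_symm S
  have hvol : ∀ S : Set (EuclideanSpace ℝ (Fin n)), volume (F '' S) = volume S := by
    intro S
    rw [himg]
    exact (hmp.symm e).measure_preimage_equiv S
  have hsub' : a • (F '' A) + b • (F '' B) ⊆ F '' C := by
    rintro _ ⟨_, ⟨_, ⟨u, hu, rfl⟩, rfl⟩, _, ⟨_, ⟨v, hv, rfl⟩, rfl⟩, rfl⟩
    exact ⟨a • u + b • v,
      hsub (Set.add_mem_add (Set.smul_mem_smul_set hu) (Set.smul_mem_smul_set hv)), rfl⟩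
  have key := PL_pi n ha hb hab (hA.image hFcont) (hB.image hFcont)
    ((himg C) ▸ (hC.preimage e.symm.measurable)) hsub'
  rwa [hvol A, hvol B, hvol C] at key

theorem theta_convolution_body_convex {n : ℕ} (hn : 0 < n)
    (K L : Set (EuclideanSpace ℝ (Fin n)))
    (hK : Convex ℝ K) (hKc : IsCompact K) (hKi : (interior K).Nonempty)
    (hL : Convex ℝ L) (hLc : IsCompact L) (hLi : (interior L).Nonempty)
    (θ : ℝ) (hθ : θ ∈ Set.Icc (0:ℝ) 1) :
    Convex ℝ {x ∈ K + L |
      ENNReal.ofReal θ *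
          (⨆ z : EuclideanSpace ℝ (Fin n), volume (K ∩ ((fun y => z - y) '' L))) ≤
        volume (K ∩ ((fun y => x - y) '' L))} := by
  set M := ⨆ z : EuclideanSpace ℝ (Fin n), volume (K ∩ ((fun y => z - y) '' L)) with hM
  have hMtop : M ≠ ⊤ :=
    (lt_of_le_of_lt (iSup_le fun z => measure_mono Set.inter_subset_left)
      hKc.measure_lt_top).ne
  -- the key fact, for arbitrary convex combinations
  have main : ∀ x ∈ K + L, ∀ y ∈ K + L, ∀ a b : ℝ, 0 < a → 0 < b → a + b = 1 →
      ENNReal.ofReal θ * M ≤ volume (K ∩ ((fun w => x - w) '' L)) →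
      ENNReal.ofReal θ * M ≤ volume (K ∩ ((fun w => y - w) '' L)) →
      ENNReal.ofReal θ * M ≤ volume (K ∩ ((fun w => (a • x + b • y) - w) '' L)) := by
    intro x hxKL y hyKL a b ha hb hab h1 h2
    set A := K ∩ ((fun w => x - w) '' L) with hA
    set B := K ∩ ((fun w => y - w) '' L) with hB
    set C := K ∩ ((fun w => (a • x + b • y) - w) '' L) with hC
    have hAc : IsCompact A := hKc.inter (hLc.image (continuous_const.sub continuous_id))
    have hBc : IsCompact B := hKc.inter (hLc.image (continuous_const.sub continuous_id))
    have hCc : IsCompact C := hKc.inter (hLc.image (continuous_const.sub continuous_id))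
    have hsub : a • A + b • B ⊆ C := by
      rintro _ ⟨_, ⟨u, ⟨huK, ⟨l₁, hl₁, rfl⟩⟩, rfl⟩, _, ⟨v, ⟨hvK, ⟨l₂, hl₂, rfl⟩⟩, rfl⟩, rfl⟩
      refine ⟨hK huK hvK ha.le hb.le hab, ⟨a • l₁ + b • l₂, hL hl₁ hl₂ ha.le hb.le hab, ?_⟩⟩
      show (a • x + b • y) - (a • l₁ + b • l₂) = a • (x - l₁) + b • (y - l₂)
      rw [smul_sub, smul_sub]
      abel
    have hPL : volume A ^ a * volume B ^ b ≤ volume C :=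
      PL_euclid ha hb hab hAc hBc hCc.measurableSet hsub
    rcases eq_or_ne (ENNReal.ofReal θ * M) 0 with h0 | h0
    · rw [h0]; exact zero_le
    have hθMtop : ENNReal.ofReal θ * M ≠ ⊤ := ENNReal.mul_ne_top ENNReal.ofReal_ne_top hMtop
    calc ENNReal.ofReal θ * M
        = (ENNReal.ofReal θ * M) ^ a * (ENNReal.ofReal θ * M) ^ b := by
          rw [← ENNReal.rpow_add a b h0 hθMtop, hab, ENNReal.rpow_one]
      _ ≤ volume A ^ a * volume B ^ b :=
          mul_le_mul' (ENNReal.rpow_le_rpow h1 ha.le) (ENNReal.rpow_le_rpow h2 hb.le)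
      _ ≤ volume C := hPL
  intro x hx y hy a b ha hb hab
  refine ⟨(hK.add hL) hx.1 hy.1 ha hb hab, ?_⟩
  rcases ha.eq_or_lt with rfl0 | ha'
  · have hb1 : b = 1 := by linarith
    simp only [← rfl0, hb1, zero_smul, one_smul, zero_add]
    exact hy.2
  rcases hb.eq_or_lt with rfl0 | hb'
  · have ha1 : a = 1 := by linarith
    simp only [← rfl0, ha1, zero_smul, one_smul, add_zero]
    exact hx.2
  exact main x hx.1 y hy.1 a b ha' hb' hab hx.2 hy.2
end

section
/- Let K and L be convex bodies in ℝ^n with M(K,L) = max_z vol(K ∩ (z − L)) attained at z = 0 (i.e., vol(K ∩ (−L)) = M(K,L)). Let θ₁, θ₂, λ₁, λ₂ ∈ [0,1] with λ₁ + λ₂ ≤ 1, and set θ = (1 − λ₁(1 − θ₁^{1/n}) − λ₂(1 − θ₂^{1/n}))^n. Then λ₁(K +_{θ₁} L) + λ₂(K +_{θ₂} L) ⊆ K +_θ L, where K +_θ L = {x ∈ K + L : vol(K ∩ (x − L)) ≥ θ·M(K,L)}. -/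
open MeasureTheory Pointwise ENNReal

/-- The `θ`-convolution body of `K` and `L`, normalized so that the maximum of
`z ↦ vol(K ∩ (z − L))` is `vol(K ∩ (−L))`. -/
noncomputable def thetaConv {n : ℕ} (K L : Set (EuclideanSpace ℝ (Fin n))) (θ : ℝ) :
    Set (EuclideanSpace ℝ (Fin n)) :=
  {x ∈ K + L |
    ENNReal.ofReal θ * volume (K ∩ -L) ≤ volume (K ∩ ((fun y => x - y) '' L))}

/-- Weighted AM-GM in `ℝ≥0∞`. -/
lemma my_amgm {t : ℝ} (ht : 0 < t) (ht1 : t < 1) (a b : ℝ≥0∞) :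
    a ^ (1 - t) * b ^ t ≤ ENNReal.ofReal (1 - t) * a + ENNReal.ofReal t * b := by
  have h1t : 0 < 1 - t := by linarith
  rcases eq_or_ne a ∞ with rfl | ha
  · rcases eq_or_ne b 0 with rfl | hb
    · simp [ENNReal.zero_rpow_of_pos ht]
    · have : ENNReal.ofReal (1 - t) * ∞ + ENNReal.ofReal t * b = ∞ := by
        rw [ENNReal.mul_top (by simp [ENNReal.ofReal_eq_zero]; linarith)]
        simp
      simp [this]
  rcases eq_or_ne b ∞ with rfl | hb
  · rcases eq_or_ne a 0 with rfl | ha0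
    · simp [ENNReal.zero_rpow_of_pos h1t]
    · have : ENNReal.ofReal (1 - t) * a + ENNReal.ofReal t * ∞ = ∞ := by
        rw [ENNReal.mul_top (by simp [ENNReal.ofReal_eq_zero]; linarith)]
        simp
      simp [this]
  · -- both finite
    lift a to NNReal using ha
    lift b to NNReal using hb
    have hw : (1 - t).toNNReal + t.toNNReal = 1 := by
      rw [← Real.toNNReal_add (by linarith) ht.le]
      norm_num
    have key := NNReal.geom_mean_le_arith_mean2_weighted (w₁ := (1 - t).toNNReal)
      (w₂ := t.toNNReal) (p₁ := a) (p₂ := b) hw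
    have c1 : ((1 - t).toNNReal : ℝ) = 1 - t := Real.coe_toNNReal _ h1t.le
    have c2 : ((t).toNNReal : ℝ) = t := Real.coe_toNNReal _ ht.le
    rw [c1, c2] at key
    calc (a : ℝ≥0∞) ^ (1 - t) * (b : ℝ≥0∞) ^ t
        = ((a ^ (1 - t) * b ^ t : NNReal) : ℝ≥0∞) := by
          rw [ENNReal.coe_mul, ENNReal.coe_rpow_of_nonneg _ h1t.le,
            ENNReal.coe_rpow_of_nonneg _ ht.le]
      _ ≤ (((1 - t).toNNReal * a + t.toNNReal * b : NNReal) : ℝ≥0∞) := by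
          exact_mod_cast key
      _ = ENNReal.ofReal (1 - t) * a + ENNReal.ofReal t * b := by
          rw [ENNReal.coe_add, ENNReal.coe_mul, ENNReal.coe_mul,
            ENNReal.ofReal, ENNReal.ofReal]

/-- Sumset inequality on `ℝ` for nonempty compacts. -/
lemma sumset_compact {K C : Set ℝ} (hK : IsCompact K) (hC : IsCompact C)
    (hKne : K.Nonempty) (hCne : C.Nonempty) :
    volume K + volume C ≤ volume (K + C) := by
  set mK := sSup K with hmK
  set mC := sInf C with hmC
  have hmKK : mK ∈ K := hK.sSup_mem hKne
  have hmCC : mC ∈ C := hC.sInf_mem hCne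
  set X : Set ℝ := mC +ᵥ K with hX
  set Y : Set ℝ := mK +ᵥ C with hY
  have hXK : volume X = volume K := measure_vadd _ _ _
  have hYC : volume Y = volume C := measure_vadd _ _ _
  have hXsub : X ⊆ K + C := by
    rintro x ⟨k, hk, rfl⟩
    exact ⟨k, hk, mC, hmCC, by simp [vadd_eq_add, add_comm]⟩
  have hYsub : Y ⊆ K + C := by
    rintro y ⟨c, hc, rfl⟩
    exact ⟨mK, hmKK, c, hc, rfl⟩
  have hXY : X ∩ Y ⊆ {mK + mC} := by
    rintro z ⟨⟨k, hk, rfl⟩, ⟨c, hc, hzc⟩⟩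
    simp only [vadd_eq_add] at hzc ⊢
    have hkm : k ≤ mK := le_csSup hK.bddAbove hk
    have hcm : mC ≤ c := csInf_le hC.bddBelow hc
    simp only [Set.mem_singleton_iff]
    linarith
  have hYm : MeasurableSet Y := ((hC.vadd mK : IsCompact Y)).isClosed.measurableSet
  calc volume K + volume C = volume X + volume Y := by rw [hXK, hYC]
    _ = volume (X ∪ Y) + volume (X ∩ Y) := (measure_union_add_inter X hYm).symm
    _ ≤ volume (K + C) + 0 := by
        refine add_le_add (measure_mono (Set.union_subset hXsub hYsub)) ?_
        refine le_trans (measure_mono hXY) ?_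
        simp
    _ = volume (K + C) := by simp

/-- Sumset inequality on `ℝ` for nonempty measurable sets of finite measure. -/
lemma sumset_measurable {A B : Set ℝ} (hAm : MeasurableSet A) (hBm : MeasurableSet B)
    (hAne : A.Nonempty) (hBne : B.Nonempty) (hAf : volume A ≠ ∞) (hBf : volume B ≠ ∞) :
    volume A + volume B ≤ volume (A + B) := by
  refine ENNReal.le_of_forall_pos_le_add fun ε hε hfin => ?_
  have hε2 : ((ε : ℝ≥0∞) / 2) ≠ 0 := by
    simp [ENNReal.div_eq_zero_iff, (by exact_mod_cast hε.ne' : (ε:ℝ≥0∞) ≠ 0)]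
  obtain ⟨K, hKA, hKc, hKv⟩ := hAm.exists_isCompact_lt_add hAf hε2
  obtain ⟨C, hCB, hCc, hCv⟩ := hBm.exists_isCompact_lt_add hBf hε2
  obtain ⟨a, ha⟩ := hAne
  obtain ⟨b, hb⟩ := hBne
  set K' := K ∪ {a} with hK'
  set C' := C ∪ {b} with hC'
  have hK'c : IsCompact K' := hKc.union isCompact_singleton
  have hC'c : IsCompact C' := hCc.union isCompact_singleton
  have hK'A : K' ⊆ A := Set.union_subset hKA (by simpa using ha)
  have hC'B : C' ⊆ B := Set.union_subset hCB (by simpa using hb)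
  have key := sumset_compact hK'c hC'c ⟨a, Or.inr rfl⟩ ⟨b, Or.inr rfl⟩
  have h1 : volume A ≤ volume K' + ε/2 :=
    le_trans hKv.le (add_le_add (measure_mono Set.subset_union_left) le_rfl)
  have h2 : volume B ≤ volume C' + ε/2 :=
    le_trans hCv.le (add_le_add (measure_mono Set.subset_union_left) le_rfl)
  calc volume A + volume B ≤ (volume K' + ε/2) + (volume C' + ε/2) := add_le_add h1 h2
    _ = (volume K' + volume C') + (ε/2 + ε/2) := by ring
    _ ≤ volume (K' + C') + ε := by
        rw [ENNReal.add_halves]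
        exact add_le_add key le_rfl
    _ ≤ volume (A + B) + ε :=
        add_le_add (measure_mono (Set.add_subset_add hK'A hC'B)) le_rfl

lemma sub_lemma (φ : ℝ → ℝ≥0∞) (hφ : Measurable φ) {c : ℝ} (hc : 0 < c) :
    ∫⁻ u in Set.Ioo 0 c, φ u = ENNReal.ofReal c * ∫⁻ s in Set.Ioo (0:ℝ) 1, φ (c * s) := by
  have hmul : Measurable fun s : ℝ => c * s := measurable_const_mul c
  have hpre : (fun s : ℝ => c * s) ⁻¹' (Set.Ioo 0 c) = Set.Ioo (0:ℝ) 1 := by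
    ext s
    simp only [Set.mem_preimage, Set.mem_Ioo]
    constructor
    · rintro ⟨h1, h2⟩
      constructor
      · by_contra hs
        push_neg at hs
        nlinarith
      · nlinarith
    · rintro ⟨h1, h2⟩
      exact ⟨by positivity, by nlinarith⟩
  have hmap : Measure.map (fun s : ℝ => c * s) (volume.restrict (Set.Ioo (0:ℝ) 1))
      = ENNReal.ofReal c⁻¹ • volume.restrict (Set.Ioo 0 c) := by
    rw [← hpre, ← Measure.restrict_map hmul measurableSet_Ioo,
      Real.map_volume_mul_left hc.ne', abs_of_pos (inv_pos.mpr hc),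
      Measure.restrict_smul]
  have : ENNReal.ofReal c • Measure.map (fun s : ℝ => c * s) (volume.restrict (Set.Ioo (0:ℝ) 1))
      = volume.restrict (Set.Ioo 0 c) := by
    rw [hmap, smul_smul, ← ENNReal.ofReal_mul hc.le, mul_inv_cancel₀ hc.ne']
    simp
  calc ∫⁻ u in Set.Ioo 0 c, φ u
      = ∫⁻ u, φ u ∂(ENNReal.ofReal c • Measure.map (fun s : ℝ => c * s) (volume.restrict (Set.Ioo (0:ℝ) 1))) := by
        rw [this]
    _ = ENNReal.ofReal c * ∫⁻ u, φ u ∂(Measure.map (fun s : ℝ => c * s) (volume.restrict (Set.Ioo (0:ℝ) 1))) := by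
        rw [lintegral_smul_measure, smul_eq_mul]
    _ = ENNReal.ofReal c * ∫⁻ s in Set.Ioo (0:ℝ) 1, φ (c * s) := by
        rw [lintegral_map hφ hmul]

lemma layercake_ennreal (f : ℝ → ℝ≥0∞) (hf : Measurable f) (hfin : ∀ x, f x ≠ ∞) :
    ∫⁻ x, f x = ∫⁻ u in Set.Ioi (0:ℝ), volume {x | ENNReal.ofReal u < f x} := by
  have h1 : ∀ x, f x = ENNReal.ofReal ((f x).toReal) := fun x => (ENNReal.ofReal_toReal (hfin x)).symm
  calc ∫⁻ x, f x = ∫⁻ x, ENNReal.ofReal ((f x).toReal) := by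
        exact lintegral_congr fun x => h1 x
    _ = ∫⁻ u in Set.Ioi (0:ℝ), volume {x | u < (f x).toReal} := by
        exact lintegral_eq_lintegral_meas_lt volume (Filter.Eventually.of_forall fun x => ENNReal.toReal_nonneg)
          (hf.ennreal_toReal).aemeasurable
    _ = ∫⁻ u in Set.Ioi (0:ℝ), volume {x | ENNReal.ofReal u < f x} := by
        refine setLIntegral_congr_fun measurableSet_Ioi (fun u hu => ?_)
        congr 1
        ext x
        simp only [Set.mem_setOf_eq]
        rw [ENNReal.ofReal_lt_iff_lt_toReal hu.le (hfin x)]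

lemma dim1_core {t : ℝ} (ht : 0 < t) (ht1 : t < 1) (f g h : ℝ → ℝ≥0∞)
    (hf : Measurable f) (hg : Measurable g) (hh : Measurable h)
    {N : ℝ≥0∞} (hN : N ≠ ∞) (hfN : ∀ x, f x ≤ N) (hgN : ∀ x, g x ≤ N)
    (hF : ∫⁻ x, f x ≠ ∞) (hG : ∫⁻ x, g x ≠ ∞)
    (hyp : ∀ x y, f x ^ (1-t) * g y ^ t ≤ h ((1-t)*x + t*y)) :
    (∫⁻ x, f x) ^ (1-t) * (∫⁻ x, g x) ^ t ≤ ∫⁻ x, h x := by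
  have h1t : 0 < 1 - t := by linarith
  set F := ∫⁻ x, f x with hFdef
  set G := ∫⁻ x, g x with hGdef
  rcases eq_or_ne F 0 with hF0 | hF0
  · rw [hF0, ENNReal.zero_rpow_of_pos h1t, zero_mul]; exact zero_le
  rcases eq_or_ne G 0 with hG0 | hG0
  · rw [hG0, ENNReal.zero_rpow_of_pos ht, mul_zero]; exact zero_le
  set Sf := ⨆ x, f x with hSf
  set Sg := ⨆ x, g x with hSg
  have hSfN : Sf ≤ N := iSup_le hfN
  have hSgN : Sg ≤ N := iSup_le hgN
  have hSftop : Sf ≠ ∞ := (lt_of_le_of_lt hSfN hN.lt_top).ne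
  have hSgtop : Sg ≠ ∞ := (lt_of_le_of_lt hSgN hN.lt_top).ne
  have hSf0 : Sf ≠ 0 := by
    intro h0
    apply hF0
    have : f = 0 := funext fun x => le_antisymm (le_trans (le_iSup f x) h0.le) (zero_le)
    rw [hFdef, this]; simp
  have hSg0 : Sg ≠ 0 := by
    intro h0
    apply hG0
    have : g = 0 := funext fun x => le_antisymm (le_trans (le_iSup g x) h0.le) (zero_le)
    rw [hGdef, this]; simp
  set c := Sf ^ (1-t) * Sg ^ t with hc
  have hc0 : c ≠ 0 := by
    apply mul_ne_zero
    · exact (ENNReal.rpow_pos (pos_iff_ne_zero.mpr hSf0) hSftop).ne'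
    · exact (ENNReal.rpow_pos (pos_iff_ne_zero.mpr hSg0) hSgtop).ne'
  have hctop : c ≠ ∞ := by
    apply ENNReal.mul_ne_top
    · exact ENNReal.rpow_ne_top_of_nonneg h1t.le hSftop
    · exact ENNReal.rpow_ne_top_of_nonneg ht.le hSgtop
  set cr := c.toReal with hcr
  have hcrpos : 0 < cr := ENNReal.toReal_pos hc0 hctop
  have hcofReal : ENNReal.ofReal cr = c := ENNReal.ofReal_toReal hctop
  set A : ℝ → Set ℝ := fun s => {x | Sf * ENNReal.ofReal s < f x} with hA
  set B : ℝ → Set ℝ := fun s => {x | Sg * ENNReal.ofReal s < g x} with hB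
  have hAmeas : ∀ s, MeasurableSet (A s) := fun s => measurableSet_lt measurable_const hf
  have hBmeas : ∀ s, MeasurableSet (B s) := fun s => measurableSet_lt measurable_const hg
  have hAanti : Antitone fun s => volume (A s) := by
    intro s1 s2 h12
    apply measure_mono
    intro x hx
    exact lt_of_le_of_lt (mul_le_mul_right (ENNReal.ofReal_le_ofReal h12) _) hx
  have hBanti : Antitone fun s => volume (B s) := by
    intro s1 s2 h12
    apply measure_mono
    intro x hx
    exact lt_of_le_of_lt (mul_le_mul_right (ENNReal.ofReal_le_ofReal h12) _) hx
  -- nonemptiness and finiteness of level sets for s ∈ (0,1)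
  have hAne : ∀ s : ℝ, s < 1 → (A s).Nonempty := by
    intro s hs1
    have : Sf * ENNReal.ofReal s < Sf := by
      calc Sf * ENNReal.ofReal s < Sf * 1 :=
        ENNReal.mul_lt_mul_iff_right hSf0 hSftop |>.mpr (ENNReal.ofReal_lt_one.mpr hs1)
      _ = Sf := mul_one Sf
    obtain ⟨x, hx⟩ := lt_iSup_iff.mp this
    exact ⟨x, hx⟩
  have hBne : ∀ s : ℝ, s < 1 → (B s).Nonempty := by
    intro s hs1
    have : Sg * ENNReal.ofReal s < Sg := by
      calc Sg * ENNReal.ofReal s < Sg * 1 :=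
        ENNReal.mul_lt_mul_iff_right hSg0 hSgtop |>.mpr (ENNReal.ofReal_lt_one.mpr hs1)
      _ = Sg := mul_one Sg
    obtain ⟨x, hx⟩ := lt_iSup_iff.mp this
    exact ⟨x, hx⟩
  have hAfin : ∀ s : ℝ, 0 < s → volume (A s) ≠ ∞ := by
    intro s hs0
    have hne : Sf * ENNReal.ofReal s ≠ 0 :=
      mul_ne_zero hSf0 (by simp [ENNReal.ofReal_eq_zero]; linarith)
    have htop : Sf * ENNReal.ofReal s ≠ ∞ := ENNReal.mul_ne_top hSftop ENNReal.ofReal_ne_top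
    have := meas_ge_le_lintegral_div (μ := volume) hf.aemeasurable hne htop
    have hsub : A s ⊆ {x | Sf * ENNReal.ofReal s ≤ f x} := by
      intro x hx
      show Sf * ENNReal.ofReal s ≤ f x
      exact le_of_lt hx
    exact ((measure_mono hsub).trans this |>.trans_lt (ENNReal.div_lt_top hF hne)).ne
  have hBfin : ∀ s : ℝ, 0 < s → volume (B s) ≠ ∞ := by
    intro s hs0
    have hne : Sg * ENNReal.ofReal s ≠ 0 :=
      mul_ne_zero hSg0 (by simp [ENNReal.ofReal_eq_zero]; linarith)
    have htop : Sg * ENNReal.ofReal s ≠ ∞ := ENNReal.mul_ne_top hSgtop ENNReal.ofReal_ne_top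
    have := meas_ge_le_lintegral_div (μ := volume) hg.aemeasurable hne htop
    have hsub : B s ⊆ {x | Sg * ENNReal.ofReal s ≤ g x} := by
      intro x hx
      show Sg * ENNReal.ofReal s ≤ g x
      exact le_of_lt hx
    exact ((measure_mono hsub).trans this |>.trans_lt (ENNReal.div_lt_top hG hne)).ne
  -- the key pointwise estimate
  have key : ∀ s ∈ Set.Ioo (0:ℝ) 1,
      ENNReal.ofReal (1-t) * volume (A s) + ENNReal.ofReal t * volume (B s)
        ≤ volume {x | c * ENNReal.ofReal s < h x} := by
    rintro s ⟨hs0, hs1⟩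
    have hofs0 : ENNReal.ofReal s ≠ 0 := by simp [ENNReal.ofReal_eq_zero]; linarith
    have hincl : (1-t) • A s + t • B s ⊆ {x | c * ENNReal.ofReal s < h x} := by
      rintro z ⟨u, ⟨x, hx, rfl⟩, v, ⟨y, hy, rfl⟩, rfl⟩
      simp only [smul_eq_mul, Set.mem_setOf_eq]
      have heq : c * ENNReal.ofReal s
          = (Sf * ENNReal.ofReal s) ^ (1-t) * (Sg * ENNReal.ofReal s) ^ t := by
        rw [ENNReal.mul_rpow_of_nonneg _ _ h1t.le, ENNReal.mul_rpow_of_nonneg _ _ ht.le]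
        rw [hc]
        rw [show Sf ^ (1-t) * ENNReal.ofReal s ^ (1-t) * (Sg ^ t * ENNReal.ofReal s ^ t)
          = (Sf ^ (1-t) * Sg ^ t) * (ENNReal.ofReal s ^ (1-t) * ENNReal.ofReal s ^ t) by ring]
        rw [← ENNReal.rpow_add _ _ hofs0 ENNReal.ofReal_ne_top]
        norm_num
      rw [heq]
      refine lt_of_lt_of_le ?_ (hyp x y)
      exact ENNReal.mul_lt_mul (ENNReal.rpow_lt_rpow hx h1t) (ENNReal.rpow_lt_rpow hy ht)
    have hsmulA : volume ((1-t) • A s) = ENNReal.ofReal (1-t) * volume (A s) := by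
      rw [Measure.addHaar_smul]
      congr 1
      rw [Module.finrank_self, pow_one, abs_of_pos h1t]
    have hsmulB : volume (t • B s) = ENNReal.ofReal t * volume (B s) := by
      rw [Measure.addHaar_smul]
      congr 1
      rw [Module.finrank_self, pow_one, abs_of_pos ht]
    calc ENNReal.ofReal (1-t) * volume (A s) + ENNReal.ofReal t * volume (B s)
        = volume ((1-t) • A s) + volume (t • B s) := by rw [hsmulA, hsmulB]
      _ ≤ volume ((1-t) • A s + t • B s) := by
          refine sumset_measurable ((hAmeas s).const_smul₀ (1-t)) ((hBmeas s).const_smul₀ t)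
            ((hAne s hs1).smul_set) ((hBne s hs1).smul_set) ?_ ?_
          · rw [hsmulA]; exact ENNReal.mul_ne_top ENNReal.ofReal_ne_top (hAfin s hs0)
          · rw [hsmulB]; exact ENNReal.mul_ne_top ENNReal.ofReal_ne_top (hBfin s hs0)
      _ ≤ volume {x | c * ENNReal.ofReal s < h x} := measure_mono hincl
  -- measurability of the various level-volume functions
  have hφmeas : Measurable fun u : ℝ => volume {x | ENNReal.ofReal u < h x} := by
    apply Antitone.measurable
    intro u1 u2 h12
    exact measure_mono fun x hx => lt_of_le_of_lt (ENNReal.ofReal_le_ofReal h12) hx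
  have hψmeas : Measurable fun s : ℝ => volume {x | c * ENNReal.ofReal s < h x} := by
    apply Antitone.measurable
    intro u1 u2 h12
    exact measure_mono fun x hx =>
      lt_of_le_of_lt (mul_le_mul_right (ENNReal.ofReal_le_ofReal h12) _) hx
  have hAv : Measurable fun s : ℝ => volume (A s) := hAanti.measurable
  have hBv : Measurable fun s : ℝ => volume (B s) := hBanti.measurable
  set h' : ℝ → ℝ≥0∞ := fun x => min (h x) c with hh'def
  have hh' : Measurable h' := hh.min measurable_const
  have h'fin : ∀ x, h' x ≠ ∞ := fun x => ((min_le_right _ _).trans_lt hctop.lt_top).ne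
  -- step 1 : restricted layer-cake lower bound for h
  have step1 : ∫⁻ u in Set.Ioo 0 cr, volume {x | ENNReal.ofReal u < h x} ≤ ∫⁻ x, h x := by
    calc ∫⁻ u in Set.Ioo 0 cr, volume {x | ENNReal.ofReal u < h x}
        = ∫⁻ u in Set.Ioo 0 cr, volume {x | ENNReal.ofReal u < h' x} := by
          refine setLIntegral_congr_fun measurableSet_Ioo
            (fun u hu => ?_)
          congr 1
          ext x
          simp only [Set.mem_setOf_eq, hh'def, lt_min_iff]
          have : ENNReal.ofReal u < c := by
            rw [← hcofReal]
            exact (ENNReal.ofReal_lt_ofReal_iff hcrpos).mpr hu.2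
          tauto
      _ ≤ ∫⁻ u in Set.Ioi 0, volume {x | ENNReal.ofReal u < h' x} :=
          lintegral_mono_set Set.Ioo_subset_Ioi_self
      _ = ∫⁻ x, h' x := (layercake_ennreal h' hh' h'fin).symm
      _ ≤ ∫⁻ x, h x := lintegral_mono fun x => min_le_left _ _
  -- step 2 : substitution for h
  have step2 : ENNReal.ofReal cr * ∫⁻ s in Set.Ioo (0:ℝ) 1, volume {x | c * ENNReal.ofReal s < h x}
      ≤ ∫⁻ x, h x := by
    refine le_trans (le_of_eq ?_) step1
    rw [sub_lemma _ hφmeas hcrpos]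
    congr 1
    refine setLIntegral_congr_fun measurableSet_Ioo
      (fun s hs => ?_)
    congr 1
    ext x
    simp only [Set.mem_setOf_eq]
    rw [ENNReal.ofReal_mul hcrpos.le, hcofReal]
  -- step 3: pointwise bound integrated
  have step3 : ENNReal.ofReal (1-t) * (∫⁻ s in Set.Ioo (0:ℝ) 1, volume (A s))
      + ENNReal.ofReal t * (∫⁻ s in Set.Ioo (0:ℝ) 1, volume (B s))
      ≤ ∫⁻ s in Set.Ioo (0:ℝ) 1, volume {x | c * ENNReal.ofReal s < h x} := by
    have := setLIntegral_mono (μ := volume) (s := Set.Ioo (0:ℝ) 1) hψmeas key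
    refine le_trans (le_of_eq ?_) this
    rw [lintegral_add_left (hAv.const_mul _), lintegral_const_mul _ hAv,
      lintegral_const_mul _ hBv]
  -- identification of the A- and B-integrals
  have claimF : F = Sf * ∫⁻ s in Set.Ioo (0:ℝ) 1, volume (A s) := by
    have layerF : F = ∫⁻ u in Set.Ioi (0:ℝ), volume {x | ENNReal.ofReal u < f x} :=
      layercake_ennreal f hf (fun x => ((hfN x).trans_lt hN.lt_top).ne)
    set Sfr := Sf.toReal with hSfr
    have hSfrpos : 0 < Sfr := ENNReal.toReal_pos hSf0 hSftop
    have hSfofReal : ENNReal.ofReal Sfr = Sf := ENNReal.ofReal_toReal hSftop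
    have hφf : Measurable fun u : ℝ => volume {x | ENNReal.ofReal u < f x} := by
      apply Antitone.measurable
      intro u1 u2 h12
      exact measure_mono fun x hx => lt_of_le_of_lt (ENNReal.ofReal_le_ofReal h12) hx
    have hsplit : (Set.Ioi (0:ℝ)) = Set.Ioo 0 Sfr ∪ Set.Ici Sfr := by
      ext u
      simp only [Set.mem_Ioi, Set.mem_union, Set.mem_Ioo, Set.mem_Ici]
      constructor
      · intro hu
        rcases lt_or_ge u Sfr with h' | h'
        · exact Or.inl ⟨hu, h'⟩
        · exact Or.inr h'
      · rintro (⟨h1, _⟩ | h1)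
        · exact h1
        · linarith
    have hIci : ∫⁻ u in Set.Ici Sfr, volume {x | ENNReal.ofReal u < f x} = 0 := by
      have hz : ∀ u ∈ Set.Ici Sfr, volume {x | ENNReal.ofReal u < f x} = (fun _ => (0:ℝ≥0∞)) u := by
        intro u hu
        convert measure_empty (μ := (volume : Measure ℝ))
        ext x
        simp only [Set.mem_setOf_eq, Set.mem_empty_iff_false, iff_false, not_lt]
        calc f x ≤ Sf := le_iSup f x
          _ = ENNReal.ofReal Sfr := hSfofReal.symm
          _ ≤ ENNReal.ofReal u := ENNReal.ofReal_le_ofReal hu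
      rw [setLIntegral_congr_fun measurableSet_Ici hz]
      simp
    have hdisj : Disjoint (Set.Ioo (0:ℝ) Sfr) (Set.Ici Sfr) := by
      rw [Set.disjoint_left]
      rintro u ⟨_, h2⟩ h3
      simp only [Set.mem_Ici] at h3
      linarith
    calc F = ∫⁻ u in Set.Ioo 0 Sfr ∪ Set.Ici Sfr, volume {x | ENNReal.ofReal u < f x} := by
          rw [layerF, hsplit]
      _ = ∫⁻ u in Set.Ioo 0 Sfr, volume {x | ENNReal.ofReal u < f x} := by
          rw [lintegral_union measurableSet_Ici hdisj, hIci, add_zero]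
      _ = ENNReal.ofReal Sfr * ∫⁻ s in Set.Ioo (0:ℝ) 1, volume {x | ENNReal.ofReal (Sfr * s) < f x} := by
          rw [sub_lemma _ hφf hSfrpos]
      _ = Sf * ∫⁻ s in Set.Ioo (0:ℝ) 1, volume (A s) := by
          rw [hSfofReal]
          congr 1
          refine setLIntegral_congr_fun measurableSet_Ioo
            (fun s hs => ?_)
          congr 1
          ext x
          simp only [Set.mem_setOf_eq, hA]
          rw [ENNReal.ofReal_mul hSfrpos.le, hSfofReal]
  have claimG : G = Sg * ∫⁻ s in Set.Ioo (0:ℝ) 1, volume (B s) := by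
    have layerG : G = ∫⁻ u in Set.Ioi (0:ℝ), volume {x | ENNReal.ofReal u < g x} :=
      layercake_ennreal g hg (fun x => ((hgN x).trans_lt hN.lt_top).ne)
    set Sgr := Sg.toReal with hSgr
    have hSgrpos : 0 < Sgr := ENNReal.toReal_pos hSg0 hSgtop
    have hSgofReal : ENNReal.ofReal Sgr = Sg := ENNReal.ofReal_toReal hSgtop
    have hφg : Measurable fun u : ℝ => volume {x | ENNReal.ofReal u < g x} := by
      apply Antitone.measurable
      intro u1 u2 h12
      exact measure_mono fun x hx => lt_of_le_of_lt (ENNReal.ofReal_le_ofReal h12) hx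
    have hsplit : (Set.Ioi (0:ℝ)) = Set.Ioo 0 Sgr ∪ Set.Ici Sgr := by
      ext u
      simp only [Set.mem_Ioi, Set.mem_union, Set.mem_Ioo, Set.mem_Ici]
      constructor
      · intro hu
        rcases lt_or_ge u Sgr with h' | h'
        · exact Or.inl ⟨hu, h'⟩
        · exact Or.inr h'
      · rintro (⟨h1, _⟩ | h1)
        · exact h1
        · linarith
    have hIci : ∫⁻ u in Set.Ici Sgr, volume {x | ENNReal.ofReal u < g x} = 0 := by
      have hz : ∀ u ∈ Set.Ici Sgr, volume {x | ENNReal.ofReal u < g x} = (fun _ => (0:ℝ≥0∞)) u := by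
        intro u hu
        convert measure_empty (μ := (volume : Measure ℝ))
        ext x
        simp only [Set.mem_setOf_eq, Set.mem_empty_iff_false, iff_false, not_lt]
        calc g x ≤ Sg := le_iSup g x
          _ = ENNReal.ofReal Sgr := hSgofReal.symm
          _ ≤ ENNReal.ofReal u := ENNReal.ofReal_le_ofReal hu
      rw [setLIntegral_congr_fun measurableSet_Ici hz]
      simp
    have hdisj : Disjoint (Set.Ioo (0:ℝ) Sgr) (Set.Ici Sgr) := by
      rw [Set.disjoint_left]
      rintro u ⟨_, h2⟩ h3
      simp only [Set.mem_Ici] at h3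
      linarith
    calc G = ∫⁻ u in Set.Ioo 0 Sgr ∪ Set.Ici Sgr, volume {x | ENNReal.ofReal u < g x} := by
          rw [layerG, hsplit]
      _ = ∫⁻ u in Set.Ioo 0 Sgr, volume {x | ENNReal.ofReal u < g x} := by
          rw [lintegral_union measurableSet_Ici hdisj, hIci, add_zero]
      _ = ENNReal.ofReal Sgr * ∫⁻ s in Set.Ioo (0:ℝ) 1, volume {x | ENNReal.ofReal (Sgr * s) < g x} := by
          rw [sub_lemma _ hφg hSgrpos]
      _ = Sg * ∫⁻ s in Set.Ioo (0:ℝ) 1, volume (B s) := by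
          rw [hSgofReal]
          congr 1
          refine setLIntegral_congr_fun measurableSet_Ioo
            (fun s hs => ?_)
          congr 1
          ext x
          simp only [Set.mem_setOf_eq, hB]
          rw [ENNReal.ofReal_mul hSgrpos.le, hSgofReal]
  set IA := ∫⁻ s in Set.Ioo (0:ℝ) 1, volume (A s) with hIA
  set IB := ∫⁻ s in Set.Ioo (0:ℝ) 1, volume (B s) with hIB
  calc F ^ (1-t) * G ^ t = (Sf * IA) ^ (1-t) * (Sg * IB) ^ t := by rw [claimF, claimG]
    _ = c * (IA ^ (1-t) * IB ^ t) := by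
        rw [ENNReal.mul_rpow_of_nonneg _ _ h1t.le, ENNReal.mul_rpow_of_nonneg _ _ ht.le, hc]
        ring
    _ ≤ c * (ENNReal.ofReal (1-t) * IA + ENNReal.ofReal t * IB) :=
        mul_le_mul_right (my_amgm ht ht1 IA IB) c
    _ ≤ c * ∫⁻ s in Set.Ioo (0:ℝ) 1, volume {x | c * ENNReal.ofReal s < h x} :=
        mul_le_mul_right step3 c
    _ = ENNReal.ofReal cr * ∫⁻ s in Set.Ioo (0:ℝ) 1, volume {x | c * ENNReal.ofReal s < h x} := by
        rw [hcofReal]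
    _ ≤ ∫⁻ x, h x := step2

lemma rpow_iSup_nat {p : ℝ} (hp : 0 < p) (a : ℕ → ℝ≥0∞) :
    (⨆ n, a n) ^ p = ⨆ n, (a n) ^ p := by
  refine le_antisymm ?_ (iSup_le fun n => ENNReal.rpow_le_rpow (le_iSup a n) hp.le)
  have h1 : (⨆ n, a n) ≤ (⨆ n, (a n) ^ p) ^ p⁻¹ := by
    refine iSup_le fun n => ?_
    rw [← ENNReal.rpow_rpow_inv hp.ne' (a n)]
    exact ENNReal.rpow_le_rpow (le_iSup (fun n => (a n)^p) n) (inv_pos.mpr hp).le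
  calc (⨆ n, a n) ^ p ≤ ((⨆ n, (a n) ^ p) ^ p⁻¹) ^ p := ENNReal.rpow_le_rpow h1 hp.le
    _ = ⨆ n, (a n) ^ p := ENNReal.rpow_inv_rpow hp.ne' _

/-- One-dimensional Prékopa–Leindler inequality. -/
lemma dim1 {t : ℝ} (ht : 0 < t) (ht1 : t < 1) (f g h : ℝ → ℝ≥0∞)
    (hf : Measurable f) (hg : Measurable g) (hh : Measurable h)
    (hyp : ∀ x y, f x ^ (1-t) * g y ^ t ≤ h ((1-t)*x + t*y)) :
    (∫⁻ x, f x) ^ (1-t) * (∫⁻ x, g x) ^ t ≤ ∫⁻ x, h x := by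
  have h1t : 0 < 1 - t := by linarith
  classical
  set fc : ℕ → ℝ → ℝ≥0∞ :=
    fun N x => (Set.Icc (-(N:ℝ)) N).indicator (fun y => min (f y) N) x with hfc
  set gc : ℕ → ℝ → ℝ≥0∞ :=
    fun N x => (Set.Icc (-(N:ℝ)) N).indicator (fun y => min (g y) N) x with hgc
  have hle : ∀ (φ : ℝ → ℝ≥0∞) (N : ℕ) (x : ℝ),
      (Set.Icc (-(N:ℝ)) N).indicator (fun y => min (φ y) N) x ≤ φ x := by
    intro φ N x
    by_cases hx : x ∈ Set.Icc (-(N:ℝ)) N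
    · rw [Set.indicator_of_mem hx]; exact min_le_left _ _
    · rw [Set.indicator_of_notMem hx]; exact zero_le
  have hbd : ∀ (φ : ℝ → ℝ≥0∞) (N : ℕ) (x : ℝ),
      (Set.Icc (-(N:ℝ)) N).indicator (fun y => min (φ y) N) x ≤ (N : ℝ≥0∞) := by
    intro φ N x
    by_cases hx : x ∈ Set.Icc (-(N:ℝ)) N
    · rw [Set.indicator_of_mem hx]; exact min_le_right _ _
    · rw [Set.indicator_of_notMem hx]; exact zero_le
  have hmono : ∀ (φ : ℝ → ℝ≥0∞), Monotone (fun N : ℕ => fun x =>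
      (Set.Icc (-(N:ℝ)) N).indicator (fun y => min (φ y) N) x) := by
    intro φ N M hNM x
    simp only []
    by_cases hx : x ∈ Set.Icc (-(N:ℝ)) N
    · have hx' : x ∈ Set.Icc (-(M:ℝ)) M := by
        obtain ⟨h1, h2⟩ := hx
        have : (N:ℝ) ≤ M := by exact_mod_cast hNM
        exact ⟨by linarith, by linarith⟩
      rw [Set.indicator_of_mem hx, Set.indicator_of_mem hx']
      exact min_le_min le_rfl (by exact_mod_cast hNM)
    · rw [Set.indicator_of_notMem hx]
      exact zero_le
  have hsup : ∀ (φ : ℝ → ℝ≥0∞) x, (⨆ N : ℕ, (Set.Icc (-(N:ℝ)) N).indicator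
      (fun y => min (φ y) N) x) = φ x := by
    intro φ x
    refine le_antisymm (iSup_le fun N => hle φ N x) ?_
    obtain ⟨N₀, hN₀⟩ := exists_nat_ge |x|
    have hmem : ∀ n : ℕ, x ∈ Set.Icc (-((N₀ + n : ℕ):ℝ)) ((N₀ + n : ℕ):ℝ) := by
      intro n
      have h1 : |x| ≤ ((N₀ + n : ℕ):ℝ) := by
        push_cast
        have := abs_nonneg x
        have : (0:ℝ) ≤ n := Nat.cast_nonneg n
        push_cast at hN₀
        linarith [abs_nonneg x, hN₀]
      exact ⟨neg_le_of_abs_le h1, le_of_abs_le h1⟩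
    have key : ∀ n : ℕ, min (φ x) n ≤ ⨆ N : ℕ, (Set.Icc (-(N:ℝ)) N).indicator
        (fun y => min (φ y) N) x := by
      intro n
      refine le_trans ?_ (le_iSup _ (N₀ + n))
      rw [Set.indicator_of_mem (hmem n)]
      refine min_le_min le_rfl ?_
      exact_mod_cast Nat.le_add_left n N₀
    rcases eq_or_ne (φ x) ∞ with hφx | hφx
    · have : ∀ n : ℕ, (n:ℝ≥0∞) ≤ ⨆ N : ℕ, (Set.Icc (-(N:ℝ)) N).indicator
          (fun y => min (φ y) N) x := by
        intro n
        refine le_trans ?_ (key n)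
        rw [hφx, min_eq_right (le_top : (n:ℝ≥0∞) ≤ ⊤)]
      rw [hφx, ← ENNReal.iSup_natCast]
      exact iSup_le this
    · obtain ⟨n, hn⟩ := ENNReal.exists_nat_gt hφx
      refine le_trans ?_ (key n)
      rw [min_eq_left hn.le]
  have hmeas : ∀ (φ : ℝ → ℝ≥0∞) (_ : Measurable φ) (N : ℕ),
      Measurable fun x => (Set.Icc (-(N:ℝ)) N).indicator (fun y => min (φ y) N) x := by
    intro φ hφ N
    exact (hφ.min measurable_const).indicator measurableSet_Icc
  have hfin : ∀ (φ : ℝ → ℝ≥0∞) (_ : Measurable φ) (N : ℕ),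
      (∫⁻ x, (Set.Icc (-(N:ℝ)) N).indicator (fun y => min (φ y) N) x) ≠ ∞ := by
    intro φ hφ N
    rw [lintegral_indicator measurableSet_Icc]
    have : (∫⁻ x in Set.Icc (-(N:ℝ)) N, min (φ x) N)
        ≤ ∫⁻ _ in Set.Icc (-(N:ℝ)) N, (N:ℝ≥0∞) :=
      setLIntegral_mono measurable_const fun x _ => min_le_right _ _
    refine (this.trans_lt ?_).ne
    rw [setLIntegral_const]
    exact ENNReal.mul_lt_top (ENNReal.natCast_ne_top N).lt_top
      (by rw [Real.volume_Icc]; exact ENNReal.ofReal_lt_top)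
  -- apply the core to each truncation
  have core : ∀ N M : ℕ, (∫⁻ x, fc N x) ^ (1-t) * (∫⁻ x, gc M x) ^ t ≤ ∫⁻ x, h x := by
    intro N M
    refine dim1_core ht ht1 (fc N) (gc M) h (hmeas f hf N) (hmeas g hg M) hh
      (N := ((max N M : ℕ) : ℝ≥0∞)) (ENNReal.natCast_ne_top _)
      (fun x => (hbd f N x).trans (by exact_mod_cast Nat.le_max_left N M))
      (fun x => (hbd g M x).trans (by exact_mod_cast Nat.le_max_right N M))
      (hfin f hf N) (hfin g hg M) ?_
    intro x y
    refine le_trans ?_ (hyp x y)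
    exact mul_le_mul' (ENNReal.rpow_le_rpow (hle f N x) h1t.le)
      (ENNReal.rpow_le_rpow (hle g M y) ht.le)
  have hFsup : (∫⁻ x, f x) = ⨆ N : ℕ, ∫⁻ x, fc N x := by
    rw [← lintegral_iSup (hmeas f hf) (hmono f)]
    exact lintegral_congr fun x => (hsup f x).symm
  have hGsup : (∫⁻ x, g x) = ⨆ N : ℕ, ∫⁻ x, gc N x := by
    rw [← lintegral_iSup (hmeas g hg) (hmono g)]
    exact lintegral_congr fun x => (hsup g x).symm
  rw [hFsup, hGsup, rpow_iSup_nat h1t, rpow_iSup_nat ht, ENNReal.iSup_mul]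
  refine iSup_le fun N => ?_
  rw [ENNReal.mul_iSup]
  exact iSup_le fun M => core N M

lemma pl_pi : ∀ (n : ℕ) {t : ℝ}, 0 < t → t < 1 → ∀ (f g h : (Fin n → ℝ) → ℝ≥0∞),
    Measurable f → Measurable g → Measurable h →
    (∀ x y, f x ^ (1-t) * g y ^ t ≤ h ((1-t) • x + t • y)) →
    (∫⁻ x, f x) ^ (1-t) * (∫⁻ x, g x) ^ t ≤ ∫⁻ x, h x := by
  intro n
  induction n with
  | zero =>
    intro t ht ht1 f g h hf hg hh hyp
    have h0 : ∀ x : Fin 0 → ℝ, x = default := fun x => Subsingleton.elim x default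
    have key := hyp default default
    rw [show ((1-t) • (default : Fin 0 → ℝ) + t • default) = default from h0 _] at key
    rw [lintegral_unique, lintegral_unique, lintegral_unique]
    have huniv : (volume : Measure (Fin 0 → ℝ)) Set.univ = 1 := by
      rw [volume_pi, Measure.pi_univ]
      simp
    rw [huniv, mul_one, mul_one, mul_one]
    convert key using 4 <;> exact Subsingleton.elim _ _
  | succ n ih =>
    intro t ht ht1 f g h hf hg hh hyp
    have h1t : 0 < 1 - t := by linarith
    set e := MeasurableEquiv.piFinSuccAbove (fun _ : Fin (n+1) => ℝ) 0 with he
    have hmp : MeasurePreserving e volume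
        ((volume : Measure ℝ).prod (volume : Measure (Fin n → ℝ))) := by
      have := measurePreserving_piFinSuccAbove (fun _ : Fin (n+1) => (volume : Measure ℝ)) 0
      rw [volume_pi, show (volume : Measure (Fin n → ℝ)) = Measure.pi fun _ => volume from volume_pi]
      exact this
    have hsymm_lin : ∀ (a b : ℝ × (Fin n → ℝ)),
        e.symm ((1-t) • a + t • b) = (1-t) • e.symm a + t • e.symm b := by
      intro a b
      funext i
      induction i using Fin.cases with
      | zero =>
        simp [he, MeasurableEquiv.piFinSuccAbove, Fin.insertNth_apply_same,
          Pi.add_apply, Pi.smul_apply, smul_eq_mul]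
      | succ j =>
        simp [he, MeasurableEquiv.piFinSuccAbove, Fin.insertNth_apply_succAbove,
          Fin.zero_succAbove, Pi.add_apply, Pi.smul_apply, smul_eq_mul]
    set F : ℝ × (Fin n → ℝ) → ℝ≥0∞ := fun p => f (e.symm p) with hFdef
    set G : ℝ × (Fin n → ℝ) → ℝ≥0∞ := fun p => g (e.symm p) with hGdef
    set H : ℝ × (Fin n → ℝ) → ℝ≥0∞ := fun p => h (e.symm p) with hHdef
    have hFm : Measurable F := hf.comp e.symm.measurable
    have hGm : Measurable G := hg.comp e.symm.measurable
    have hHm : Measurable H := hh.comp e.symm.measurable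
    have hyp' : ∀ x y : ℝ × (Fin n → ℝ),
        F x ^ (1-t) * G y ^ t ≤ H ((1-t) • x + t • y) := by
      intro x y
      show f (e.symm x) ^ (1-t) * g (e.symm y) ^ t ≤ h (e.symm ((1-t) • x + t • y))
      rw [hsymm_lin]
      exact hyp _ _
    -- sections
    have sect : ∀ x1 y1 : ℝ,
        (∫⁻ v, F (x1, v)) ^ (1-t) * (∫⁻ v, G (y1, v)) ^ t
          ≤ ∫⁻ v, H ((1-t) * x1 + t * y1, v) := by
      intro x1 y1
      refine ih ht ht1 (fun v => F (x1, v)) (fun v => G (y1, v))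
        (fun v => H ((1-t) * x1 + t * y1, v))
        (hFm.comp measurable_prodMk_left) (hGm.comp measurable_prodMk_left)
        (hHm.comp measurable_prodMk_left) ?_
      intro v w
      have heq : ((1-t) • ((x1, v) : ℝ × (Fin n → ℝ)) + t • (y1, w))
          = ((1-t) * x1 + t * y1, (1-t) • v + t • w) := by
        simp [Prod.ext_iff, smul_eq_mul]
      have h2 := hyp' (x1, v) (y1, w)
      rwa [heq] at h2
    have hFi : Measurable fun x1 : ℝ => ∫⁻ v, F (x1, v) :=
      Measurable.lintegral_prod_right' hFm
    have hGi : Measurable fun x1 : ℝ => ∫⁻ v, G (x1, v) :=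
      Measurable.lintegral_prod_right' hGm
    have hHi : Measurable fun x1 : ℝ => ∫⁻ v, H (x1, v) :=
      Measurable.lintegral_prod_right' hHm
    have main := dim1 ht ht1 _ _ _ hFi hGi hHi sect
    have hFtrans : (∫⁻ x, f x) = ∫⁻ x1 : ℝ, ∫⁻ v, F (x1, v) := by
      rw [← lintegral_prod F hFm.aemeasurable]
      exact ((MeasurePreserving.symm _ hmp).lintegral_comp hf).symm
    have hGtrans : (∫⁻ x, g x) = ∫⁻ x1 : ℝ, ∫⁻ v, G (x1, v) := by
      rw [← lintegral_prod G hGm.aemeasurable]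
      exact ((MeasurePreserving.symm _ hmp).lintegral_comp hg).symm
    have hHtrans : (∫⁻ x, h x) = ∫⁻ x1 : ℝ, ∫⁻ v, H (x1, v) := by
      rw [← lintegral_prod H hHm.aemeasurable]
      exact ((MeasurePreserving.symm _ hmp).lintegral_comp hh).symm
    rw [hFtrans, hGtrans, hHtrans]
    exact main

/-- Prékopa–Leindler on Euclidean space. -/
lemma pl_euclidean (n : ℕ) {t : ℝ} (ht : 0 < t) (ht1 : t < 1)
    (f g h : EuclideanSpace ℝ (Fin n) → ℝ≥0∞)
    (hf : Measurable f) (hg : Measurable g) (hh : Measurable h)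
    (hyp : ∀ x y, f x ^ (1-t) * g y ^ t ≤ h ((1-t) • x + t • y)) :
    (∫⁻ x, f x) ^ (1-t) * (∫⁻ x, g x) ^ t ≤ ∫⁻ x, h x := by
  set e := (MeasurableEquiv.toLp 2 (Fin n → ℝ)).symm with he
  have hmp : MeasurePreserving e volume volume :=
    EuclideanSpace.volume_preserving_symm_measurableEquiv_toLp (Fin n)
  have key := pl_pi n ht ht1 (fun v => f (e.symm v)) (fun v => g (e.symm v))
    (fun v => h (e.symm v)) (hf.comp e.symm.measurable) (hg.comp e.symm.measurable)
    (hh.comp e.symm.measurable) ?_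
  · rwa [(MeasurePreserving.symm _ hmp).lintegral_comp hf, (MeasurePreserving.symm _ hmp).lintegral_comp hg,
      (MeasurePreserving.symm _ hmp).lintegral_comp hh] at key
  · intro x y
    show f (e.symm x) ^ (1-t) * g (e.symm y) ^ t ≤ h (e.symm ((1-t) • x + t • y))
    rw [show e.symm ((1-t) • x + t • y) = (1-t) • e.symm x + t • e.symm y from rfl]
    exact hyp _ _

lemma bm_mult {n : ℕ} {t : ℝ} (ht : 0 < t) (ht1 : t < 1)
    {A B : Set (EuclideanSpace ℝ (Fin n))} (hA : IsCompact A) (hB : IsCompact B) :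
    volume A ^ (1-t) * volume B ^ t ≤ volume ((1-t) • A + t • B) := by
  have h1t : 0 < 1 - t := by linarith
  have hC : IsCompact ((1-t) • A + t • B) :=
    (hA.smul (1-t)).add (hB.smul t)
  have hAm : MeasurableSet A := hA.isClosed.measurableSet
  have hBm : MeasurableSet B := hB.isClosed.measurableSet
  have hCm : MeasurableSet ((1-t) • A + t • B) := hC.isClosed.measurableSet
  have key := pl_euclidean n ht ht1 (A.indicator 1) (B.indicator 1)
    (((1-t) • A + t • B).indicator 1)
    ((measurable_one).indicator hAm) ((measurable_one).indicator hBm)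
    ((measurable_one).indicator hCm) ?_
  · rwa [lintegral_indicator_one hAm, lintegral_indicator_one hBm,
      lintegral_indicator_one hCm] at key
  · intro x y
    by_cases hx : x ∈ A
    · by_cases hy : y ∈ B
      · have hz : (1-t) • x + t • y ∈ (1-t) • A + t • B :=
          Set.add_mem_add (Set.smul_mem_smul_set hx) (Set.smul_mem_smul_set hy)
        rw [Set.indicator_of_mem hx, Set.indicator_of_mem hy, Set.indicator_of_mem hz]
        simp
      · rw [Set.indicator_of_notMem hy]
        simp [ENNReal.zero_rpow_of_pos ht]
    · rw [Set.indicator_of_notMem hx]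
      simp [ENNReal.zero_rpow_of_pos h1t]

lemma vadd_subset_add {E : Type*} [AddCommGroup E] {A B : Set E} (a : E) (ha : a ∈ A) :
    a +ᵥ B ⊆ A + B := by
  rintro x ⟨b, hb, rfl⟩
  exact ⟨a, ha, b, hb, rfl⟩

lemma bm_add {n : ℕ} (hn : 0 < n) {A B : Set (EuclideanSpace ℝ (Fin n))}
    (hA : IsCompact A) (hB : IsCompact B) (hAne : A.Nonempty) (hBne : B.Nonempty) :
    (volume A ^ ((n:ℝ)⁻¹) + volume B ^ ((n:ℝ)⁻¹)) ^ (n : ℕ) ≤ volume (A + B) := by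
  have hninv : (0:ℝ) < (n:ℝ)⁻¹ := by positivity
  have hAfin : volume A ≠ ∞ := hA.measure_lt_top.ne
  have hBfin : volume B ≠ ∞ := hB.measure_lt_top.ne
  have hpow : ∀ x : ℝ≥0∞, (x ^ ((n:ℝ)⁻¹)) ^ (n:ℕ) = x := by
    intro x
    rw [← ENNReal.rpow_natCast (x ^ ((n:ℝ)⁻¹)) n, ← ENNReal.rpow_mul,
      inv_mul_cancel₀ (by exact_mod_cast hn.ne' : ((n:ℝ)) ≠ 0), ENNReal.rpow_one]
  rcases eq_or_ne (volume A) 0 with hA0 | hA0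
  · rw [hA0, ENNReal.zero_rpow_of_pos hninv, zero_add, hpow]
    obtain ⟨a, ha⟩ := hAne
    calc volume B = volume (a +ᵥ B) := by rw [measure_vadd]
      _ ≤ volume (A + B) := measure_mono (vadd_subset_add a ha)
  rcases eq_or_ne (volume B) 0 with hB0 | hB0
  · rw [hB0, ENNReal.zero_rpow_of_pos hninv, add_zero, hpow]
    obtain ⟨b, hb⟩ := hBne
    have hsub : b +ᵥ A ⊆ A + B := by
      rintro x ⟨a, ha, rfl⟩
      exact ⟨a, ha, b, hb, by simp [vadd_eq_add, add_comm]⟩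
    calc volume A = volume (b +ᵥ A) := by rw [measure_vadd]
      _ ≤ volume (A + B) := measure_mono hsub
  -- main case
  set sa := (volume A).toReal with hsa
  set sb := (volume B).toReal with hsb
  have hsapos : 0 < sa := ENNReal.toReal_pos hA0 hAfin
  have hsbpos : 0 < sb := ENNReal.toReal_pos hB0 hBfin
  set ra := sa ^ ((n:ℝ)⁻¹) with hra
  set rb := sb ^ ((n:ℝ)⁻¹) with hrb
  have hrapos : 0 < ra := Real.rpow_pos_of_pos hsapos _
  have hrbpos : 0 < rb := Real.rpow_pos_of_pos hsbpos _
  set l := rb / (ra + rb) with hl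
  have hlpos : 0 < l := by positivity
  have hl1 : l < 1 := by
    rw [hl, div_lt_one (by positivity)]
    linarith
  have h1l : 1 - l = ra / (ra + rb) := by
    rw [hl]
    field_simp
    ring
  have h1lpos : 0 < 1 - l := by linarith
  set A' := ((1-l)⁻¹) • A with hA'
  set B' := (l⁻¹) • B with hB'
  have hA'c : IsCompact A' := hA.smul _
  have hB'c : IsCompact B' := hB.smul _
  have hA'back : (1-l) • A' = A := by
    rw [hA', smul_smul, mul_inv_cancel₀ h1lpos.ne', one_smul]
  have hB'back : l • B' = B := by
    rw [hB', smul_smul, mul_inv_cancel₀ hlpos.ne', one_smul]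
  have key := bm_mult hlpos hl1 hA'c hB'c
  rw [hA'back, hB'back] at key
  have hfr : Module.finrank ℝ (EuclideanSpace ℝ (Fin n)) = n := finrank_euclideanSpace_fin
  have hvolA' : volume A' = ENNReal.ofReal (((1-l)⁻¹) ^ n * sa) := by
    rw [hA', Measure.addHaar_smul, hfr, abs_of_pos (by positivity),
      ENNReal.ofReal_mul (by positivity), hsa, ENNReal.ofReal_toReal hAfin]
  have hvolB' : volume B' = ENNReal.ofReal ((l⁻¹) ^ n * sb) := by
    rw [hB', Measure.addHaar_smul, hfr, abs_of_pos (by positivity),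
      ENNReal.ofReal_mul (by positivity), hsb, ENNReal.ofReal_toReal hBfin]
  -- real computation
  have hsara : sa = ra ^ n := (Real.rpow_inv_natCast_pow hsapos.le hn.ne').symm
  have hsbrb : sb = rb ^ n := (Real.rpow_inv_natCast_pow hsbpos.le hn.ne').symm
  have hcompA : ((1-l)⁻¹) ^ n * sa = (ra + rb) ^ n := by
    rw [hsara, h1l]
    rw [← mul_pow]
    congr 1
    field_simp
  have hcompB : (l⁻¹) ^ n * sb = (ra + rb) ^ n := by
    rw [hsbrb, hl]
    rw [← mul_pow]
    congr 1
    field_simp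
  have hX : (0:ℝ) < (ra+rb)^n := by positivity
  have hLHSkey : volume A' ^ (1-l) * volume B' ^ l = ENNReal.ofReal ((ra + rb) ^ n) := by
    rw [hvolA', hvolB', hcompA, hcompB,
      ENNReal.ofReal_rpow_of_nonneg hX.le h1lpos.le,
      ENNReal.ofReal_rpow_of_nonneg hX.le hlpos.le,
      ← ENNReal.ofReal_mul (by positivity),
      ← Real.rpow_add hX, sub_add_cancel, Real.rpow_one]
  have goalLHS : (volume A ^ ((n:ℝ)⁻¹) + volume B ^ ((n:ℝ)⁻¹)) ^ (n:ℕ)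
      = ENNReal.ofReal ((ra + rb) ^ n) := by
    rw [show volume A = ENNReal.ofReal sa by rw [hsa, ENNReal.ofReal_toReal hAfin],
      show volume B = ENNReal.ofReal sb by rw [hsb, ENNReal.ofReal_toReal hBfin],
      ENNReal.ofReal_rpow_of_nonneg hsapos.le hninv.le,
      ENNReal.ofReal_rpow_of_nonneg hsbpos.le hninv.le,
      ← ENNReal.ofReal_add (by positivity) (by positivity),
      ← ENNReal.ofReal_pow (by positivity)]
  rw [goalLHS, ← hLHSkey]
  exact key

lemma ennreal_pow_rpow_inv {n : ℕ} (hn : 0 < n) (x : ℝ≥0∞) :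
    (x ^ ((n:ℝ)⁻¹)) ^ (n:ℕ) = x := by
  rw [← ENNReal.rpow_natCast (x ^ ((n:ℝ)⁻¹)) n, ← ENNReal.rpow_mul,
    inv_mul_cancel₀ (by exact_mod_cast hn.ne' : ((n:ℝ)) ≠ 0), ENNReal.rpow_one]

lemma bm_add3 {n : ℕ} (hn : 0 < n) {A B C : Set (EuclideanSpace ℝ (Fin n))}
    (hA : IsCompact A) (hB : IsCompact B) (hC : IsCompact C)
    (hAne : A.Nonempty) (hBne : B.Nonempty) (hCne : C.Nonempty) :
    (volume A ^ ((n:ℝ)⁻¹) + volume B ^ ((n:ℝ)⁻¹) + volume C ^ ((n:ℝ)⁻¹)) ^ (n : ℕ)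
      ≤ volume (A + B + C) := by
  have h1 := bm_add hn hA hB hAne hBne
  have h2 := bm_add hn (hA.add hB) hC (hAne.add hBne) hCne
  have hroot : volume A ^ ((n:ℝ)⁻¹) + volume B ^ ((n:ℝ)⁻¹)
      ≤ volume (A + B) ^ ((n:ℝ)⁻¹) := by
    calc volume A ^ ((n:ℝ)⁻¹) + volume B ^ ((n:ℝ)⁻¹)
        = (((volume A ^ ((n:ℝ)⁻¹) + volume B ^ ((n:ℝ)⁻¹)) ^ (n:ℕ)) : ℝ≥0∞) ^ ((n:ℝ)⁻¹) := by
          rw [← ENNReal.rpow_natCast _ n, ← ENNReal.rpow_mul,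
            mul_inv_cancel₀ (by exact_mod_cast hn.ne' : ((n:ℝ)) ≠ 0), ENNReal.rpow_one]
      _ ≤ volume (A + B) ^ ((n:ℝ)⁻¹) := ENNReal.rpow_le_rpow h1 (by positivity)
  calc (volume A ^ ((n:ℝ)⁻¹) + volume B ^ ((n:ℝ)⁻¹) + volume C ^ ((n:ℝ)⁻¹)) ^ (n:ℕ)
      ≤ (volume (A + B) ^ ((n:ℝ)⁻¹) + volume C ^ ((n:ℝ)⁻¹)) ^ (n:ℕ) :=
        pow_le_pow_left' (add_le_add_left hroot _) n
    _ ≤ volume (A + B + C) := h2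

theorem convolution_bodies_convex_combination {n : ℕ} (hn : 0 < n)
    (K L : Set (EuclideanSpace ℝ (Fin n)))
    (hK : Convex ℝ K) (hKc : IsCompact K) (hKi : (interior K).Nonempty)
    (hL : Convex ℝ L) (hLc : IsCompact L) (hLi : (interior L).Nonempty)
    (hM : ∀ z : EuclideanSpace ℝ (Fin n),
      volume (K ∩ ((fun y => z - y) '' L)) ≤ volume (K ∩ -L))
    (θ₁ θ₂ l₁ l₂ : ℝ) (hθ₁ : θ₁ ∈ Set.Icc (0:ℝ) 1) (hθ₂ : θ₂ ∈ Set.Icc (0:ℝ) 1)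
    (hl₁ : 0 ≤ l₁) (hl₂ : 0 ≤ l₂) (hl : l₁ + l₂ ≤ 1) :
    l₁ • thetaConv K L θ₁ + l₂ • thetaConv K L θ₂ ⊆
      thetaConv K L
        ((1 - l₁ * (1 - θ₁ ^ ((n:ℝ)⁻¹)) - l₂ * (1 - θ₂ ^ ((n:ℝ)⁻¹))) ^ n) := by
  -- generic facts
  have hninv : (0:ℝ) < (n:ℝ)⁻¹ := by positivity
  set M := volume (K ∩ -L) with hMdef
  -- positivity of M and 0 ∈ K + L
  have hMpos : 0 < M := by
    obtain ⟨k₀, hk₀⟩ := hKi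
    obtain ⟨l₀, hl₀⟩ := hLi
    set z₀ := k₀ + l₀ with hz₀
    have himg : (fun w => z₀ - w) '' interior L = (Homeomorph.subLeft z₀) '' interior L := rfl
    have hopen : IsOpen ((fun w => z₀ - w) '' interior L) := by
      rw [himg, Homeomorph.isOpen_image]
      exact isOpen_interior
    have hU : IsOpen (interior K ∩ (fun w => z₀ - w) '' interior L) :=
      isOpen_interior.inter hopen
    have hk₀U : k₀ ∈ interior K ∩ (fun w => z₀ - w) '' interior L := by
      refine ⟨hk₀, ⟨l₀, hl₀, ?_⟩⟩
      rw [hz₀]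
      exact add_sub_cancel_right k₀ l₀
    have hUsub : interior K ∩ (fun w => z₀ - w) '' interior L
        ⊆ K ∩ ((fun w => z₀ - w) '' L) := by
      refine Set.inter_subset_inter interior_subset ?_
      exact Set.image_mono interior_subset
    have hpos : 0 < volume (K ∩ ((fun w => z₀ - w) '' L)) := by
      refine lt_of_lt_of_le ?_ (measure_mono hUsub)
      exact hU.measure_pos volume ⟨k₀, hk₀U⟩
    exact lt_of_lt_of_le hpos (hM z₀)
  have hA₃ne : (K ∩ -L).Nonempty := nonempty_of_measure_ne_zero hMpos.ne'
  have h0KL : (0 : EuclideanSpace ℝ (Fin n)) ∈ K + L := by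
    obtain ⟨w, hwK, hwL⟩ := hA₃ne
    exact ⟨w, hwK, -w, Set.mem_neg.mp hwL, add_neg_cancel w⟩
  have hMfin : M ≠ ∞ := ((measure_mono Set.inter_subset_left).trans_lt hKc.measure_lt_top).ne
  -- members
  rintro z ⟨a, ha, b, hb, rfl⟩
  obtain ⟨x, hx, rfl⟩ := ha
  obtain ⟨y, hy, rfl⟩ := hb
  obtain ⟨hxKL, hxvol⟩ := hx
  obtain ⟨hyKL, hyvol⟩ := hy
  set l₃ := 1 - l₁ - l₂ with hl₃def
  have hl₃ : 0 ≤ l₃ := by simp only [hl₃def]; linarith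
  set t₁ := θ₁ ^ ((n:ℝ)⁻¹) with ht₁def
  set t₂ := θ₂ ^ ((n:ℝ)⁻¹) with ht₂def
  have ht₁0 : 0 ≤ t₁ := Real.rpow_nonneg hθ₁.1 _
  have ht₂0 : 0 ≤ t₂ := Real.rpow_nonneg hθ₂.1 _
  set c := l₁ * t₁ + l₂ * t₂ + l₃ with hcdef
  have hc0 : 0 ≤ c := by positivity
  -- the three bodies
  set A₁ := K ∩ ((fun w => x - w) '' L) with hA₁def
  set A₂ := K ∩ ((fun w => y - w) '' L) with hA₂def
  set A₃ := K ∩ (-L) with hA₃def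
  have himg_eq : ∀ v : EuclideanSpace ℝ (Fin n), (fun w => v - w) '' L = v +ᵥ (-L) := by
    intro v
    ext u
    constructor
    · rintro ⟨w, hw, rfl⟩
      exact ⟨-w, Set.mem_neg.mpr (by simpa using hw), by simp [vadd_eq_add, sub_eq_add_neg]⟩
    · rintro ⟨w, hw, rfl⟩
      exact ⟨-w, Set.mem_neg.mp hw, by simp [vadd_eq_add, sub_eq_add_neg]⟩
  have hcompA₁ : IsCompact A₁ :=
    hKc.inter_right ((hLc.image (continuous_const.sub continuous_id)).isClosed)
  have hcompA₂ : IsCompact A₂ :=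
    hKc.inter_right ((hLc.image (continuous_const.sub continuous_id)).isClosed)
  have hcompA₃ : IsCompact A₃ := hKc.inter_right hLc.neg.isClosed
  have hA₁ne : A₁.Nonempty := by
    obtain ⟨k, hk, l, hll, hkl⟩ := hxKL
    exact ⟨k, hk, ⟨l, hll, by rw [← hkl]; exact add_sub_cancel_right k l⟩⟩
  have hA₂ne : A₂.Nonempty := by
    obtain ⟨k, hk, l, hll, hkl⟩ := hyKL
    exact ⟨k, hk, ⟨l, hll, by rw [← hkl]; exact add_sub_cancel_right k l⟩⟩
  -- key inclusion
  set z := l₁ • x + l₂ • y with hzdef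
  have hzKL : z ∈ K + L := by
    have hKL : Convex ℝ (K + L) := hK.add hL
    have := hKL.sum_mem (t := Finset.univ) (w := ![l₁, l₂, l₃]) (z := ![x, y, 0])
      (by intro i _; fin_cases i <;> simpa) (by simp [Fin.sum_univ_three, hl₃def])
      (by intro i _; fin_cases i <;> simp [hxKL, hyKL, h0KL])
    simpa [Fin.sum_univ_three, hzdef] using this
  have hincl : l₁ • A₁ + l₂ • A₂ + l₃ • A₃ ⊆ K ∩ ((fun w => z - w) '' L) := by
    rintro u ⟨v, ⟨p, ⟨u₁, hu₁, rfl⟩, q, ⟨u₂, hu₂, rfl⟩, rfl⟩, r, ⟨u₃, hu₃, rfl⟩, rfl⟩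
    obtain ⟨hu₁K, w₁, hw₁, hw₁eq⟩ := hu₁
    obtain ⟨hu₂K, w₂, hw₂, hw₂eq⟩ := hu₂
    obtain ⟨hu₃K, hu₃L⟩ := hu₃
    constructor
    · have := hK.sum_mem (t := Finset.univ) (w := ![l₁, l₂, l₃]) (z := ![u₁, u₂, u₃])
        (by intro i _; fin_cases i <;> simpa) (by simp [Fin.sum_univ_three, hl₃def])
        (by intro i _; fin_cases i <;> simp [hu₁K, hu₂K, hu₃K])
      simpa [Fin.sum_univ_three] using this
    · refine ⟨l₁ • w₁ + l₂ • w₂ + l₃ • (-u₃), ?_, ?_⟩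
      · have := hL.sum_mem (t := Finset.univ) (w := ![l₁, l₂, l₃]) (z := ![w₁, w₂, -u₃])
          (by intro i _; fin_cases i <;> simpa) (by simp [Fin.sum_univ_three, hl₃def])
          (by intro i _; fin_cases i <;> simp [hw₁, hw₂, Set.mem_neg.mp hu₃L])
        simpa [Fin.sum_univ_three] using this
      · rw [hzdef, ← hw₁eq, ← hw₂eq]
        simp only [smul_sub, smul_neg]
        abel
  -- volumes
  set V₁ := volume A₁ with hV₁def
  set V₂ := volume A₂ with hV₂def
  have hfr : Module.finrank ℝ (EuclideanSpace ℝ (Fin n)) = n := finrank_euclideanSpace_fin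
  have hsmulvol : ∀ (r : ℝ) (S : Set (EuclideanSpace ℝ (Fin n))), 0 ≤ r →
      volume (r • S) = ENNReal.ofReal (r ^ n) * volume S := by
    intro r S hr
    rw [Measure.addHaar_smul, hfr, abs_of_nonneg (by positivity)]
  have hrpow_smul : ∀ (r : ℝ) (S : Set (EuclideanSpace ℝ (Fin n))), 0 ≤ r →
      volume (r • S) ^ ((n:ℝ)⁻¹) = ENNReal.ofReal r * volume S ^ ((n:ℝ)⁻¹) := by
    intro r S hr
    rw [hsmulvol r S hr, ENNReal.mul_rpow_of_nonneg _ _ hninv.le,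
      ENNReal.ofReal_rpow_of_nonneg (by positivity) hninv.le,
      Real.pow_rpow_inv_natCast hr hn.ne']
  -- lower bounds for the roots
  have hV₁root : ENNReal.ofReal (l₁ * t₁) * M ^ ((n:ℝ)⁻¹)
      ≤ volume (l₁ • A₁) ^ ((n:ℝ)⁻¹) := by
    rw [hrpow_smul l₁ A₁ hl₁, ENNReal.ofReal_mul hl₁, mul_assoc]
    refine mul_le_mul_right ?_ _
    calc ENNReal.ofReal t₁ * M ^ ((n:ℝ)⁻¹)
        = (ENNReal.ofReal θ₁ * M) ^ ((n:ℝ)⁻¹) := by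
          rw [ENNReal.mul_rpow_of_nonneg _ _ hninv.le,
            ENNReal.ofReal_rpow_of_nonneg hθ₁.1 hninv.le, ht₁def]
      _ ≤ V₁ ^ ((n:ℝ)⁻¹) := ENNReal.rpow_le_rpow hxvol hninv.le
  have hV₂root : ENNReal.ofReal (l₂ * t₂) * M ^ ((n:ℝ)⁻¹)
      ≤ volume (l₂ • A₂) ^ ((n:ℝ)⁻¹) := by
    rw [hrpow_smul l₂ A₂ hl₂, ENNReal.ofReal_mul hl₂, mul_assoc]
    refine mul_le_mul_right ?_ _
    calc ENNReal.ofReal t₂ * M ^ ((n:ℝ)⁻¹)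
        = (ENNReal.ofReal θ₂ * M) ^ ((n:ℝ)⁻¹) := by
          rw [ENNReal.mul_rpow_of_nonneg _ _ hninv.le,
            ENNReal.ofReal_rpow_of_nonneg hθ₂.1 hninv.le, ht₂def]
      _ ≤ V₂ ^ ((n:ℝ)⁻¹) := ENNReal.rpow_le_rpow hyvol hninv.le
  have hV₃root : ENNReal.ofReal l₃ * M ^ ((n:ℝ)⁻¹) = volume (l₃ • A₃) ^ ((n:ℝ)⁻¹) := by
    rw [hrpow_smul l₃ A₃ hl₃, hA₃def, hMdef]
  -- the final membership
  refine ⟨hzKL, ?_⟩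
  have hθeq : (1 - l₁ * (1 - θ₁ ^ ((n:ℝ)⁻¹)) - l₂ * (1 - θ₂ ^ ((n:ℝ)⁻¹))) ^ n = c ^ n := by
    congr 1
    rw [hcdef, hl₃def, ht₁def, ht₂def]
    ring
  rw [hθeq]
  calc ENNReal.ofReal (c ^ n) * M
      = (ENNReal.ofReal c * M ^ ((n:ℝ)⁻¹)) ^ (n : ℕ) := by
        rw [mul_pow, ← ENNReal.ofReal_pow hc0, ennreal_pow_rpow_inv hn]
    _ ≤ (volume (l₁ • A₁) ^ ((n:ℝ)⁻¹) + volume (l₂ • A₂) ^ ((n:ℝ)⁻¹)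
          + volume (l₃ • A₃) ^ ((n:ℝ)⁻¹)) ^ (n : ℕ) := by
        refine pow_le_pow_left' ?_ n
        calc ENNReal.ofReal c * M ^ ((n:ℝ)⁻¹)
            = ENNReal.ofReal (l₁ * t₁) * M ^ ((n:ℝ)⁻¹)
              + ENNReal.ofReal (l₂ * t₂) * M ^ ((n:ℝ)⁻¹)
              + ENNReal.ofReal l₃ * M ^ ((n:ℝ)⁻¹) := by
              rw [hcdef, ENNReal.ofReal_add (by positivity) hl₃,
                ENNReal.ofReal_add (by positivity) (by positivity)]
              ring
          _ ≤ _ := by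
              refine add_le_add (add_le_add hV₁root hV₂root) ?_
              rw [hV₃root]
    _ ≤ volume (l₁ • A₁ + l₂ • A₂ + l₃ • A₃) :=
        bm_add3 hn (hcompA₁.smul l₁) (hcompA₂.smul l₂) (hcompA₃.smul l₃)
          (hA₁ne.smul_set) (hA₂ne.smul_set) (hA₃ne.smul_set)
    _ ≤ volume (K ∩ ((fun w => z - w) '' L)) := measure_mono hincl
end

section
/- Let K and L be convex bodies in ℝ^n with vol(K ∩ (−L)) = M(K,L) = max_z vol(K ∩ (z − L)). Then M(K,L)·vol(K + L) ≤ binom(2n, n)·vol(K)·vol(L) (the Rogers–Shephard inequality for two bodies). -/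
open MeasureTheory Pointwise ENNReal

open Set in

-- FTC: ∫ τ..1 n(1-t)^{n-1} = (1-τ)^n
lemma ftc_aux (n : ℕ) (hn : 0 < n) (τ : ℝ) :
    ∫ t in τ..1, (n : ℝ) * (1 - t) ^ (n - 1) = (1 - τ) ^ n := by
  have hderiv : ∀ t ∈ Set.uIcc τ 1,
      HasDerivAt (fun s : ℝ => -(1 - s) ^ n) ((n : ℝ) * (1 - t) ^ (n - 1)) t := by
    intro t _
    have h1 : HasDerivAt (fun s : ℝ => 1 - s) (-1) t := by
      simpa using (hasDerivAt_id' t).const_sub (1:ℝ)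
    have h2 : HasDerivAt (fun s : ℝ => -(1 - s) ^ n) (-((n:ℝ) * (1 - t) ^ (n - 1) * -1)) t :=
      (h1.pow n).neg
    convert h2 using 1
    ring
  have hcont : IntervalIntegrable (fun t : ℝ => (n:ℝ) * (1 - t) ^ (n - 1)) volume τ 1 :=
    (by continuity : Continuous fun t : ℝ => (n:ℝ) * (1 - t) ^ (n - 1)).intervalIntegrable τ 1
  rw [intervalIntegral.integral_eq_sub_of_hasDerivAt hderiv hcont]
  rw [sub_self, zero_pow hn.ne']
  ring

-- L2
lemma L2 (n : ℕ) (hn : 0 < n) (τ : ℝ) (h1 : τ ≤ 1) :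
    ∫⁻ t in Set.Icc τ 1, ENNReal.ofReal ((n : ℝ) * (1 - t) ^ (n - 1))
      = ENNReal.ofReal ((1 - τ) ^ n) := by
  rw [← ofReal_integral_eq_lintegral_ofReal]
  · rw [MeasureTheory.integral_Icc_eq_integral_Ioc, ← intervalIntegral.integral_of_le h1,
      ftc_aux n hn τ]
  · exact (by continuity : Continuous fun t : ℝ => (n:ℝ) * (1 - t) ^ (n - 1)).integrableOn_Icc
  · refine (ae_restrict_iff' measurableSet_Icc).2 (Filter.Eventually.of_forall fun t ht => ?_)
    have : (0:ℝ) ≤ 1 - t := by linarith [ht.2]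
    positivity

lemma prod_range_asc (n k : ℕ) : ∏ j ∈ Finset.range k, (n + j) = n.ascFactorial k := by
  induction k with
  | zero => simp
  | succ k ih => rw [Finset.prod_range_succ, ih, Nat.ascFactorial_succ, mul_comm]

lemma asc_eq (n : ℕ) (hn : 0 < n) :
    n.ascFactorial (n + 1) = (2 * n).choose n * n.factorial * n := by
  have h1 : (n - 1).factorial * n.ascFactorial (n + 1) = (2 * n).factorial := by
    have := Nat.factorial_mul_ascFactorial (n - 1) (n + 1)
    rw [show n - 1 + 1 = n by omega, show n - 1 + (n + 1) = 2 * n by omega] at this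
    exact this
  have h2 : (2 * n).choose n * n.factorial * n.factorial = (2 * n).factorial := by
    have := Nat.choose_mul_factorial_mul_factorial (show n ≤ 2 * n by omega)
    rw [show 2 * n - n = n by omega] at this; exact this
  have h3 : n.factorial = n * (n - 1).factorial := by
    conv_lhs => rw [show n = (n - 1) + 1 by omega]
    rw [Nat.factorial_succ]; congr 1; omega
  have h4 : (n-1).factorial * n.ascFactorial (n+1) =
      (n-1).factorial * ((2 * n).choose n * n.factorial * n) := by
    rw [h1, ← h2, h3]; ring
  exact Nat.eq_of_mul_eq_mul_left (Nat.factorial_pos _) h4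

lemma breal_eq (n : ℕ) (hn : 0 < n) :
    ∫ t in (0:ℝ)..1, t ^ n * (1 - t) ^ (n - 1)
      = (n.factorial : ℝ) / (n.ascFactorial (n + 1)) := by
  have hre : (0:ℝ) < (n : ℂ).re := by simpa using hn
  have hbeta := Complex.betaIntegral_eval_nat_add_one_right hre n
  have hsymm := Complex.betaIntegral_symm (n : ℂ) ((n : ℂ) + 1)
  have hcast : ((∫ t in (0:ℝ)..1, t ^ n * (1 - t) ^ (n - 1) : ℝ) : ℂ)
      = Complex.betaIntegral ((n : ℂ) + 1) (n : ℂ) := by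
    rw [← intervalIntegral.integral_ofReal]
    unfold Complex.betaIntegral
    refine intervalIntegral.integral_congr fun x hx => ?_
    push_cast
    rw [show ((n:ℂ) + 1 - 1) = ((n : ℕ) : ℂ) by ring,
      show ((n:ℂ) - 1) = (((n - 1 : ℕ)) : ℂ) by push_cast [Nat.cast_pred hn]; ring,
      Complex.cpow_natCast, Complex.cpow_natCast]
  have hprod : (∏ j ∈ Finset.range (n + 1), ((n : ℂ) + (j : ℕ)))
      = ((n.ascFactorial (n + 1) : ℕ) : ℂ) := by
    rw [← prod_range_asc n (n + 1)]
    push_cast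
    rfl
  rw [hsymm, hbeta, hprod] at hcast
  have : ((∫ t in (0:ℝ)..1, t ^ n * (1 - t) ^ (n - 1) : ℝ) : ℂ)
      = (((n.factorial : ℝ) / (n.ascFactorial (n + 1)) : ℝ) : ℂ) := by
    rw [hcast]; push_cast; ring
  exact_mod_cast this

lemma L1 (n : ℕ) (hn : 0 < n) :
    ∫⁻ t in Set.Ioc (0:ℝ) 1, ENNReal.ofReal ((n : ℝ) * (1 - t) ^ (n - 1) * t ^ n)
      = (((2 * n).choose n : ℝ≥0∞))⁻¹ := by
  have hcont : Continuous fun t : ℝ => (n:ℝ) * (1 - t) ^ (n - 1) * t ^ n := by continuity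
  rw [← ofReal_integral_eq_lintegral_ofReal hcont.integrableOn_Ioc]
  · have hint : ∫ t in Set.Ioc (0:ℝ) 1, (n:ℝ) * (1 - t) ^ (n - 1) * t ^ n
        = (n : ℝ) * ((n.factorial : ℝ) / (n.ascFactorial (n + 1))) := by
      rw [← intervalIntegral.integral_of_le (by norm_num : (0:ℝ) ≤ 1), ← breal_eq n hn,
        ← intervalIntegral.integral_const_mul]
      exact intervalIntegral.integral_congr fun x hx => by ring
    rw [hint]
    have hasc := asc_eq n hn
    have hCpos : (0:ℝ) < (2 * n).choose n := by
      exact_mod_cast Nat.choose_pos (show n ≤ 2 * n by omega)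
    have h : (n : ℝ) * ((n.factorial : ℝ) / (n.ascFactorial (n + 1)))
        = ((2 * n).choose n : ℝ)⁻¹ := by
      rw [hasc]
      push_cast
      have hfpos : (0:ℝ) < n.factorial := by exact_mod_cast n.factorial_pos
      have hnpos : (0:ℝ) < n := by exact_mod_cast hn
      field_simp
    rw [h, ← ENNReal.ofReal_natCast ((2*n).choose n), ← ENNReal.ofReal_inv_of_pos hCpos]
  · refine (ae_restrict_iff' measurableSet_Ioc).2 (Filter.Eventually.of_forall fun t ht => ?_)
    have h1 : (0:ℝ) ≤ 1 - t := by linarith [ht.2]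
    have h2 : (0:ℝ) ≤ t := le_of_lt ht.1
    positivity

section RS_aux
open Set

lemma sub_image {G : Type*} [AddCommGroup G] (z : G) (L : Set G) :
    (fun y => z - y) '' L = {u | z - u ∈ L} := by
  ext u
  simp only [Set.mem_image, Set.mem_setOf_eq]
  constructor
  · rintro ⟨y, hy, rfl⟩; simpa [sub_sub_cancel] using hy
  · intro h; exact ⟨z - u, h, sub_sub_cancel z u⟩

lemma key_geom {n : ℕ} {K L : Set (EuclideanSpace ℝ (Fin n))}
    (hK : Convex ℝ K) (hL : Convex ℝ L) {t : ℝ} (ht0 : 0 ≤ t) (ht1 : t ≤ 1)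
    {y : EuclideanSpace ℝ (Fin n)} (hy : y ∈ K + L) :
    ENNReal.ofReal ((1 - t) ^ n) * volume (K ∩ -L)
      ≤ volume (K ∩ ((fun u => t • y - u) '' L)) := by
  rw [Set.mem_add] at hy
  obtain ⟨a, ha, b, hb, rfl⟩ := hy
  set A : Set (EuclideanSpace ℝ (Fin n)) := K ∩ -L with hA
  have hsub : (fun w => t • a + (1 - t) • w) '' A
      ⊆ K ∩ ((fun u => t • (a + b) - u) '' L) := by
    rw [sub_image]
    rintro u ⟨w, hw, rfl⟩
    constructor
    · exact hK ha hw.1 ht0 (by linarith) (by ring)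
    · show t • (a + b) - (t • a + (1 - t) • w) ∈ L
      have heq : t • (a + b) - (t • a + (1 - t) • w) = t • b + (1 - t) • (-w) := by
        module
      rw [heq]
      exact hL hb (Set.mem_neg.mp hw.2) ht0 (by linarith) (by ring)
  have himg : (fun w => t • a + (1 - t) • w) '' A = (t • a) +ᵥ ((1 - t) • A) := by
    ext u
    simp only [Set.mem_image, Set.mem_vadd_set, Set.mem_smul_set, vadd_eq_add]
    constructor
    · rintro ⟨w, hw, rfl⟩; exact ⟨(1 - t) • w, ⟨w, hw, rfl⟩, rfl⟩
    · rintro ⟨v, ⟨w, hw, rfl⟩, rfl⟩; exact ⟨w, hw, rfl⟩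
  have hvol : volume ((fun w => t • a + (1 - t) • w) '' A)
      = ENNReal.ofReal ((1 - t) ^ n) * volume A := by
    rw [himg, measure_vadd, Measure.addHaar_smul]
    congr 2
    have h : (0:ℝ) ≤ 1 - t := by linarith
    rw [finrank_euclideanSpace_fin, abs_of_nonneg (by positivity)]
  calc ENNReal.ofReal ((1 - t) ^ n) * volume A
      = volume ((fun w => t • a + (1 - t) • w) '' A) := hvol.symm
    _ ≤ _ := measure_mono hsub

lemma fubini_step {n : ℕ} (K L : Set (EuclideanSpace ℝ (Fin n)))
    (hK : MeasurableSet K) (hL : MeasurableSet L) :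
    ∫⁻ x, volume (K ∩ ((fun y => x - y) '' L)) = volume K * volume L := by
  set D : Set (EuclideanSpace ℝ (Fin n) × EuclideanSpace ℝ (Fin n)) :=
    {p | p.2 ∈ K ∧ p.1 - p.2 ∈ L} with hD
  have hDm : MeasurableSet D := by
    have : D = (fun p : EuclideanSpace ℝ (Fin n) × EuclideanSpace ℝ (Fin n) =>
        (p.2, p.1 - p.2)) ⁻¹' (K ×ˢ L) := by
      ext p; simp [hD]
    rw [this]
    exact (measurable_snd.prodMk (measurable_fst.sub measurable_snd)) (hK.prod hL)
  have h1 : ∀ x, Prod.mk x ⁻¹' D = K ∩ ((fun y => x - y) '' L) := by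
    intro x
    rw [sub_image]
    ext y; simp [hD]
  calc ∫⁻ x, volume (K ∩ ((fun y => x - y) '' L))
      = ∫⁻ x, volume (Prod.mk x ⁻¹' D) := by simp_rw [h1]
    _ = (volume.prod volume) D := (Measure.prod_apply hDm).symm
    _ = ∫⁻ y, volume ((fun x => (x, y)) ⁻¹' D) := Measure.prod_apply_symm hDm
    _ = ∫⁻ y, K.indicator (fun _ => volume L) y := by
        refine lintegral_congr fun y => ?_
        by_cases hy : y ∈ K
        · have hpre : (fun x => (x, y)) ⁻¹' D = (fun x => x + (-y)) ⁻¹' L := by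
            ext x; simp [hD, hy, sub_eq_add_neg]
          rw [hpre, Set.indicator_of_mem hy]
          exact measure_preimage_add_right volume (-y) L
        · have hpre : (fun x => (x, y)) ⁻¹' D = ∅ := by
            ext x; simp [hD, hy]
          rw [hpre, Set.indicator_of_notMem hy]
          simp
    _ = volume K * volume L := by
        rw [lintegral_indicator hK]
        simp [mul_comm]

end RS_aux

set_option maxHeartbeats 1000000 in
theorem rogers_shephard_two_bodies {n : ℕ} (hn : 0 < n)
    (K L : Set (EuclideanSpace ℝ (Fin n)))
    (hK : Convex ℝ K) (hKc : IsCompact K) (hKi : (interior K).Nonempty)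
    (hL : Convex ℝ L) (hLc : IsCompact L) (hLi : (interior L).Nonempty)
    (hM : ∀ z : EuclideanSpace ℝ (Fin n),
      volume (K ∩ ((fun y => z - y) '' L)) ≤ volume (K ∩ -L)) :
    volume (K ∩ -L) * volume (K + L) ≤
      ((2 * n).choose n : ℝ≥0∞) * (volume K * volume L) := by
  classical
  set S : Set (EuclideanSpace ℝ (Fin n)) := K + L with hSdef
  have hSc : IsCompact S := hKc.add hLc
  have hSm : MeasurableSet S := hSc.isClosed.measurableSet
  set M : ℝ≥0∞ := volume (K ∩ -L) with hMdef
  have hMtop : M ≠ ⊤ :=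
    (lt_of_le_of_lt (measure_mono Set.inter_subset_left) hKc.measure_lt_top).ne
  set C : ℝ≥0∞ := ((2 * n).choose n : ℝ≥0∞) with hCdef
  have hC0 : C ≠ 0 := by
    simp only [hCdef, ne_eq, Nat.cast_eq_zero]
    exact (Nat.choose_pos (show n ≤ 2 * n by omega)).ne'
  have hCtop : C ≠ ⊤ := ENNReal.natCast_ne_top _
  -- the weight and the auxiliary set
  set w : ℝ → ℝ≥0∞ := fun t => ENNReal.ofReal ((n : ℝ) * (1 - t) ^ (n - 1)) with hwdef
  have hwm : Measurable w :=
    ENNReal.measurable_ofReal.comp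
      (by continuity : Continuous fun t : ℝ => (n : ℝ) * (1 - t) ^ (n - 1)).measurable
  set G : Set (ℝ × (EuclideanSpace ℝ (Fin n))) := {p | 0 < p.1 ∧ p.1 ≤ 1 ∧ p.1⁻¹ • p.2 ∈ S} with hGdef
  have hsm : Measurable fun p : ℝ × (EuclideanSpace ℝ (Fin n)) => p.1⁻¹ • p.2 :=
    (continuous_smul.measurable).comp ((measurable_fst.inv).prodMk measurable_snd)
  have hGm : MeasurableSet G := by
    have : G = (Prod.fst ⁻¹' Set.Ioi (0:ℝ)) ∩ (Prod.fst ⁻¹' Set.Iic (1:ℝ))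
        ∩ ((fun p : ℝ × (EuclideanSpace ℝ (Fin n)) => p.1⁻¹ • p.2) ⁻¹' S) := by
      ext p; simp [hGdef, and_assoc]
    rw [this]
    exact ((measurable_fst measurableSet_Ioi).inter (measurable_fst measurableSet_Iic)).inter
      (hsm hSm)
  set F : ℝ × (EuclideanSpace ℝ (Fin n)) → ℝ≥0∞ := fun p => w p.1 * G.indicator 1 p with hFdef
  have hFm : Measurable F :=
    (hwm.comp measurable_fst).mul (measurable_one.indicator hGm)
  -- Way 1 : iterated integral, t first
  have way1 : ∫⁻ t in Set.Ioc (0:ℝ) 1, ∫⁻ x, F (t, x) = C⁻¹ * volume S := by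
    have hinner : ∀ t ∈ Set.Ioc (0:ℝ) 1,
        (∫⁻ x, F (t, x)) = ENNReal.ofReal ((n : ℝ) * (1 - t) ^ (n - 1) * t ^ n) * volume S := by
      intro t ht
      have hset : ∀ x : (EuclideanSpace ℝ (Fin n)), G.indicator 1 (t, x) = (t • S).indicator (1 : (EuclideanSpace ℝ (Fin n)) → ℝ≥0∞) x := by
        intro x
        by_cases hx : x ∈ t • S
        · have : (t, x) ∈ G :=
            ⟨ht.1, ht.2, (Set.mem_smul_set_iff_inv_smul_mem₀ ht.1.ne' S x).mp hx⟩
          rw [Set.indicator_of_mem this, Set.indicator_of_mem hx]; rfl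
        · have : (t, x) ∉ G := by
            intro h
            exact hx ((Set.mem_smul_set_iff_inv_smul_mem₀ ht.1.ne' S x).mpr h.2.2)
          rw [Set.indicator_of_notMem this, Set.indicator_of_notMem hx]
      have hSsm : MeasurableSet (t • S) :=
        (hSc.smul t).isClosed.measurableSet
      calc ∫⁻ x, F (t, x)
          = ∫⁻ x, w t * (t • S).indicator 1 x := by simp_rw [hFdef, hset]
        _ = w t * ∫⁻ x, (t • S).indicator 1 x :=
            lintegral_const_mul' _ _ ENNReal.ofReal_ne_top
        _ = w t * volume (t • S) := by
            rw [lintegral_indicator hSsm]; simp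
        _ = w t * (ENNReal.ofReal (t ^ n) * volume S) := by
            rw [Measure.addHaar_smul, finrank_euclideanSpace_fin,
              abs_of_nonneg (pow_nonneg ht.1.le n)]
        _ = ENNReal.ofReal ((n : ℝ) * (1 - t) ^ (n - 1) * t ^ n) * volume S := by
            rw [← mul_assoc, hwdef, ← ENNReal.ofReal_mul (by
              have : (0:ℝ) ≤ 1 - t := by linarith [ht.2]
              positivity)]
    rw [setLIntegral_congr_fun measurableSet_Ioc
      (fun t ht => hinner t ht)]
    rw [lintegral_mul_const' _ _ hSc.measure_lt_top.ne, L1 n hn]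
  -- Way 2 : pointwise bound on the inner t-integral
  have way2 : ∀ x : (EuclideanSpace ℝ (Fin n)), M * ∫⁻ t in Set.Ioc (0:ℝ) 1, F (t, x)
      ≤ volume (K ∩ ((fun y => x - y) '' L)) := by
    intro x
    set T : Set ℝ := {t | 0 < t ∧ t ≤ 1 ∧ t⁻¹ • x ∈ S} with hTdef
    have hTsub : T ⊆ Set.Ioc 0 1 := fun t ht => ⟨ht.1, ht.2.1⟩
    have hTm : MeasurableSet T := by
      have : T = (Set.Ioi (0:ℝ) ∩ Set.Iic 1) ∩ ((fun t : ℝ => t⁻¹ • x) ⁻¹' S) := by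
        ext t; simp [hTdef, and_assoc]
      rw [this]
      exact (measurableSet_Ioi.inter measurableSet_Iic).inter
        ((measurable_inv.smul_const x) hSm)
    have hJ : ∫⁻ t in Set.Ioc (0:ℝ) 1, F (t, x) = ∫⁻ t in T, w t := by
      have hFx : ∀ t, F (t, x) = T.indicator w t := by
        intro t
        by_cases ht : t ∈ T
        · have hG : (t, x) ∈ G := ⟨ht.1, ht.2.1, ht.2.2⟩
          simp [hFdef, Set.indicator_of_mem hG, Set.indicator_of_mem ht]
        · have hG : (t, x) ∉ G := fun h => ht ⟨h.1, h.2.1, h.2.2⟩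
          simp [hFdef, Set.indicator_of_notMem hG, Set.indicator_of_notMem ht]
      simp_rw [hFx]
      rw [lintegral_indicator hTm, Measure.restrict_restrict hTm,
        Set.inter_eq_self_of_subset_left hTsub]
    rcases Set.eq_empty_or_nonempty T with hTe | hTne
    · rw [hJ, hTe]
      simp
    · set τ := sInf T with hτdef
      have hbdd : BddBelow T := ⟨0, fun t ht => ht.1.le⟩
      have hτ0 : 0 ≤ τ := le_csInf hTne fun t ht => ht.1.le
      obtain ⟨t₀, ht₀⟩ := hTne
      have hτ1 : τ ≤ 1 := le_trans (csInf_le hbdd ht₀) ht₀.2.1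
      have hTsub2 : T ⊆ Set.Icc τ 1 := fun t ht => ⟨csInf_le hbdd ht, ht.2.1⟩
      have hJle : ∫⁻ t in T, w t ≤ ENNReal.ofReal ((1 - τ) ^ n) := by
        rw [← L2 n hn τ hτ1]
        exact lintegral_mono_set hTsub2
      have hfx : ENNReal.ofReal ((1 - τ) ^ n) * M
          ≤ volume (K ∩ ((fun y => x - y) '' L)) := by
        by_cases hτpos : 0 < τ
        · -- x ∈ τ • S via closedness
          have hxS : τ⁻¹ • x ∈ S := by
            have hex : ∀ k : ℕ, ∃ t ∈ T, t < τ + 1 / (k + 1) := fun k =>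
              Real.lt_sInf_add_pos ⟨t₀, ht₀⟩ (by positivity)
            choose tseq htmem htlt using hex
            have htend : Filter.Tendsto tseq Filter.atTop (nhds τ) := by
              refine tendsto_of_tendsto_of_tendsto_of_le_of_le
                (tendsto_const_nhds) ?_ (fun k => csInf_le hbdd (htmem k))
                (fun k => (htlt k).le)
              have : Filter.Tendsto (fun k : ℕ => τ + 1 / ((k : ℝ) + 1))
                  Filter.atTop (nhds (τ + 0)) :=
                tendsto_const_nhds.add tendsto_one_div_add_atTop_nhds_zero_nat
              simpa using this
            have htend2 : Filter.Tendsto (fun k => (tseq k)⁻¹ • x)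
                Filter.atTop (nhds (τ⁻¹ • x)) :=
              (htend.inv₀ hτpos.ne').smul_const x
            exact hSc.isClosed.mem_of_tendsto htend2
              (Filter.Eventually.of_forall fun k => (htmem k).2.2)
          have := key_geom hK hL hτ0 hτ1 hxS
          rwa [smul_inv_smul₀ hτpos.ne'] at this
        · -- τ = 0, hence x = 0
          have hτe : τ = 0 := le_antisymm (not_lt.1 hτpos) hτ0
          have hx0 : x = 0 := by
            by_contra hx0
            have hnorm : 0 < ‖x‖ := norm_pos_iff.2 hx0
            obtain ⟨R, hR⟩ := isBounded_iff_forall_norm_le.1 hSc.isBounded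
            set R' : ℝ := max R 0 with hR'def
            have hR'0 : 0 ≤ R' := le_max_right R 0
            obtain ⟨t, ht, htlt⟩ :=
              Real.lt_sInf_add_pos ⟨t₀, ht₀⟩ (show 0 < ‖x‖ / (R' + 1) by positivity)
            rw [← hτdef, hτe, zero_add] at htlt
            have hyS := ht.2.2
            have hxnorm : ‖x‖ ≤ t * R' := by
              have h1 : ‖t⁻¹ • x‖ ≤ R' := le_trans (hR _ hyS) (le_max_left R 0)
              have h2 : ‖t⁻¹ • x‖ = t⁻¹ * ‖x‖ := by
                rw [norm_smul, Real.norm_eq_abs, abs_of_pos (inv_pos.2 ht.1)]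
              rw [h2] at h1
              calc ‖x‖ = t * (t⁻¹ * ‖x‖) := by
                    rw [← mul_assoc, mul_inv_cancel₀ ht.1.ne', one_mul]
                _ ≤ t * R' := by
                    exact mul_le_mul_of_nonneg_left h1 ht.1.le
            have : ‖x‖ < ‖x‖ := by
              calc ‖x‖ ≤ t * R' := hxnorm
                _ ≤ t * (R' + 1) := by nlinarith [ht.1.le]
                _ < (‖x‖ / (R' + 1)) * (R' + 1) := by
                    have : (0:ℝ) < R' + 1 := by linarith
                    exact mul_lt_mul_of_pos_right htlt this
                _ = ‖x‖ := by field_simp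
            exact lt_irrefl _ this
          subst hx0
          have himg : (fun y : (EuclideanSpace ℝ (Fin n)) => 0 - y) '' L = -L := by
            rw [sub_image]
            ext u; simp [Set.mem_neg]
          rw [himg]
          calc ENNReal.ofReal ((1 - τ) ^ n) * M ≤ 1 * M := by
                gcongr
                rw [hτe]
                simp
            _ = M := one_mul M
      calc M * ∫⁻ t in Set.Ioc (0:ℝ) 1, F (t, x)
          = M * ∫⁻ t in T, w t := by rw [hJ]
        _ ≤ M * ENNReal.ofReal ((1 - τ) ^ n) := mul_le_mul_right hJle M
        _ = ENNReal.ofReal ((1 - τ) ^ n) * M := mul_comm _ _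
        _ ≤ _ := hfx
  -- combine
  have hFae : AEMeasurable F ((volume.restrict (Set.Ioc (0:ℝ) 1)).prod volume) :=
    hFm.aemeasurable
  have h1 := MeasureTheory.lintegral_prod F hFae
  have h2 := MeasureTheory.lintegral_prod_symm F hFae
  have hc2 : M * (C⁻¹ * volume S) ≤ volume K * volume L := by
    rw [← way1, ← h1, h2, ← fubini_step K L hKc.isClosed.measurableSet
      hLc.isClosed.measurableSet, ← lintegral_const_mul' M _ hMtop]
    exact lintegral_mono way2
  calc M * volume S = C * (C⁻¹ * (M * volume S)) := by
        rw [← mul_assoc, ENNReal.mul_inv_cancel hC0 hCtop, one_mul]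
    _ = C * (M * (C⁻¹ * volume S)) := by rw [mul_left_comm M C⁻¹ (volume S)]
    _ ≤ C * (volume K * volume L) := mul_le_mul_right hc2 C
end

section
/- Let K = conv{0, e₁, …, e_n} ⊆ ℝ^n be the standard simplex. Then for every x ∈ K − K, the set K ∩ (x + K) is a homothet of K: K ∩ (x + K) = a(x) + λ(x)K, where λ(x) = (1/2)(2 − |Σᵢ xᵢ| − Σᵢ |xᵢ|). -/
open MeasureTheory Pointwise


lemma simplex_hull_eq {n : ℕ} (hn : 0 < n) :
    convexHull ℝ (insert 0 (Set.range fun i : Fin n => Pi.single i (1:ℝ))) =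
      {y : Fin n → ℝ | (∀ i, 0 ≤ y i) ∧ ∑ i, y i ≤ 1} := by
  apply Set.Subset.antisymm
  · apply convexHull_min
    · rintro z (rfl | ⟨i, rfl⟩)
      · exact ⟨fun i => le_refl 0, by simp⟩
      · refine ⟨fun j => ?_, by simp⟩
        by_cases h : j = i <;> simp [Pi.single_apply, h]
    · intro y hy z hz p q hp hq hpq
      refine ⟨fun i => ?_, ?_⟩
      · simp only [Pi.add_apply, Pi.smul_apply, smul_eq_mul]
        have := hy.1 i; have := hz.1 i; positivity
      · simp only [Pi.add_apply, Pi.smul_apply, smul_eq_mul, Finset.sum_add_distrib,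
          ← Finset.mul_sum]
        calc p * ∑ i, y i + q * ∑ i, z i ≤ p * 1 + q * 1 := by
              gcongr; exacts [hy.2, hz.2]
          _ = 1 := by linarith
  · rintro y ⟨hy0, hy1⟩
    set t := ∑ i, y i with ht
    have ht0 : 0 ≤ t := Finset.sum_nonneg fun i _ => hy0 i
    rcases eq_or_lt_of_le ht0 with h0 | h0
    · have hy' : y = 0 := by
        funext i
        have h1 := Finset.single_le_sum (fun j _ => hy0 j) (Finset.mem_univ i)
        have := hy0 i
        simp only [Pi.zero_apply]
        rw [← ht] at h1
        linarith
      rw [hy']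
      exact subset_convexHull ℝ _ (Set.mem_insert 0 _)
    · have hsum : ∑ i, y i • (Pi.single i (1:ℝ) : Fin n → ℝ) = y := by
        funext j
        simp [Finset.sum_apply, Pi.single_apply]
      have hcm : Finset.univ.centerMass y (fun i : Fin n => Pi.single i (1:ℝ)) ∈
          convexHull ℝ (Set.range fun i : Fin n => Pi.single i (1:ℝ)) :=
        Finset.univ.centerMass_mem_convexHull (fun i _ => hy0 i) (ht ▸ h0)
          (fun i _ => Set.mem_range_self i)
      rw [Finset.centerMass, hsum, ← ht] at hcm
      have hz' : t⁻¹ • y ∈ convexHull ℝ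
          (insert 0 (Set.range fun i : Fin n => Pi.single i (1:ℝ))) :=
        convexHull_mono (Set.subset_insert _ _) hcm
      have := (convex_convexHull ℝ _).smul_mem_of_zero_mem
        (subset_convexHull ℝ _ (Set.mem_insert 0 _)) hz' (t := t) ⟨ht0, hy1⟩
      rwa [smul_smul, mul_inv_cancel₀ h0.ne', one_smul] at this

theorem simplex_intersection_homothet {n : ℕ} (hn : 0 < n)
    (K : Set (Fin n → ℝ))
    (hK : K = convexHull ℝ (insert 0 (Set.range fun i : Fin n => Pi.single i (1:ℝ)))) :
    ∀ x ∈ K - K, ∃ a : Fin n → ℝ,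
      K ∩ (x +ᵥ K) =
        a +ᵥ ((1 / 2) * (2 - |∑ i, x i| - ∑ i, |x i|)) • K := by
  have hKS : K = {y : Fin n → ℝ | (∀ i, 0 ≤ y i) ∧ ∑ i, y i ≤ 1} := by
    rw [hK, simplex_hull_eq hn]
  intro x hx
  rw [Set.mem_sub] at hx
  obtain ⟨u, hu, v, hv, huv⟩ := hx
  rw [hKS] at hu hv
  obtain ⟨hu0, hu1⟩ := hu
  obtain ⟨hv0, hv1⟩ := hv
  set s := ∑ i, x i with hs
  set T := ∑ i, |x i| with hT
  set L := (1/2 : ℝ) * (2 - |s| - T) with hL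
  refine ⟨fun i => max (x i) 0, ?_⟩
  have hxi : ∀ i, x i = u i - v i := fun i => by rw [← huv]; rfl
  have h1 : ∀ i, x i + |x i| ≤ 2 * u i := by
    intro i
    have h := hxi i; have := hu0 i; have := hv0 i
    rcases abs_cases (x i) with ⟨he, _⟩ | ⟨he, _⟩ <;> rw [he] <;> linarith
  have h2 : ∀ i, |x i| - x i ≤ 2 * v i := by
    intro i
    have h := hxi i; have := hu0 i; have := hv0 i
    rcases abs_cases (x i) with ⟨he, _⟩ | ⟨he, _⟩ <;> rw [he] <;> linarith
  have hsT1 : s + T ≤ 2 := by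
    have h := Finset.sum_le_sum (fun i (_ : i ∈ Finset.univ) => h1 i)
    rw [Finset.sum_add_distrib, ← Finset.mul_sum] at h
    rw [hs, hT]; linarith
  have hsT2 : T - s ≤ 2 := by
    have h := Finset.sum_le_sum (fun i (_ : i ∈ Finset.univ) => h2 i)
    rw [Finset.sum_sub_distrib, ← Finset.mul_sum] at h
    rw [hs, hT]; linarith
  have hL0 : 0 ≤ L := by
    rw [hL]
    rcases abs_cases s with ⟨he, _⟩ | ⟨he, _⟩ <;> rw [he] <;> linarith
  have hsa : ∑ i, max (x i) 0 = (s + T) / 2 := by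
    have hm : ∀ i, max (x i) 0 = (x i + |x i|) / 2 := by
      intro i
      rcases abs_cases (x i) with ⟨he, h'⟩ | ⟨he, h'⟩ <;> rw [he]
      · rw [max_eq_left h']; ring
      · rw [max_eq_right h'.le]; ring
    rw [Finset.sum_congr rfl fun i _ => hm i, ← Finset.sum_div,
      Finset.sum_add_distrib, ← hs, ← hT]
  ext y
  simp only [Set.mem_inter_iff, Set.mem_vadd_set_iff_neg_vadd_mem, hKS,
    Set.mem_setOf_eq, Set.mem_smul_set, vadd_eq_add, Pi.add_apply, Pi.neg_apply,
    Finset.sum_add_distrib, Finset.sum_neg_distrib]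
  constructor
  · rintro ⟨⟨hy0, hy1⟩, hyx0, hyx1⟩
    rcases eq_or_lt_of_le hL0 with h0 | h0
    · -- L = 0 : y = a
      have hya : ∀ i, y i = max (x i) 0 := by
        have hg0 : ∀ i ∈ Finset.univ, (0:ℝ) ≤ y i - max (x i) 0 := by
          intro i _
          have := hy0 i; have := hyx0 i
          simp only [sub_nonneg, max_le_iff]; constructor <;> linarith
        have hgs : ∑ i, (y i - max (x i) 0) = 0 := by
          have hle : ∑ i, (y i - max (x i) 0) ≤ 0 := by
            rw [Finset.sum_sub_distrib, hsa]
            have h2' : |s| + T = 2 := by rw [hL] at h0; linarith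
            rcases abs_cases s with ⟨he, h'⟩ | ⟨he, h'⟩ <;>
              linarith [hy1, hyx1, hs, he, h2']
          exact le_antisymm hle (Finset.sum_nonneg hg0)
        intro i
        have := (Finset.sum_eq_zero_iff_of_nonneg hg0).1 hgs i (Finset.mem_univ i)
        linarith
      refine ⟨0, ⟨fun i => le_refl 0, by simp⟩, ?_⟩
      funext i
      simp [hya i]
    · -- L > 0
      refine ⟨L⁻¹ • (y - fun i => max (x i) 0), ⟨?_, ?_⟩, ?_⟩
      · intro i
        have := hy0 i; have := hyx0 i
        have hay : max (x i) 0 ≤ y i := max_le (by linarith) (by linarith)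
        have : (0:ℝ) ≤ y i - max (x i) 0 := by linarith
        exact mul_nonneg (inv_nonneg.2 hL0) this
      · have hsum : ∑ i, (L⁻¹ • (y - fun i => max (x i) 0)) i
            = L⁻¹ * (∑ i, y i - (s + T)/2) := by
          simp only [Pi.smul_apply, Pi.sub_apply, smul_eq_mul, ← Finset.mul_sum,
            Finset.sum_sub_distrib, hsa]
        rw [hsum]
        rw [inv_mul_le_iff₀ h0, mul_one]
        rcases abs_cases s with ⟨he, h'⟩ | ⟨he, h'⟩ <;> rw [hL, he] <;>
          linarith [hy1, hyx1]
      · rw [smul_smul, mul_inv_cancel₀ h0.ne', one_smul, sub_eq_neg_add]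
  · rintro ⟨k, ⟨hk0, hk1⟩, hky⟩
    have hyk : ∀ i, y i = max (x i) 0 + L * k i := by
      intro i
      have h := congrFun hky i
      simp only [Pi.smul_apply, smul_eq_mul, Pi.add_apply, Pi.neg_apply] at h
      linarith [h]
    have hsy : ∑ i, y i = (s + T)/2 + L * ∑ i, k i := by
      rw [Finset.sum_congr rfl fun i _ => hyk i, Finset.sum_add_distrib, hsa,
        ← Finset.mul_sum]
    have hLk : L * ∑ i, k i ≤ L := by
      calc L * ∑ i, k i ≤ L * 1 := by gcongr
        _ = L := mul_one L
    refine ⟨⟨fun i => ?_, ?_⟩, fun i => ?_, ?_⟩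
    · have := hk0 i
      have : (0:ℝ) ≤ L * k i := mul_nonneg hL0 this
      rw [hyk i]
      have := le_max_right (x i) 0
      linarith
    · rw [hsy]
      rcases abs_cases s with ⟨he, h'⟩ | ⟨he, h'⟩ <;> rw [hL, he] at hLk ⊢ <;> linarith
    · have := mul_nonneg hL0 (hk0 i)
      have := le_max_left (x i) 0
      rw [hyk i]; linarith
    · rw [hsy]
      rcases abs_cases s with ⟨he, h'⟩ | ⟨he, h'⟩ <;> rw [hL, he] at hLk ⊢ <;> linarith
end

section
/- Let K = conv{0, e₁, …, e_n} ⊆ ℝ^n be the standard simplex. Then the difference body satisfies K − K = {x ∈ ℝ^n : |Σᵢ xᵢ| + Σᵢ |xᵢ| ≤ 2}. -/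
open Pointwise

private lemma pos_part_sub (t : ℝ) : max t 0 - max (-t) 0 = t := by
  rcases le_total t 0 with h | h
  · rw [max_eq_right h, max_eq_left (neg_nonneg.2 h)]; ring
  · rw [max_eq_left h, max_eq_right (neg_nonpos.2 h)]; ring

private lemma pos_part_add (t : ℝ) : max t 0 + max (-t) 0 = |t| := by
  rcases le_total t 0 with h | h
  · rw [max_eq_right h, max_eq_left (neg_nonneg.2 h), abs_of_nonpos h]; ring
  · rw [max_eq_left h, max_eq_right (neg_nonpos.2 h), abs_of_nonneg h]; ring

theorem difference_body_of_simplex {n : ℕ} (hn : 0 < n)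
    (K : Set (Fin n → ℝ))
    (hK : K = convexHull ℝ (insert 0 (Set.range fun i : Fin n => Pi.single i (1:ℝ)))) :
    K - K = {x : Fin n → ℝ | |∑ i, x i| + ∑ i, |x i| ≤ 2} := by
  have hKS : K = {y : Fin n → ℝ | (∀ i, 0 ≤ y i) ∧ ∑ i, y i ≤ 1} := by
    rw [hK]
    apply Set.Subset.antisymm
    · apply convexHull_min
      · rintro y (rfl | ⟨i, rfl⟩)
        · exact ⟨fun i => le_refl 0, by simp⟩
        · refine ⟨fun j => ?_, ?_⟩
          · simp only []; rw [Pi.single_apply]; split <;> norm_num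
          · simp [Pi.single_apply]
      · rintro y ⟨hy0, hy1⟩ z ⟨hz0, hz1⟩ a b ha hb hab
        refine ⟨fun i => add_nonneg (mul_nonneg ha (hy0 i)) (mul_nonneg hb (hz0 i)), ?_⟩
        have : ∑ i, (a * y i + b * z i) = a * ∑ i, y i + b * ∑ i, z i := by
          rw [Finset.sum_add_distrib, Finset.mul_sum, Finset.mul_sum]
        simp only [Pi.add_apply, Pi.smul_apply, smul_eq_mul]
        rw [this]
        nlinarith
    · rintro y ⟨hy0, hy1⟩
      have hconv : Convex ℝ (convexHull ℝ
          (insert (0 : Fin n → ℝ) (Set.range fun i : Fin n => Pi.single i (1:ℝ)))) :=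
        convex_convexHull _ _
      have hmem : ∀ o : Option (Fin n),
          (Option.elim o (0 : Fin n → ℝ) (fun i => Pi.single i (1:ℝ))) ∈
            convexHull ℝ (insert (0 : Fin n → ℝ)
              (Set.range fun i : Fin n => Pi.single i (1:ℝ))) := by
        rintro (_ | i)
        · exact subset_convexHull ℝ _ (Set.mem_insert _ _)
        · exact subset_convexHull ℝ _ (Set.mem_insert_iff.2 (Or.inr ⟨i, rfl⟩))
      have key := hconv.sum_mem (t := Finset.univ)
        (w := fun o : Option (Fin n) => Option.elim o (1 - ∑ i, y i) y)
        (z := fun o : Option (Fin n) => Option.elim o (0 : Fin n → ℝ)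
          (fun i => Pi.single i (1:ℝ)))
        (fun o _ => by rcases o with _ | i
                       · simpa using hy1
                       · exact hy0 i)
        (by rw [Fintype.sum_option]; simp)
        (fun o _ => hmem o)
      convert key using 1
      rw [Fintype.sum_option]
      simp only [Option.elim, smul_zero, zero_add]
      funext j
      simp [Finset.sum_apply, Pi.single_apply]
  rw [hKS]
  ext x
  simp only [Set.mem_sub, Set.mem_setOf_eq]
  constructor
  · rintro ⟨a, ⟨ha0, ha1⟩, b, ⟨hb0, hb1⟩, rfl⟩
    simp only [Pi.sub_apply]
    have hP : ∑ i, max (a i - b i) 0 ≤ 1 := by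
      refine le_trans (Finset.sum_le_sum fun i _ => ?_) ha1
      exact max_le (by linarith [hb0 i]) (ha0 i)
    have hN : ∑ i, max (-(a i - b i)) 0 ≤ 1 := by
      refine le_trans (Finset.sum_le_sum fun i _ => ?_) hb1
      exact max_le (by linarith [ha0 i]) (hb0 i)
    have hsum : ∑ i, (a i - b i) = ∑ i, max (a i - b i) 0 - ∑ i, max (-(a i - b i)) 0 := by
      rw [← Finset.sum_sub_distrib]
      exact Finset.sum_congr rfl fun i _ => (pos_part_sub _).symm
    have habs : ∑ i, |a i - b i| = ∑ i, max (a i - b i) 0 + ∑ i, max (-(a i - b i)) 0 := by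
      rw [← Finset.sum_add_distrib]
      exact Finset.sum_congr rfl fun i _ => (pos_part_add _).symm
    rw [hsum, habs]
    rcases abs_cases (∑ i, max (a i - b i) 0 - ∑ i, max (-(a i - b i)) 0) with ⟨h, _⟩ | ⟨h, _⟩ <;>
      rw [h] <;> linarith
  · intro hx
    refine ⟨fun i => max (x i) 0, ⟨fun i => le_max_right _ _, ?_⟩,
      fun i => max (-x i) 0, ⟨fun i => le_max_right _ _, ?_⟩, ?_⟩
    · have hsum : ∑ i, x i = ∑ i, max (x i) 0 - ∑ i, max (-x i) 0 := by
        rw [← Finset.sum_sub_distrib]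
        exact Finset.sum_congr rfl fun i _ => (pos_part_sub _).symm
      have habs : ∑ i, |x i| = ∑ i, max (x i) 0 + ∑ i, max (-x i) 0 := by
        rw [← Finset.sum_add_distrib]
        exact Finset.sum_congr rfl fun i _ => (pos_part_add _).symm
      rw [hsum, habs] at hx
      have := le_abs_self (∑ i, max (x i) 0 - ∑ i, max (-x i) 0)
      linarith
    · have hsum : ∑ i, x i = ∑ i, max (x i) 0 - ∑ i, max (-x i) 0 := by
        rw [← Finset.sum_sub_distrib]
        exact Finset.sum_congr rfl fun i _ => (pos_part_sub _).symm
      have habs : ∑ i, |x i| = ∑ i, max (x i) 0 + ∑ i, max (-x i) 0 := by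
        rw [← Finset.sum_add_distrib]
        exact Finset.sum_congr rfl fun i _ => (pos_part_add _).symm
      rw [hsum, habs] at hx
      have := neg_abs_le (∑ i, max (x i) 0 - ∑ i, max (-x i) 0)
      linarith
    · funext i
      exact pos_part_sub (x i)
end

section
/- Let K = conv{0, e₁, …, e_n} be the standard simplex in ℝ^n and θ ∈ [0,1]. Then K +_θ (−K) = (1 − θ^{1/n})(K − K), where K +_θ (−K) = {x ∈ K − K : vol(K ∩ (x + K)) ≥ θ·vol(K)}. -/
open MeasureTheory Pointwise ENNReal

noncomputable section

namespace ConvBodyAux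

/-- The standard corner simplex in `ℝⁿ`. -/
def SS (n : ℕ) : Set (Fin n → ℝ) := {x | (∀ i, 0 ≤ x i) ∧ ∑ i, x i ≤ 1}

/-- The gauge of the difference body. -/
def g {n : ℕ} (x : Fin n → ℝ) : ℝ := |∑ i, x i| + ∑ i, |x i|

lemma max_zero_eq (a : ℝ) : max a 0 = (a + |a|) / 2 := by
  rcases le_total 0 a with h | h
  · rw [max_eq_left h, abs_of_nonneg h]; ring
  · rw [max_eq_right h, abs_of_nonpos h]; ring

lemma simplex_char {n : ℕ} :
    convexHull ℝ (insert 0 (Set.range fun i : Fin n => Pi.single i (1:ℝ))) = SS n := by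
  apply le_antisymm
  · apply convexHull_min
    · rintro y (rfl | ⟨i, rfl⟩)
      · exact ⟨fun i => le_refl 0, by simp⟩
      · refine ⟨fun j => ?_, by simp⟩
        rcases eq_or_ne i j with rfl | h
        · simp
        · simp [Pi.single_apply, h]
    · rintro x hx y hy a b ha hb hab
      refine ⟨fun i => add_nonneg (mul_nonneg ha (hx.1 i)) (mul_nonneg hb (hy.1 i)), ?_⟩
      simp only [Pi.add_apply, Pi.smul_apply, smul_eq_mul]
      rw [Finset.sum_add_distrib, ← Finset.mul_sum, ← Finset.mul_sum]
      nlinarith [hx.2, hy.2, Finset.sum_nonneg (s := Finset.univ) (fun i _ => hx.1 i),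
        Finset.sum_nonneg (s := Finset.univ) (fun i _ => hy.1 i)]
  · rintro x ⟨hx0, hx1⟩
    have hconv : Convex ℝ (convexHull ℝ (insert 0 (Set.range fun i : Fin n => Pi.single i (1:ℝ)))) :=
      convex_convexHull ℝ _
    have key := hconv.sum_mem (t := (Finset.univ : Finset (Option (Fin n))))
      (w := fun o => o.elim (1 - ∑ i, x i) x)
      (z := fun o => o.elim 0 (fun i => Pi.single i (1:ℝ)))
      (fun o _ => by cases o with
        | none => simpa using by linarith
        | some i => exact hx0 i)
      (by rw [Fintype.sum_option]; simp)
      (fun o _ => by cases o with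
        | none => exact subset_convexHull ℝ _ (Set.mem_insert _ _)
        | some i => exact subset_convexHull ℝ _ (Set.mem_insert_iff.2 (Or.inr ⟨i, rfl⟩)))
    rw [Fintype.sum_option] at key
    convert key using 1
    funext j
    simp only [Option.elim, smul_zero, zero_add, Finset.sum_apply, Pi.smul_apply, smul_eq_mul]
    rw [Finset.sum_congr rfl (fun i _ => by rw [Pi.single_apply, mul_ite, mul_one, mul_zero])]
    simp [Finset.sum_ite_eq' Finset.univ j x]

lemma smul_SS {n : ℕ} {c : ℝ} (hc : 0 ≤ c) :
    c • (SS n) = {y : Fin n → ℝ | (∀ i, 0 ≤ y i) ∧ ∑ i, y i ≤ c} := by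
  rcases hc.eq_or_lt with rfl | hc
  · rw [Set.zero_smul_set (⟨0, fun i => le_refl 0, by simp⟩ : (SS n).Nonempty), ← Set.singleton_zero]
    ext y
    simp only [Set.mem_singleton_iff, Set.mem_setOf_eq]
    constructor
    · rintro rfl; simp
    · rintro ⟨h0, h1⟩
      funext i
      have := (Finset.sum_eq_zero_iff_of_nonneg (fun i _ => h0 i)).1
        (le_antisymm h1 (Finset.sum_nonneg fun i _ => h0 i)) i (Finset.mem_univ i)
      simpa using this
  · ext y
    rw [Set.mem_smul_set_iff_inv_smul_mem₀ (ne_of_gt hc)]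
    simp only [SS, Set.mem_setOf_eq, Pi.smul_apply, smul_eq_mul]
    rw [← Finset.mul_sum]
    constructor
    · rintro ⟨h0, h1⟩
      refine ⟨fun i => ?_, ?_⟩
      · exact le_of_not_gt fun hy =>
          absurd (h0 i) (not_le.2 (mul_neg_of_pos_of_neg (inv_pos.2 hc) hy))
      · calc ∑ i, y i = c * (c⁻¹ * ∑ i, y i) := by field_simp
          _ ≤ c * 1 := mul_le_mul_of_nonneg_left h1 hc.le
          _ = c := mul_one c
    · rintro ⟨h0, h1⟩
      refine ⟨fun i => mul_nonneg (inv_nonneg.2 hc.le) (h0 i), ?_⟩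
      rw [inv_mul_le_iff₀ hc, mul_one]
      exact h1

lemma inter_vadd_SS {n : ℕ} {x : Fin n → ℝ} (hlam : 0 ≤ 1 - g x / 2) :
    (SS n) ∩ (x +ᵥ (SS n)) =
      (fun i => max (x i) 0) +ᵥ ((1 - g x / 2) • (SS n)) := by
  rw [smul_SS hlam]
  have hsum : ∑ i, max (x i) 0 = ((∑ i, x i) + ∑ i, |x i|) / 2 := by
    rw [Finset.sum_congr rfl fun i _ => max_zero_eq (x i), ← Finset.sum_div,
      Finset.sum_add_distrib]
  ext y
  simp only [SS, g, Set.mem_inter_iff, Set.mem_setOf_eq, Set.mem_vadd_set_iff_neg_vadd_mem,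
    Pi.vadd_apply, vadd_eq_add, Pi.neg_apply, Pi.add_apply]
  rw [Finset.sum_add_distrib, Finset.sum_add_distrib, Finset.sum_neg_distrib,
    Finset.sum_neg_distrib, hsum]
  constructor
  · rintro ⟨⟨h0, h1⟩, h2, h3⟩
    refine ⟨fun i => ?_, ?_⟩
    · have h4 := h2 i
      have h5 : max (x i) 0 ≤ y i := max_le (by linarith) (h0 i)
      linarith
    · rcases abs_cases (∑ i, x i) with ⟨he, _⟩ | ⟨he, _⟩ <;> linarith
  · rintro ⟨h0, h1⟩
    have hx0 : ∀ i, 0 ≤ y i := fun i => le_trans (le_max_right (x i) 0) (by linarith [h0 i])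
    have hx1 : ∀ i, x i ≤ y i := fun i => le_trans (le_max_left (x i) 0) (by linarith [h0 i])
    have habs1 := le_abs_self (∑ i, x i)
    have habs2 := neg_abs_le (∑ i, x i)
    exact ⟨⟨hx0, by linarith⟩, fun i => by linarith [hx1 i], by linarith⟩

lemma diff_SS {n : ℕ} : (SS n) - (SS n) = {x : Fin n → ℝ | g x ≤ 2} := by
  ext x
  simp only [Set.mem_sub, Set.mem_setOf_eq]
  constructor
  · rintro ⟨a, ⟨ha0, ha1⟩, b, ⟨hb0, hb1⟩, rfl⟩
    have h1 : ∑ i, |(a - b) i| ≤ ∑ i, a i + ∑ i, b i := by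
      rw [← Finset.sum_add_distrib]
      refine Finset.sum_le_sum fun i _ => ?_
      calc |(a - b) i| ≤ |a i| + |b i| := abs_sub _ _
        _ = a i + b i := by rw [abs_of_nonneg (ha0 i), abs_of_nonneg (hb0 i)]
    have h2 : ∑ i, (a - b) i = ∑ i, a i - ∑ i, b i := by
      simp [Finset.sum_sub_distrib]
    have ha0' : 0 ≤ ∑ i, a i := Finset.sum_nonneg fun i _ => ha0 i
    have hb0' : 0 ≤ ∑ i, b i := Finset.sum_nonneg fun i _ => hb0 i
    rw [g, h2]
    rcases abs_cases (∑ i, a i - ∑ i, b i) with ⟨he, _⟩ | ⟨he, _⟩ <;> linarith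
  · intro hx
    have hsum : ∑ i, max (x i) 0 = ((∑ i, x i) + ∑ i, |x i|) / 2 := by
      rw [Finset.sum_congr rfl fun i _ => max_zero_eq (x i), ← Finset.sum_div,
        Finset.sum_add_distrib]
    have hsum' : ∑ i, max (-x i) 0 = (-(∑ i, x i) + ∑ i, |x i|) / 2 := by
      rw [Finset.sum_congr rfl fun i _ => by rw [max_zero_eq (-x i), abs_neg],
        ← Finset.sum_div, Finset.sum_add_distrib, Finset.sum_neg_distrib]
    have habs1 := le_abs_self (∑ i, x i)
    have habs2 := neg_abs_le (∑ i, x i)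
    rw [g] at hx
    refine ⟨fun i => max (x i) 0, ⟨fun i => le_max_right _ _, by rw [hsum]; linarith⟩,
      fun i => max (-x i) 0, ⟨fun i => le_max_right _ _, by rw [hsum']; linarith⟩, ?_⟩
    funext i
    simp only [Pi.sub_apply]
    rcases le_total 0 (x i) with h | h
    · rw [max_eq_left h, max_eq_right (by linarith)]; ring
    · rw [max_eq_right h, max_eq_left (by linarith)]; ring

lemma g_nonneg {n : ℕ} (x : Fin n → ℝ) : 0 ≤ g x :=
  add_nonneg (abs_nonneg _) (Finset.sum_nonneg fun i _ => abs_nonneg _)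

lemma smul_g_set {n : ℕ} {c : ℝ} (hc : 0 ≤ c) :
    c • {x : Fin n → ℝ | g x ≤ 2} = {x : Fin n → ℝ | g x ≤ 2 * c} := by
  rcases hc.eq_or_lt with rfl | hc
  · rw [Set.zero_smul_set (⟨0, by simp [g]⟩ : {x : Fin n → ℝ | g x ≤ 2}.Nonempty), ← Set.singleton_zero]
    ext x
    simp only [Set.mem_singleton_iff, Set.mem_setOf_eq, mul_zero]
    constructor
    · rintro rfl; simp [g]
    · intro hx
      have h1 : ∑ i, |x i| ≤ 0 := by
        have := abs_nonneg (∑ i, x i); rw [g] at hx; linarith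
      funext i
      have := (Finset.sum_eq_zero_iff_of_nonneg (fun i _ => abs_nonneg (x i))).1
        (le_antisymm h1 (Finset.sum_nonneg fun i _ => abs_nonneg _)) i (Finset.mem_univ i)
      simpa [abs_eq_zero] using this
  · ext x
    rw [Set.mem_smul_set_iff_inv_smul_mem₀ (ne_of_gt hc)]
    have hg : g (c⁻¹ • x) = c⁻¹ * g x := by
      simp only [g, Pi.smul_apply, smul_eq_mul, ← Finset.mul_sum, abs_mul,
        abs_of_nonneg (inv_nonneg.2 hc.le)]
      ring
    simp only [Set.mem_setOf_eq, hg]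
    rw [inv_mul_le_iff₀ hc]
    constructor <;> intro h <;> linarith

lemma vol_SS_pos {n : ℕ} (hn : 0 < n) : volume (SS n) ≠ 0 := by
  have hsub : (Set.pi Set.univ fun _ : Fin n => Set.Icc (0:ℝ) (1 / n)) ⊆ SS n := by
    intro x hx
    refine ⟨fun i => (hx i (Set.mem_univ i)).1, ?_⟩
    calc ∑ i, x i ≤ ∑ _i : Fin n, (1 / n : ℝ) :=
          Finset.sum_le_sum fun i _ => (hx i (Set.mem_univ i)).2
      _ = 1 := by
          rw [Finset.sum_const, Finset.card_univ, Fintype.card_fin, nsmul_eq_mul]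
          field_simp
  intro h0
  have this : volume (Set.pi Set.univ fun _ : Fin n => Set.Icc (0:ℝ) (1 / n)) ≤ volume (SS n) :=
    measure_mono hsub
  rw [h0, le_zero_iff, volume_pi_pi] at this
  simp only [Real.volume_Icc, sub_zero] at this
  rw [Finset.prod_const] at this
  have hpos : (0:ℝ) < 1 / n := one_div_pos.2 (by exact_mod_cast hn)
  exact absurd this (pow_ne_zero _ (by rw [Ne, ENNReal.ofReal_eq_zero]; exact not_le.2 hpos))

lemma vol_SS_ne_top {n : ℕ} : volume (SS n) ≠ ⊤ := by
  have hsub : SS n ⊆ Set.pi Set.univ fun _ : Fin n => Set.Icc (0:ℝ) 1 := by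
    rintro x ⟨h0, h1⟩ i _
    exact ⟨h0 i, le_trans (Finset.single_le_sum (fun j _ => h0 j) (Finset.mem_univ i)) h1⟩
  have hle : volume (SS n) ≤ volume (Set.pi Set.univ fun _ : Fin n => Set.Icc (0:ℝ) 1) :=
    measure_mono hsub
  refine ne_top_of_le_ne_top ?_ hle
  rw [volume_pi_pi]
  simp

end ConvBodyAux

open ConvBodyAux

theorem convolution_body_of_simplex {n : ℕ} (hn : 0 < n)
    (K : Set (Fin n → ℝ))
    (hK : K = convexHull ℝ (insert 0 (Set.range fun i : Fin n => Pi.single i (1:ℝ))))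
    (θ : ℝ) (hθ : θ ∈ Set.Icc (0:ℝ) 1) :
    {x ∈ K - K | ENNReal.ofReal θ * volume K ≤ volume (K ∩ (x +ᵥ K))} =
      (1 - θ ^ ((n:ℝ)⁻¹)) • (K - K) := by
  subst hK
  rw [simplex_char]
  obtain ⟨hθ0, hθ1⟩ := hθ
  have hrpow0 : 0 ≤ θ ^ ((n:ℝ)⁻¹) := Real.rpow_nonneg hθ0 _
  have hrpow1 : θ ^ ((n:ℝ)⁻¹) ≤ 1 := Real.rpow_le_one hθ0 hθ1 (by positivity)
  have hc0 : 0 ≤ 1 - θ ^ ((n:ℝ)⁻¹) := by linarith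
  have hc1 : 1 - θ ^ ((n:ℝ)⁻¹) ≤ 1 := by linarith
  rw [diff_SS, smul_g_set hc0]
  ext x
  simp only [Set.mem_sep_iff, Set.mem_setOf_eq]
  constructor
  · rintro ⟨hx2, hvol⟩
    -- rewrite the volume
    have hlam0 : 0 ≤ 1 - g x / 2 := by linarith
    rw [inter_vadd_SS hlam0, measure_vadd,
      Measure.addHaar_smul_of_nonneg volume hlam0,
      Module.finrank_fintype_fun_eq_card, Fintype.card_fin] at hvol
    have hvol' : θ ≤ (1 - g x / 2) ^ n := by
      have := (ENNReal.mul_le_mul_iff_left (vol_SS_pos hn) vol_SS_ne_top).1 hvol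
      rwa [ENNReal.ofReal_le_ofReal_iff (by positivity)] at this
    have : θ ^ ((n:ℝ)⁻¹) ≤ 1 - g x / 2 := by
      rw [Real.rpow_inv_le_iff_of_pos hθ0 hlam0 (by exact_mod_cast hn)]
      rwa [Real.rpow_natCast]
    linarith
  · intro hx
    have hg0 := g_nonneg x
    have hx2 : g x ≤ 2 := by linarith
    have hlam0 : 0 ≤ 1 - g x / 2 := by linarith
    refine ⟨hx2, ?_⟩
    rw [inter_vadd_SS hlam0, measure_vadd,
      Measure.addHaar_smul_of_nonneg volume hlam0,
      Module.finrank_fintype_fun_eq_card, Fintype.card_fin]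
    refine (ENNReal.mul_le_mul_iff_left (vol_SS_pos hn) vol_SS_ne_top).2 ?_
    rw [ENNReal.ofReal_le_ofReal_iff (by positivity)]
    rw [← Real.rpow_natCast (1 - g x / 2) n,
      ← Real.rpow_inv_le_iff_of_pos hθ0 hlam0 (by exact_mod_cast hn)]
    linarith
end
end
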